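/- arXiv:1812.09986 — 11 statements merged into one kernel-verified Lean document; each statement's English description precedes it below -/
import Mathlib

section
/- Let F be a field of characteristic ≠ 2 and let n ≥ 2. Let A be the n-dimensional commutative F-algebra with basis a_1, …, a_n and multiplication determined by a_i · a_j = (1/2)(a_i + a_j) for all i, j (the gametic algebra for simple Mendelian inheritance G(n,2)). Then A is not an evolution algebra: there is no basis (e_1, …, e_n) of A such that e_i · e_j = 0 for all i ≠ j. -/
/-- The gametic algebra for simple Mendelian inheritance `G(n,2)`
(with basis `a₁, …, aₙ` and multiplication `aᵢ · aⱼ = (1/2)(aᵢ + aⱼ)`) over a field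
of characteristic ≠ 2 is not an evolution algebra: it has no natural basis. -/
theorem gametic_algebra_is_not_an_evolution_algebra
    (F : Type*) [Field F] (h2 : (2 : F) ≠ 0)
    (n : ℕ) (hn : 2 ≤ n)
    (A : Type*) [AddCommGroup A] [Module F A]
    (m : A →ₗ[F] A →ₗ[F] A) (hcomm : ∀ x y : A, m x y = m y x)
    (a : Module.Basis (Fin n) F A)
    (hmul : ∀ i j : Fin n, m (a i) (a j) = (2 : F)⁻¹ • (a i + a j)) :
    ¬ ∃ e : Module.Basis (Fin n) F A, ∀ i j : Fin n, i ≠ j → m (e i) (e j) = 0 := by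
  -- weight functional
  set w : A →ₗ[F] F := ∑ i, a.coord i with hw
  have hwa : ∀ j, w (a j) = 1 := by
    intro j
    simp [hw, LinearMap.sum_apply, Module.Basis.coord_apply, Module.Basis.repr_self,
      Finsupp.single_apply]
  -- the bilinear form
  have hb1 : ∀ (x x' y : A), (2 : F)⁻¹ • (w y • (x + x') + w (x + x') • y)
      = (2 : F)⁻¹ • (w y • x + w x • y) + (2 : F)⁻¹ • (w y • x' + w x' • y) := by
    intro x x' y
    simp only [map_add, smul_add, add_smul]
    module
  have hb2 : ∀ (c : F) (x y : A), (2 : F)⁻¹ • (w y • (c • x) + w (c • x) • y)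
      = c • ((2 : F)⁻¹ • (w y • x + w x • y)) := by
    intro c x y
    simp only [map_smul, smul_eq_mul, smul_add, mul_smul]
    module
  set M : A →ₗ[F] A →ₗ[F] A :=
    LinearMap.mk₂ F (fun x y => (2 : F)⁻¹ • (w y • x + w x • y))
      (fun x x' y => hb1 x x' y)
      (fun c x y => hb2 c x y)
      (fun x y y' => by
        simp only [map_add, smul_add, add_smul]
        module)
      (fun c x y => by
        simp only [map_smul, smul_eq_mul, smul_add, mul_smul]
        module) with hM
  have hmM : m = M := by
    refine a.ext fun i => a.ext fun j => ?_
    rw [hmul i j]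
    simp [hM, LinearMap.mk₂_apply, hwa]
  rintro ⟨e, he⟩
  -- w vanishes on each e j
  have hwe : ∀ j, w (e j) = 0 := by
    intro j
    haveI : Nontrivial (Fin n) :=
      ⟨⟨⟨0, by omega⟩, ⟨1, by omega⟩, by simp [Fin.ext_iff]⟩⟩
    obtain ⟨i, hi⟩ := exists_ne j
    have h0 := he i j hi
    rw [hmM] at h0
    simp only [hM, LinearMap.mk₂_apply] at h0
    have h0' : w (e j) • e i + w (e i) • e j = 0 :=
      (smul_eq_zero.mp h0).resolve_left (inv_ne_zero h2)
    have := congrArg (e.coord i) h0'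
    simpa [map_add, map_smul, Module.Basis.coord_apply, Module.Basis.repr_self,
      Finsupp.single_apply, hi.symm, (Ne.symm hi)] using this
  -- hence w = 0, contradiction with w (a 0) = 1
  have hw0 : w = 0 := e.ext fun j => by simp [hwe j]
  have : (1 : F) = 0 := by
    have := hwa ⟨0, by omega⟩
    rw [hw0] at this
    simpa using this.symm
  exact one_ne_zero this
end

section
/- Let A be a finite-dimensional evolution algebra over a field F of characteristic ≠ 2. Then A is an associative nil algebra if and only if x³ = 0 for every x ∈ A (where x² = x·x and x³ = x²·x). Moreover, in this case A³ = 0, where A¹ = A and A^{k+1} is the linear span of all products u·v with u ∈ A^k and v ∈ A. -/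
/-- Principal powers: `ppow m a k = a^(k+1)`, i.e. `ppow m a 0 = a¹ = a` and
`ppow m a (k+1) = a^(k+1) · a`. -/
def ppow {F A : Type*} [Field F] [AddCommGroup A] [Module F A]
    (m : A →ₗ[F] A →ₗ[F] A) (a : A) : ℕ → A
  | 0 => a
  | k + 1 => m (ppow m a k) a

/-- Plenary subspace powers: `spow m k = A^(k+1)`, i.e. `spow m 0 = A¹ = A` and
`spow m (k+1) = span {u·v : u ∈ A^(k+1), v ∈ A}`. -/
def spow {F A : Type*} [Field F] [AddCommGroup A] [Module F A]
    (m : A →ₗ[F] A →ₗ[F] A) : ℕ → Submodule F A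
  | 0 => ⊤
  | k + 1 => Submodule.span F {x | ∃ u ∈ spow m k, ∃ v : A, x = m u v}

/-- A finite-dimensional evolution algebra over a field of characteristic ≠ 2
is an associative nil algebra iff `x³ = 0` for every `x`; moreover in that case `A³ = 0`. -/
theorem evolution_algebra_assoc_nil_iff_cube_zero
    (F : Type*) [Field F] (h2 : (2 : F) ≠ 0)
    (A : Type*) [AddCommGroup A] [Module F A]
    (m : A →ₗ[F] A →ₗ[F] A) (hcomm : ∀ x y : A, m x y = m y x)
    (n : ℕ) (e : Module.Basis (Fin n) F A)
    (hnat : ∀ i j : Fin n, i ≠ j → m (e i) (e j) = 0) :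
    (((∀ x y z : A, m (m x y) z = m x (m y z)) ∧ (∀ a : A, ∃ k : ℕ, ppow m a k = 0)) ↔
      (∀ x : A, ppow m x 2 = 0)) ∧
    ((∀ x : A, ppow m x 2 = 0) → spow m 2 = ⊥) := by
  classical
  -- expansion of a product over the basis
  have mul_repr : ∀ x y : A, m x y =
      ∑ i : Fin n, ∑ j : Fin n, (e.repr x i * e.repr y j) • m (e i) (e j) := by
    intro x y
    conv_lhs => rw [← e.sum_repr x, ← e.sum_repr y]
    simp only [map_sum, LinearMap.sum_apply, map_smul, LinearMap.smul_apply,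
      Finset.smul_sum, smul_smul]
    rw [Finset.sum_comm]
    exact Finset.sum_congr rfl fun i _ => Finset.sum_congr rfl fun j _ => by rw [mul_comm]
  have mul_left_repr : ∀ x y : A, m x y = ∑ i : Fin n, e.repr x i • m (e i) y := by
    intro x y
    conv_lhs => rw [← e.sum_repr x]
    simp only [map_sum, LinearMap.sum_apply, map_smul, LinearMap.smul_apply]
  -- main key lemma: if all e_i² annihilate the basis, then A·A kills everything
  have zero3 : (∀ i j : Fin n, m (m (e i) (e i)) (e j) = 0) →
      ∀ u v w : A, m (m u v) w = 0 := by
    intro K u v w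
    have hmem : ∀ i j : Fin n, m (m (e i) (e j)) = 0 := by
      intro i j
      by_cases h : i = j
      · subst h
        exact e.ext fun k => by simpa using K i k
      · rw [hnat i j h, map_zero]
    rw [mul_repr u v]
    simp [map_sum, LinearMap.sum_apply, map_smul, LinearMap.smul_apply, hmem]
  -- key from cube-zero hypothesis (polarization)
  have keyK : (∀ x : A, ppow m x 2 = 0) →
      ∀ i j : Fin n, m (m (e i) (e i)) (e j) = 0 := by
    intro H i j
    have H' : ∀ x : A, m (m x x) x = 0 := fun x => by simpa [ppow] using H x
    by_cases hij : i = j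
    · subst hij; exact H' (e i)
    · have hab : m (e i) (e j) = 0 := hnat i j hij
      have hba : m (e j) (e i) = 0 := hnat j i (Ne.symm hij)
      have h1 := H' (e i + e j)
      have hm1 := H' (e i - e j)
      simp only [map_add, map_sub, map_neg, LinearMap.add_apply, LinearMap.sub_apply,
        LinearMap.neg_apply, hab, hba, H', add_zero, zero_add, sub_zero, zero_sub,
        neg_zero, neg_neg] at h1 hm1
      have hQP : (m ((m (e j)) (e j))) (e i) = (m ((m (e i)) (e i))) (e j) :=
        sub_eq_zero.mp hm1
      rw [hQP, ← two_smul F] at h1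
      exact (smul_eq_zero.mp h1).resolve_left h2
  constructor
  · constructor
    · rintro ⟨hassoc, hnil⟩ x
      -- derive the key property from associativity + nilness
      have K : ∀ i j : Fin n, m (m (e i) (e i)) (e j) = 0 := by
        intro i j
        by_cases hij : i = j
        · subst hij
          -- e_i² · e_i = c • e_i² with c the i-th coordinate of e_i²
          set c : F := e.repr (m (e i) (e i)) i with hc
          have hcube : m (m (e i) (e i)) (e i) = c • m (e i) (e i) := by
            rw [mul_left_repr (m (e i) (e i)) (e i),
              Finset.sum_eq_single i
                (fun k _ hk => by rw [hnat k i hk, smul_zero])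
                (fun h => absurd (Finset.mem_univ i) h)]
          have hpow : ∀ k : ℕ, ppow m (e i) (k + 1) = c ^ k • m (e i) (e i) := by
            intro k
            induction k with
            | zero => simp [ppow]
            | succ k ih =>
              show m (ppow m (e i) (k + 1)) (e i) = _
              rw [ih, map_smul, LinearMap.smul_apply, hcube, smul_smul, ← pow_succ]
          obtain ⟨k, hk⟩ := hnil (e i)
          cases k with
          | zero =>
            have hei : e i = 0 := hk
            simp [hei]
          | succ l =>
            rw [hpow l] at hk
            rcases smul_eq_zero.mp hk with h | h
            · have hc0 : c = 0 := (pow_eq_zero_iff'.mp h).1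
              rw [hcube, hc0, zero_smul]
            · rw [hcube, h, smul_zero]
        · rw [hassoc, hnat i j hij, map_zero]
      show m (m x x) x = 0
      exact zero3 K _ _ _
    · intro H
      have Z := zero3 (keyK H)
      refine ⟨fun x y z => ?_, fun a => ⟨2, H a⟩⟩
      rw [Z x y z, hcomm x (m y z), Z y z x]
  · intro H
    have Z := zero3 (keyK H)
    have h1 : spow m 1 ≤ LinearMap.ker m := by
      show Submodule.span F _ ≤ _
      rw [Submodule.span_le]
      rintro x ⟨u, -, v, rfl⟩
      exact LinearMap.mem_ker.mpr (LinearMap.ext fun w => Z u v w)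
    show Submodule.span F {x | ∃ u ∈ spow m 1, ∃ v : A, x = m u v} = ⊥
    rw [Submodule.span_eq_bot]
    rintro x ⟨u, hu, v, rfl⟩
    rw [LinearMap.mem_ker.mp (h1 hu), LinearMap.zero_apply]
end

section
/- Let A be an n-dimensional evolution algebra over a field F of characteristic ≠ 2 with natural basis e_1, …, e_n. Write e_i² = e_i·e_i, e_i³ = e_i²·e_i, e_i⁴ = e_i³·e_i. Then A is fourth power-associative (i.e. x²·x² = (x²·x)·x for all x ∈ A) if and only if: (1) e_i⁴ = e_i²·e_i² for all i; (2) 2·(e_i²·e_j²) = (e_i²·e_j)·e_j + (e_j²·e_i)·e_i for all i < j; (3) e_i³·e_j + (e_i²·e_j)·e_i = 0 for all i ≠ j; (4) (e_i²·e_j)·e_k + (e_i²·e_k)·e_j = 0 for all i and all j < k with i ≠ j and i ≠ k. -/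
section
variable {F : Type*} [Field F] {A : Type*} [AddCommGroup A] [Module F A] {n : ℕ}

lemma ev_mul_basis (m : A →ₗ[F] A →ₗ[F] A) (e : Module.Basis (Fin n) F A)
    (hnat : ∀ i j : Fin n, i ≠ j → m (e i) (e j) = 0)
    (z : A) (j : Fin n) : m z (e j) = e.repr z j • m (e j) (e j) := by
  conv_lhs => rw [← e.sum_repr z]
  rw [map_sum, LinearMap.sum_apply, Finset.sum_eq_single j]
  · simp
  · intro i _ hij; simp [hnat i j hij]
  · simp

lemma ev_symsum (h2 : (2:F) ≠ 0) (f g : Fin n → Fin n → A)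
    (h : ∀ p q, f p q + f q p = g p q + g q p) :
    ∑ p, ∑ q, f p q = ∑ p, ∑ q, g p q := by
  apply smul_right_injective A h2
  have h1 : ∑ p, ∑ q, (f p q + f q p) = ∑ p, ∑ q, (g p q + g q p) := by
    simp_rw [h]
  simp only [Finset.sum_add_distrib] at h1
  rw [show ∑ p, ∑ q, f q p = ∑ p, ∑ q, f p q from Finset.sum_comm,
      show ∑ p, ∑ q, g q p = ∑ p, ∑ q, g p q from Finset.sum_comm] at h1
  show (2:F) • _ = (2:F) • _
  rw [two_smul, two_smul]
  exact h1

lemma ev_trick (e : Module.Basis (Fin n) F A) (R : A →ₗ[F] A) (z : A)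
    (h : ∀ k, e.repr z k ≠ 0 → R (e k) = 0) : R z = 0 := by
  rw [← e.sum_repr z, map_sum]
  refine Finset.sum_eq_zero fun k _ => ?_
  rw [map_smul]
  by_cases hk : e.repr z k = 0
  · rw [hk, zero_smul]
  · rw [h k hk, smul_zero]

lemma ev_IJ (m : A →ₗ[F] A →ₗ[F] A) (hcomm : ∀ x y : A, m x y = m y x)
    (e : Module.Basis (Fin n) F A)
    (hnat : ∀ i j : Fin n, i ≠ j → m (e i) (e j) = 0)
    (h2F : (2:F) ≠ 0) (i j : Fin n) (hij : i ≠ j)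
    (c4 : ∀ k, k ≠ i → k ≠ j →
      m (m (m (e j) (e j)) (e i)) (e k) + m (m (m (e j) (e j)) (e k)) (e i) = 0)
    (huu : m (m (e i) (e i)) (m (e i) (e i)) =
      (e.repr (m (e i) (e i)) i * e.repr (m (e i) (e i)) i) • m (e i) (e i))
    (hvv : m (m (e j) (e j)) (m (e j) (e j)) =
      (e.repr (m (e j) (e j)) j * e.repr (m (e j) (e j)) j) • m (e j) (e j))
    (E : (2:F) • m (m (e i) (e i)) (m (e j) (e j)) =
      (e.repr (m (e i) (e i)) i * e.repr (m (e j) (e j)) i) • m (e i) (e i) +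
      (e.repr (m (e i) (e i)) j * e.repr (m (e j) (e j)) j) • m (e j) (e j)) :
    (e.repr (m (e i) (e i)) i * e.repr (m (e i) (e i)) i * e.repr (m (e j) (e j)) i
      + e.repr (m (e i) (e i)) j * e.repr (m (e j) (e j)) i * e.repr (m (e j) (e j)) j)
        • m (e i) (e i)
      + (2 * (e.repr (m (e i) (e i)) j * e.repr (m (e i) (e i)) j * e.repr (m (e j) (e j)) i))
        • m (e j) (e j) = 0 ∧
    (3 * (e.repr (m (e i) (e i)) i * e.repr (m (e j) (e j)) i * e.repr (m (e j) (e j)) i))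
        • m (e i) (e i)
      + (e.repr (m (e i) (e i)) j * e.repr (m (e j) (e j)) i * e.repr (m (e j) (e j)) j)
        • m (e j) (e j) = 0 := by
  have hui := ev_mul_basis m e hnat (m (e i) (e i)) i
  have huj := ev_mul_basis m e hnat (m (e i) (e i)) j
  have hvi := ev_mul_basis m e hnat (m (e j) (e j)) i
  have hvj := ev_mul_basis m e hnat (m (e j) (e j)) j
  set u := m (e i) (e i) with hu
  set v := m (e j) (e j) with hv
  set a := e.repr u i with ha
  set b := e.repr u j with hb
  set c := e.repr v i with hc
  set d := e.repr v j with hd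
  set R1 : A →ₗ[F] A := m (m v (e i)) + (LinearMap.flip m (e i)) ∘ₗ (m v) with hR1
  have hR1e : ∀ k, k ≠ i → k ≠ j → R1 (e k) = 0 := by
    intro k hki hkj
    rw [hR1]
    simp only [LinearMap.add_apply, LinearMap.comp_apply, LinearMap.flip_apply]
    exact c4 k hki hkj
  have hrepr : ∀ (y : A) (s t : F) (k : Fin n),
      e.repr (y - s • e i - t • e j) k = e.repr y k - s * (if i = k then 1 else 0)
        - t * (if j = k then 1 else 0) := by
    intro y s t k
    simp [Finsupp.single_apply, sub_sub]
  have hKz : R1 (u - a • e i - b • e j) = 0 := by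
    refine ev_trick e R1 _ (fun k hk => ?_)
    refine hR1e k (fun h' => hk ?_) (fun h' => hk ?_)
    · subst h'; rw [hrepr]; simp [← ha, hij, hij.symm]
    · subst h'; rw [hrepr]; simp [← hb, hij, hij.symm]
  have hKz' : R1 (v - c • e i - d • e j) = 0 := by
    refine ev_trick e R1 _ (fun k hk => ?_)
    refine hR1e k (fun h' => hk ?_) (fun h' => hk ?_)
    · subst h'; rw [hrepr]; simp [← hc, hij, hij.symm]
    · subst h'; rw [hrepr]; simp [← hd, hij, hij.symm]
  rw [hR1] at hKz hKz'
  simp only [LinearMap.add_apply, LinearMap.comp_apply, LinearMap.flip_apply,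
    map_sub, map_smul, LinearMap.sub_apply, LinearMap.smul_apply,
    hui, huj, hvi, hvj, hcomm v u, huu, hvv] at hKz hKz'
  have EI := congrArg (fun y => m y (e i)) E
  simp only [map_smul, LinearMap.smul_apply, map_add, LinearMap.add_apply,
    hui, hvi] at EI
  constructor
  · linear_combination (norm := module) EI - (2:F) • hKz
  · linear_combination (norm := module) c • E - (2:F) • hKz'

/-- Core computation for the substitution `x = eᵢ ± eⱼ`. -/
lemma ev_pair_core (m : A →ₗ[F] A →ₗ[F] A) (h2F : (2:F) ≠ 0)
    (u v ei ej : A) (a b c d : F)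
    (hui : m u ei = a • u) (huj : m u ej = b • v)
    (hvi : m v ei = c • u) (hvj : m v ej = d • v)
    (huu : m u u = (a*a) • u) (hvv : m v v = (d*d) • v)
    (hmv : m v u = m u v)
    (h1 : m (u + v) (u + v) = m (m (u + v) (ei + ej)) (ei + ej))
    (hm : m (u + v) (u + v) = m (m (u + v) (ei - ej)) (ei - ej)) :
    (2:F) • m u v = (a*c) • u + (b*d) • v ∧
    (b*c + c*d) • u + (a*b + b*c) • v = 0 := by
  simp only [map_add, map_sub, LinearMap.add_apply, LinearMap.sub_apply,
    map_smul, LinearMap.smul_apply, hui, huj, hvi, hvj] at h1 hm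
  constructor
  · apply smul_right_injective A h2F
    linear_combination (norm := module) h1 + hm - (2:F) • huu - (2:F) • hvv - (2:F) • hmv
  · have key : (2:F) • ((b*c + c*d) • u + (a*b + b*c) • v) = (2:F) • (0:A) := by
      linear_combination (norm := module) hm - h1
    exact smul_right_injective A h2F key

/-- Core computation for the substitutions `x = eᵢ ± eⱼ ± eₖ`: extraction of the
parity class which is odd in both `eⱼ` and `eₖ`. -/
lemma ev_triple_core (m : A →ₗ[F] A →ₗ[F] A) (h2F : (2:F) ≠ 0)
    (u v w ei ej ek : A) (a b p c d f g h t : F)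
    (hui : m u ei = a • u) (huj : m u ej = b • v) (huk : m u ek = p • w)
    (hvi : m v ei = c • u) (hvj : m v ej = d • v) (hvk : m v ek = f • w)
    (hwi : m w ei = g • u) (hwj : m w ej = h • v) (hwk : m w ek = t • w)
    (h1 : m (u + v + w) (u + v + w) = m (m (u + v + w) (ei + ej + ek)) (ei + ej + ek))
    (h2 : m (u + v + w) (u + v + w) = m (m (u + v + w) (ei + ej - ek)) (ei + ej - ek))
    (h3 : m (u + v + w) (u + v + w) = m (m (u + v + w) (ei - ej + ek)) (ei - ej + ek))
    (h4 : m (u + v + w) (u + v + w) = m (m (u + v + w) (ei - ej - ek)) (ei - ej - ek)) :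
    ((p + f + t) * h) • v + ((b + d + h) * f) • w = 0 := by
  simp only [map_add, map_sub, LinearMap.add_apply, LinearMap.sub_apply,
    map_smul, LinearMap.smul_apply, hui, huj, huk, hvi, hvj, hvk, hwi, hwj, hwk] at h1 h2 h3 h4
  have key : (2:F) • ((2:F) • (((p + f + t) * h) • v + ((b + d + h) * f) • w)) =
      (2:F) • ((2:F) • (0:A)) := by
    linear_combination (norm := module) h2 + h3 - h1 - h4
  exact smul_right_injective A h2F (smul_right_injective A h2F key)

lemma ev_P_zero (m : A →ₗ[F] A →ₗ[F] A) (h2F : (2:F) ≠ 0)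
    (u v ei ej : A) (a b c d : F)
    (hui : m u ei = a • u) (huj : m u ej = b • v)
    (hvi : m v ei = c • u) (hvj : m v ej = d • v)
    (huu : m u u = (a*a) • u) (hvv : m v v = (d*d) • v)
    (C : (b*c + c*d) • u + (a*b + b*c) • v = 0)
    (Iij : (a*a*c + b*c*d) • u + (2*(b*b*c)) • v = 0)
    (Iji : (d*d*b + c*b*a) • v + (2*(c*c*b)) • u = 0)
    (Jij : (3*(a*c*c)) • u + (b*c*d) • v = 0) :
    (a*b) • v + (b*c) • u = 0 := by
  by_cases hb : b = 0
  · rw [hb]; simp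
  by_cases hc : c = 0
  · rw [hc] at C ⊢; linear_combination (norm := module) C
  by_cases hu0 : u = 0
  · rw [hu0, smul_zero, zero_add] at Iij
    rcases smul_eq_zero.mp Iij with h | h
    · exact absurd h (mul_ne_zero h2F (mul_ne_zero (mul_ne_zero hb hb) hc))
    · rw [hu0, h]; simp
  by_cases hv0 : v = 0
  · rw [hv0, smul_zero, zero_add] at Iji
    rcases smul_eq_zero.mp Iji with h | h
    · exact absurd h (mul_ne_zero h2F (mul_ne_zero (mul_ne_zero hc hc) hb))
    · rw [hv0, h]; simp
  -- main case : everything nonzero, derive a contradiction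
  exfalso
  set X := 2*(b*b*c) with hX
  have hXne : X ≠ 0 := mul_ne_zero h2F (mul_ne_zero (mul_ne_zero hb hb) hc)
  set lam := X⁻¹ * (-(a*a*c + b*c*d)) with hlam
  have hvlam : v = lam • u := by
    have h1 : X • v = (-(a*a*c + b*c*d)) • u := by
      linear_combination (norm := module) Iij
    calc v = (X⁻¹ * X) • v := by rw [inv_mul_cancel₀ hXne, one_smul]
      _ = X⁻¹ • (X • v) := by rw [mul_smul]
      _ = X⁻¹ • ((-(a*a*c + b*c*d)) • u) := by rw [h1]
      _ = lam • u := by rw [hlam, mul_smul]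
  have hceq : c = lam * a := by
    have h2 : m v ei = m (lam • u) ei := by rw [← hvlam]
    rw [hvi, map_smul, LinearMap.smul_apply, hui] at h2
    have h1 : (c - lam * a) • u = 0 := by linear_combination (norm := module) h2
    rcases smul_eq_zero.mp h1 with h | h
    · linear_combination h
    · exact absurd h hu0
  have hdeq : d = lam * b := by
    have h2 : m v ej = m (lam • u) ej := by rw [← hvlam]
    rw [hvj, map_smul, LinearMap.smul_apply, huj] at h2
    have h1 : (d - lam * b) • v = 0 := by linear_combination (norm := module) h2
    rcases smul_eq_zero.mp h1 with h | h
    · linear_combination h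
    · exact absurd h hv0
  have hlam0 : lam ≠ 0 := fun h => hc (by rw [hceq, h, zero_mul])
  have ha0 : a ≠ 0 := fun h => hc (by rw [hceq, h, mul_zero])
  have hkappa : (b*c + c*d) + (a*b + b*c) * lam = 0 := by
    rw [hvlam] at C
    have h1 : ((b*c + c*d) + (a*b + b*c) * lam) • u = 0 := by
      linear_combination (norm := module) C
    rcases smul_eq_zero.mp h1 with h | h
    · exact h
    · exact absurd h hu0
  have hfac : (2 * (lam * (a*b))) * (1 + lam) = 0 := by
    rw [hceq, hdeq] at hkappa; linear_combination hkappa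
  have hlam1 : lam = -1 := by
    rcases mul_eq_zero.mp hfac with h | h
    · exact absurd h (mul_ne_zero h2F (mul_ne_zero hlam0 (mul_ne_zero ha0 hb)))
    · linear_combination h
  have hva : v = -u := by rw [hvlam, hlam1, neg_smul, one_smul]
  have hc' : c = -a := by rw [hceq, hlam1]; ring
  have hd' : d = -b := by rw [hdeq, hlam1]; ring
  have hab2 : a*a + b*b = 0 := by
    rw [hva, hd'] at hvv
    simp only [map_neg, LinearMap.neg_apply, neg_neg] at hvv
    have h1 : (a*a + b*b) • u = 0 := by
      linear_combination (norm := module) hvv - huu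
    rcases smul_eq_zero.mp h1 with h | h
    · exact h
    · exact absurd h hu0
  have h3a : 3*(a*(a*a)) - a*(b*b) = 0 := by
    rw [hva, hc', hd'] at Jij
    have h1 : (3*(a*(a*a)) - a*(b*b)) • u = 0 := by
      linear_combination (norm := module) Jij
    rcases smul_eq_zero.mp h1 with h | h
    · exact h
    · exact absurd h hu0
  have h4 : (4:F) * (a*(a*a)) = 0 := by linear_combination h3a + a * hab2
  have h4ne : (4:F) ≠ 0 := by
    have h := mul_ne_zero h2F h2F
    norm_num at h
    exact h
  have haaa : a*(a*a) = 0 := mul_left_cancel₀ h4ne (h4.trans (mul_zero (4:F)).symm)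
  rcases mul_eq_zero.mp haaa with h | h
  · exact ha0 h
  · rcases mul_eq_zero.mp h with h | h <;> exact ha0 h

lemma ev_backward (m : A →ₗ[F] A →ₗ[F] A) (hcomm : ∀ x y : A, m x y = m y x)
    (e : Module.Basis (Fin n) F A)
    (hnat : ∀ i j : Fin n, i ≠ j → m (e i) (e j) = 0) (h2 : (2:F) ≠ 0)
    (hc1 : ∀ i : Fin n,
      m (m (m (e i) (e i)) (e i)) (e i) = m (m (e i) (e i)) (m (e i) (e i)))
    (hc2 : ∀ i j : Fin n, i < j →
      (2 : F) • m (m (e i) (e i)) (m (e j) (e j)) =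
        m (m (m (e i) (e i)) (e j)) (e j) + m (m (m (e j) (e j)) (e i)) (e i))
    (hc3 : ∀ i j : Fin n, i ≠ j →
      m (m (m (e i) (e i)) (e i)) (e j) + m (m (m (e i) (e i)) (e j)) (e i) = 0)
    (hc4 : ∀ i j k : Fin n, j < k → i ≠ j → i ≠ k →
      m (m (m (e i) (e i)) (e j)) (e k) + m (m (m (e i) (e i)) (e k)) (e j) = 0)
    (x : A) : m (m x x) (m x x) = m (m (m x x) x) x := by
  have mb := ev_mul_basis m e hnat
  -- symmetrized T-vanishing
  have hT : ∀ p q r : Fin n, q ≠ r →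
      m (m (m (e p) (e p)) (e q)) (e r) + m (m (m (e p) (e p)) (e r)) (e q) = 0 := by
    intro p q r hqr
    by_cases hpq : p = q
    · subst hpq; exact hc3 p r hqr
    by_cases hpr : p = r
    · subst hpr; rw [add_comm]; exact hc3 p q (Ne.symm hqr)
    rcases lt_or_gt_of_ne hqr with h | h
    · exact hc4 p q r h hpq hpr
    · rw [add_comm]; exact hc4 p r q h hpr hpq
  have hx2 : m x x = ∑ p, (e.repr x p * e.repr x p) • m (e p) (e p) := by
    nth_rewrite 2 [← e.sum_repr x]
    rw [map_sum]
    simp only [map_smul]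
    simp only [mb x]
    simp only [smul_smul]
  have hs1 : ∀ z : A, m z x = ∑ p, e.repr x p • m z (e p) := by
    intro z
    conv_lhs => rw [← e.sum_repr x]
    rw [map_sum]
    simp only [map_smul]
  have hL : m (m x x) (m x x) = ∑ p, ∑ q,
      ((e.repr x p * e.repr x p) * (e.repr x q * e.repr x q)) •
        m (m (e p) (e p)) (m (e q) (e q)) := by
    rw [hx2]
    simp only [map_sum, LinearMap.sum_apply, map_smul, LinearMap.smul_apply,
      Finset.smul_sum, smul_smul]
    rw [Finset.sum_comm]
    refine Finset.sum_congr rfl fun p _ => Finset.sum_congr rfl fun q _ => ?_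
    rw [mul_comm]
  have hR1 : m (m x x) x = ∑ p, ∑ q,
      ((e.repr x p * e.repr x p) * e.repr x q) • m (m (e p) (e p)) (e q) := by
    rw [hx2, hs1]
    simp only [map_sum, LinearMap.sum_apply, map_smul, LinearMap.smul_apply,
      Finset.smul_sum, smul_smul]
    rw [Finset.sum_comm]
    refine Finset.sum_congr rfl fun p _ => Finset.sum_congr rfl fun q _ => ?_
    rw [mul_comm]
  have hR2 : m (m (m x x) x) x = ∑ p, ∑ q, ∑ r,
      ((e.repr x p * e.repr x p) * (e.repr x q * e.repr x r)) •
        m (m (m (e p) (e p)) (e q)) (e r) := by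
    rw [hR1, hs1]
    simp only [map_sum, LinearMap.sum_apply, map_smul, LinearMap.smul_apply,
      Finset.smul_sum, smul_smul]
    rw [Finset.sum_comm]
    refine Finset.sum_congr rfl fun p _ => ?_
    rw [Finset.sum_comm]
    refine Finset.sum_congr rfl fun q _ => Finset.sum_congr rfl fun r _ => ?_
    ring_nf
  have key1 : ∀ p : Fin n, (∑ q, ∑ r,
      ((e.repr x p * e.repr x p) * (e.repr x q * e.repr x r)) •
        m (m (m (e p) (e p)) (e q)) (e r)) =
      ∑ q, ((e.repr x p * e.repr x p) * (e.repr x q * e.repr x q)) •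
        m (m (m (e p) (e p)) (e q)) (e q) := by
    intro p
    rw [ev_symsum h2 _ (fun q r => if q = r then
      ((e.repr x p * e.repr x p) * (e.repr x q * e.repr x q)) •
        m (m (m (e p) (e p)) (e q)) (e q) else 0) ?_]
    · refine Finset.sum_congr rfl fun q _ => ?_
      simp
    · intro q r
      by_cases hqr : q = r
      · subst hqr; simp
      · simp only [if_neg hqr, if_neg (Ne.symm hqr), add_zero]
        have h0 : ((e.repr x p * e.repr x p) * (e.repr x q * e.repr x r)) •
            (m (m (m (e p) (e p)) (e q)) (e r) + m (m (m (e p) (e p)) (e r)) (e q)) = 0 := by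
          rw [hT p q r hqr, smul_zero]
        linear_combination (norm := module) h0
  rw [hL, hR2]
  rw [Finset.sum_congr rfl fun p _ => key1 p]
  refine ev_symsum h2 _ _ fun p q => ?_
  by_cases hpq : p = q
  · subst hpq
    rw [hc1 p]
  · have hMc : m (m (e q) (e q)) (m (e p) (e p)) = m (m (e p) (e p)) (m (e q) (e q)) :=
      hcomm _ _
    have hM2 : (2:F) • m (m (e p) (e p)) (m (e q) (e q)) =
        m (m (m (e p) (e p)) (e q)) (e q) + m (m (m (e q) (e q)) (e p)) (e p) := by
      rcases lt_or_gt_of_ne hpq with h | h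
      · exact hc2 p q h
      · rw [← hMc, add_comm]; exact hc2 q p h
    linear_combination (norm := module)
      ((e.repr x p * e.repr x p) * (e.repr x q * e.repr x q)) • hM2 +
      ((e.repr x p * e.repr x p) * (e.repr x q * e.repr x q)) • hMc

lemma ev_forward (m : A →ₗ[F] A →ₗ[F] A) (hcomm : ∀ x y : A, m x y = m y x)
    (e : Module.Basis (Fin n) F A)
    (hnat : ∀ i j : Fin n, i ≠ j → m (e i) (e j) = 0) (h2 : (2:F) ≠ 0)
    (hyp : ∀ x : A, m (m x x) (m x x) = m (m (m x x) x) x) :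
    (∀ i : Fin n,
        m (m (m (e i) (e i)) (e i)) (e i) = m (m (e i) (e i)) (m (e i) (e i))) ∧
    (∀ i j : Fin n, i < j →
        (2 : F) • m (m (e i) (e i)) (m (e j) (e j)) =
          m (m (m (e i) (e i)) (e j)) (e j) + m (m (m (e j) (e j)) (e i)) (e i)) ∧
    (∀ i j : Fin n, i ≠ j →
        m (m (m (e i) (e i)) (e i)) (e j) + m (m (m (e i) (e i)) (e j)) (e i) = 0) ∧
    (∀ i j k : Fin n, j < k → i ≠ j → i ≠ k →
        m (m (m (e i) (e i)) (e j)) (e k) + m (m (m (e i) (e i)) (e k)) (e j) = 0) := by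
  have mb := ev_mul_basis m e hnat
  have hc1 : ∀ i : Fin n,
      m (m (m (e i) (e i)) (e i)) (e i) = m (m (e i) (e i)) (m (e i) (e i)) :=
    fun i => (hyp (e i)).symm
  have huu : ∀ i : Fin n, m (m (e i) (e i)) (m (e i) (e i)) =
      (e.repr (m (e i) (e i)) i * e.repr (m (e i) (e i)) i) • m (e i) (e i) := by
    intro i
    rw [hyp (e i), mb (m (e i) (e i)) i, map_smul, LinearMap.smul_apply,
      mb (m (e i) (e i)) i, smul_smul]
  have hplus : ∀ p q : Fin n, p ≠ q →
      m (e p + e q) (e p + e q) = m (e p) (e p) + m (e q) (e q) := by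
    intro p q hpq
    simp [map_add, hnat p q hpq, hnat q p hpq.symm]
  have hminus : ∀ p q : Fin n, p ≠ q →
      m (e p - e q) (e p - e q) = m (e p) (e p) + m (e q) (e q) := by
    intro p q hpq
    simp [map_sub, hnat p q hpq, hnat q p hpq.symm, sub_neg_eq_add]
  have pairEC : ∀ p q : Fin n, p ≠ q →
      ((2:F) • m (m (e p) (e p)) (m (e q) (e q)) =
        (e.repr (m (e p) (e p)) p * e.repr (m (e q) (e q)) p) • m (e p) (e p) +
        (e.repr (m (e p) (e p)) q * e.repr (m (e q) (e q)) q) • m (e q) (e q)) ∧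
      ((e.repr (m (e p) (e p)) q * e.repr (m (e q) (e q)) p
         + e.repr (m (e q) (e q)) p * e.repr (m (e q) (e q)) q) • m (e p) (e p) +
       (e.repr (m (e p) (e p)) p * e.repr (m (e p) (e p)) q
         + e.repr (m (e p) (e p)) q * e.repr (m (e q) (e q)) p) • m (e q) (e q) = 0) := by
    intro p q hpq
    have h1 := hyp (e p + e q); rw [hplus p q hpq] at h1
    have hm := hyp (e p - e q); rw [hminus p q hpq] at hm
    exact ev_pair_core m h2 _ _ _ _ _ _ _ _
      (mb (m (e p) (e p)) p) (mb (m (e p) (e p)) q)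
      (mb (m (e q) (e q)) p) (mb (m (e q) (e q)) q)
      (huu p) (huu q) (hcomm _ _) h1 hm
  -- condition (4), in unordered form
  have hc4' : ∀ p q r : Fin n, p ≠ q → p ≠ r → q ≠ r →
      m (m (m (e p) (e p)) (e q)) (e r) + m (m (m (e p) (e p)) (e r)) (e q) = 0 := by
    intro p q r hpq hpr hqr
    have hsq1 : m (e p + e q + e r) (e p + e q + e r) =
        m (e p) (e p) + m (e q) (e q) + m (e r) (e r) := by
      simp [map_add, hnat p q hpq, hnat q p hpq.symm, hnat p r hpr, hnat r p hpr.symm,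
        hnat q r hqr, hnat r q hqr.symm]
    have hsq2 : m (e p + e q - e r) (e p + e q - e r) =
        m (e p) (e p) + m (e q) (e q) + m (e r) (e r) := by
      simp [map_add, map_sub, hnat p q hpq, hnat q p hpq.symm, hnat p r hpr,
        hnat r p hpr.symm, hnat q r hqr, hnat r q hqr.symm, sub_neg_eq_add]
    have hsq3 : m (e p - e q + e r) (e p - e q + e r) =
        m (e p) (e p) + m (e q) (e q) + m (e r) (e r) := by
      simp [map_add, map_sub, hnat p q hpq, hnat q p hpq.symm, hnat p r hpr,
        hnat r p hpr.symm, hnat q r hqr, hnat r q hqr.symm, sub_neg_eq_add]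
    have hsq4 : m (e p - e q - e r) (e p - e q - e r) =
        m (e p) (e p) + m (e q) (e q) + m (e r) (e r) := by
      simp [map_sub, hnat p q hpq, hnat q p hpq.symm, hnat p r hpr,
        hnat r p hpr.symm, hnat q r hqr, hnat r q hqr.symm, sub_neg_eq_add]
    have h1 := hyp (e p + e q + e r); rw [hsq1] at h1
    have h2' := hyp (e p + e q - e r); rw [hsq2] at h2'
    have h3 := hyp (e p - e q + e r); rw [hsq3] at h3
    have h4 := hyp (e p - e q - e r); rw [hsq4] at h4
    have G := ev_triple_core m h2 _ _ _ _ _ _ _ _ _ _ _ _ _ _ _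
      (mb (m (e p) (e p)) p) (mb (m (e p) (e p)) q) (mb (m (e p) (e p)) r)
      (mb (m (e q) (e q)) p) (mb (m (e q) (e q)) q) (mb (m (e q) (e q)) r)
      (mb (m (e r) (e r)) p) (mb (m (e r) (e r)) q) (mb (m (e r) (e r)) r)
      h1 h2' h3 h4
    have Cqr := (pairEC q r hqr).2
    rw [mb (m (e p) (e p)) q, mb (m (e p) (e p)) r, map_smul, map_smul,
      LinearMap.smul_apply, LinearMap.smul_apply, mb (m (e q) (e q)) r,
      mb (m (e r) (e r)) q, smul_smul, smul_smul]
    linear_combination (norm := module) G - Cqr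
  refine ⟨hc1, ?_, ?_, ?_⟩
  · -- condition (2)
    intro i j hij
    have E := (pairEC i j (ne_of_lt hij)).1
    rw [mb (m (e i) (e i)) j, mb (m (e j) (e j)) i, map_smul, map_smul,
      LinearMap.smul_apply, LinearMap.smul_apply, mb (m (e j) (e j)) j,
      mb (m (e i) (e i)) i, smul_smul, smul_smul]
    linear_combination (norm := module) E
  · -- condition (3)
    intro i j hij
    have Eij := (pairEC i j hij).1
    have Cij := (pairEC i j hij).2
    have IJij := ev_IJ m hcomm e hnat h2 i j hij
      (fun k hki hkj => hc4' j i k hij.symm (fun h => hkj h.symm) (fun h => hki h.symm))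
      (huu i) (huu j) Eij
    have Eji := (pairEC j i hij.symm).1
    have IJji := ev_IJ m hcomm e hnat h2 j i hij.symm
      (fun k hkj hki => hc4' i j k hij (fun h => hki h.symm) (fun h => hkj h.symm))
      (huu j) (huu i) Eji
    have P0 := ev_P_zero m h2 (m (e i) (e i)) (m (e j) (e j)) (e i) (e j)
      (e.repr (m (e i) (e i)) i) (e.repr (m (e i) (e i)) j)
      (e.repr (m (e j) (e j)) i) (e.repr (m (e j) (e j)) j)
      (mb (m (e i) (e i)) i) (mb (m (e i) (e i)) j)
      (mb (m (e j) (e j)) i) (mb (m (e j) (e j)) j)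
      (huu i) (huu j) Cij IJij.1 IJji.1 IJij.2
    rw [mb (m (e i) (e i)) i, mb (m (e i) (e i)) j, map_smul, map_smul,
      LinearMap.smul_apply, LinearMap.smul_apply, mb (m (e i) (e i)) j,
      mb (m (e j) (e j)) i, smul_smul, smul_smul]
    linear_combination (norm := module) P0
  · -- condition (4)
    intro i j k hjk hijne hikne
    exact hc4' i j k hijne hikne (ne_of_lt hjk)

end

/-- characterization of fourth power-associativity of an evolution algebra
in terms of its natural basis (Lemma `paa`). Here `eᵢ² = eᵢ·eᵢ`, `eᵢ³ = eᵢ²·eᵢ`,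
`eᵢ⁴ = eᵢ³·eᵢ`. -/
theorem evolution_algebra_fourth_power_associative_iff
    (F : Type*) [Field F] (h2 : (2 : F) ≠ 0)
    (A : Type*) [AddCommGroup A] [Module F A]
    (m : A →ₗ[F] A →ₗ[F] A) (hcomm : ∀ x y : A, m x y = m y x)
    (n : ℕ) (e : Module.Basis (Fin n) F A)
    (hnat : ∀ i j : Fin n, i ≠ j → m (e i) (e j) = 0) :
    (∀ x : A, m (m x x) (m x x) = m (m (m x x) x) x) ↔
      ((∀ i : Fin n,
          m (m (m (e i) (e i)) (e i)) (e i) = m (m (e i) (e i)) (m (e i) (e i))) ∧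
       (∀ i j : Fin n, i < j →
          (2 : F) • m (m (e i) (e i)) (m (e j) (e j)) =
            m (m (m (e i) (e i)) (e j)) (e j) + m (m (m (e j) (e j)) (e i)) (e i)) ∧
       (∀ i j : Fin n, i ≠ j →
          m (m (m (e i) (e i)) (e i)) (e j) + m (m (m (e i) (e i)) (e j)) (e i) = 0) ∧
       (∀ i j k : Fin n, j < k → i ≠ j → i ≠ k →
          m (m (m (e i) (e i)) (e j)) (e k) + m (m (m (e i) (e i)) (e k)) (e j) = 0)) := by
  constructor
  · intro hyp
    exact ev_forward m hcomm e hnat h2 hyp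
  · rintro ⟨hc1, hc2, hc3, hc4⟩ x
    exact ev_backward m hcomm e hnat h2 hc1 hc2 hc3 hc4 x
end

section
/- Let A be an n-dimensional nil evolution algebra over a field F of characteristic ≠ 2 with natural basis e_1, …, e_n. Then A is fourth power-associative (i.e. x²·x² = (x²·x)·x for all x ∈ A) if and only if: (1) (e_i·e_i)·(e_j·e_j) = 0 for all 1 ≤ i ≤ j ≤ n; and (2) ((e_i·e_i)·e_j)·e_k = 0 for all 1 ≤ i, j, k ≤ n. -/
theorem ppow_succ' {F A : Type*} [Field F] [AddCommGroup A] [Module F A]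
    (m : A →ₗ[F] A →ₗ[F] A) (a : A) (k : ℕ) : ppow m a (k+1) = m (ppow m a k) a := rfl

section Aux

variable {F : Type*} [Field F] {A : Type*} [AddCommGroup A] [Module F A]
variable (m : A →ₗ[F] A →ₗ[F] A) {n : ℕ} (e : Module.Basis (Fin n) F A)

/-- e_i² · e_j = ω_{ji} • e_j² -/
theorem mul_sq_basis (hnat : ∀ i j : Fin n, i ≠ j → m (e i) (e j) = 0) (i j : Fin n) :
    m (m (e i) (e i)) (e j) = e.repr (m (e i) (e i)) j • m (e j) (e j) := by
  conv_lhs => rw [← e.sum_repr (m (e i) (e i))]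
  rw [map_sum, LinearMap.sum_apply]
  rw [Finset.sum_eq_single j]
  · simp
  · intro b _ hbj
    simp [hnat b j hbj]
  · intro h; exact absurd (Finset.mem_univ j) h

/-- square of a general element -/
theorem sq_expand (hnat : ∀ i j : Fin n, i ≠ j → m (e i) (e j) = 0) (c : Fin n → F) :
    m (∑ i, c i • e i) (∑ i, c i • e i) = ∑ i, (c i * c i) • m (e i) (e i) := by
  rw [map_sum]
  refine Finset.sum_congr rfl fun i _ => ?_
  rw [map_smul, map_sum, LinearMap.sum_apply]
  rw [Finset.sum_eq_single i]
  · simp [map_smul, smul_smul]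
  · intro b _ hbi
    simp [map_smul, hnat b i hbi]
  · intro h; exact absurd (Finset.mem_univ i) h

/-- nil diagonal: ω_{ii} • e_i² = 0 -/
theorem nil_diag (hnat : ∀ i j : Fin n, i ≠ j → m (e i) (e j) = 0)
    (hnil : ∀ a : A, ∃ k : ℕ, ppow m a k = 0) (i : Fin n) :
    e.repr (m (e i) (e i)) i • m (e i) (e i) = 0 := by
  set s := m (e i) (e i) with hs
  set a := e.repr s i with ha
  have key : ∀ k : ℕ, ppow m (e i) (k+1) = a ^ k • s := by
    intro k
    induction k with
    | zero => simp [ppow, hs]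
    | succ k ih =>
      rw [ppow_succ', ih, map_smul, LinearMap.smul_apply]
      rw [mul_sq_basis m e hnat i i, ← hs, ← ha, smul_smul, ← pow_succ]
  obtain ⟨k, hk⟩ := hnil (e i)
  match k with
  | 0 => exact absurd hk (e.ne_zero i)
  | (k+1) =>
    rw [key k] at hk
    rcases smul_eq_zero.mp hk with h | h
    · rcases pow_eq_zero_iff'.mp h with ⟨h0, -⟩
      rw [h0, zero_smul]
    · rw [h, smul_zero]

/-- if all squares multiply to zero, then x²x² = 0 for every x -/
theorem sq4_zero (hnat : ∀ i j : Fin n, i ≠ j → m (e i) (e j) = 0)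
    (hz : ∀ i j : Fin n, m (m (e i) (e i)) (m (e j) (e j)) = 0) (x : A) :
    m (m x x) (m x x) = 0 := by
  rw [← Module.Basis.sum_repr e x, sq_expand m e hnat]
  simp only [map_sum, LinearMap.sum_apply, map_smul, LinearMap.smul_apply, hz,
    smul_zero, Finset.sum_const_zero]

/-- if ((e_i²)e_j)e_k = 0 always, then (x²x)x = 0 for every x -/
theorem cube_zero (hnat : ∀ i j : Fin n, i ≠ j → m (e i) (e j) = 0)
    (hz : ∀ i j k : Fin n, m (m (m (e i) (e i)) (e j)) (e k) = 0) (x : A) :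
    m (m (m x x) x) x = 0 := by
  rw [← Module.Basis.sum_repr e x, sq_expand m e hnat]
  simp only [map_sum, LinearMap.sum_apply, map_smul, LinearMap.smul_apply, hz,
    smul_zero, Finset.sum_const_zero]

/-- Pa: ω_{ii} ω_{ji} • e_j² = 0 -/
theorem pair_a (hnat : ∀ i j : Fin n, i ≠ j → m (e i) (e j) = 0)
    (hnil : ∀ a : A, ∃ k : ℕ, ppow m a k = 0) (i j : Fin n) :
    (e.repr (m (e i) (e i)) i * e.repr (m (e i) (e i)) j) • m (e j) (e j) = 0 := by
  by_cases hU : m (e i) (e i) = 0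
  · rw [hU]; simp
  · have ha : e.repr (m (e i) (e i)) i = 0 := by
      rcases smul_eq_zero.mp (nil_diag m e hnat hnil i) with h | h
      · exact h
      · exact absurd h hU
    rw [ha, zero_mul, zero_smul]

/-- Pb: ω_{ij} ω_{ji} • e_i² = 0 for i ≠ j -/
theorem pair_b (hnat : ∀ i j : Fin n, i ≠ j → m (e i) (e j) = 0)
    (hnil : ∀ a : A, ∃ k : ℕ, ppow m a k = 0) (i j : Fin n) (hij : i ≠ j) :
    (e.repr (m (e j) (e j)) i * e.repr (m (e i) (e i)) j) • m (e i) (e i) = 0 := by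
  by_cases hU : m (e i) (e i) = 0
  · rw [hU, smul_zero]
  by_cases hV : m (e j) (e j) = 0
  · have hb0 : e.repr (m (e j) (e j)) i = 0 := by rw [hV]; simp
    rw [hb0, zero_mul, zero_smul]
  have ha : e.repr (m (e i) (e i)) i = 0 := by
    rcases smul_eq_zero.mp (nil_diag m e hnat hnil i) with h | h
    · exact h
    · exact absurd h hU
  have hd : e.repr (m (e j) (e j)) j = 0 := by
    rcases smul_eq_zero.mp (nil_diag m e hnat hnil j) with h | h
    · exact h
    · exact absurd h hV
  set U := m (e i) (e i) with hUdef
  set V := m (e j) (e j) with hVdef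
  set b := e.repr V i with hbdef
  set c := e.repr U j with hcdef
  have hUi : m U (e i) = 0 := by
    rw [hUdef, mul_sq_basis m e hnat i i, ← hUdef, ha, zero_smul]
  have hUj : m U (e j) = c • V := by
    rw [hUdef, mul_sq_basis m e hnat i j, ← hUdef, ← hVdef, ← hcdef]
  have hVi : m V (e i) = b • U := by
    rw [hVdef, mul_sq_basis m e hnat j i, ← hUdef, ← hVdef, ← hbdef]
  have hVj : m V (e j) = 0 := by
    rw [hVdef, mul_sq_basis m e hnat j j, ← hVdef, hd, zero_smul]
  by_cases hind : ∀ α β : F, α • U + β • V = 0 → α = 0 ∧ β = 0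
  · -- independent case: nilpotency of e i + e j forces b*c = 0
    have hx2 : m (e i + e j) (e i + e j) = U + V := by
      simp only [map_add, LinearMap.add_apply, hnat i j hij, hnat j i hij.symm,
        ← hUdef, ← hVdef, add_zero, zero_add]
    have formula : ∀ mm : ℕ, ppow m (e i + e j) (2*mm+1) = ((b*c)^mm) • (U + V) ∧
        ppow m (e i + e j) (2*mm+2) = ((b*c)^mm) • (b • U + c • V) := by
      intro mm
      induction mm with
      | zero =>
        have f1 : ppow m (e i + e j) 1 = U + V := by
          show m (e i + e j) (e i + e j) = U + V
          exact hx2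
        have f2 : ppow m (e i + e j) 2 = b • U + c • V := by
          show m (ppow m (e i + e j) 1) (e i + e j) = _
          rw [f1]
          simp only [map_add, LinearMap.add_apply, hUi, hUj, hVi, hVj]
          abel
        rw [f1, f2]
        norm_num
      | succ mm ih =>
        have e1 : 2*(mm+1)+1 = (2*mm+2)+1 := by ring
        have h1 : ppow m (e i + e j) (2*(mm+1)+1) = ((b*c)^(mm+1)) • (U + V) := by
          rw [e1, ppow_succ', ih.2]
          simp only [map_smul, map_add, LinearMap.smul_apply, LinearMap.add_apply,
            hUi, hUj, hVi, hVj]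
          module
        have e2 : 2*(mm+1)+2 = (2*(mm+1)+1)+1 := by ring
        refine ⟨h1, ?_⟩
        rw [e2, ppow_succ', h1]
        simp only [map_smul, map_add, LinearMap.smul_apply, LinearMap.add_apply,
          hUi, hUj, hVi, hVj]
        module
    obtain ⟨r, hr⟩ := hnil (e i + e j)
    have hbc : b * c = 0 := by
      match r, hr with
      | 0, hr =>
        exfalso
        have h0 : e.repr (e i + e j) i = 0 := by
          show e.repr (ppow m (e i + e j) 0) i = 0
          rw [hr]; simp
        rw [map_add] at h0
        have hji : j ≠ i := hij.symm
        simp [Module.Basis.repr_self, Finsupp.single_apply, hji] at h0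
      | (rr+1), hr =>
        rcases Nat.even_or_odd rr with ⟨mm, hmm⟩ | ⟨mm, hmm⟩
        · have hh : rr + 1 = 2*mm+1 := by omega
          rw [hh, (formula mm).1, smul_add] at hr
          have := (hind _ _ hr).1
          by_contra hbc
          exact (pow_ne_zero mm hbc) this
        · have hh : rr + 1 = 2*mm+2 := by omega
          rw [hh, (formula mm).2, smul_add, smul_smul, smul_smul] at hr
          obtain ⟨hh1, hh2⟩ := hind _ _ hr
          by_contra hbc
          refine (pow_ne_zero (mm+1) hbc) ?_
          rw [pow_succ]
          calc (b*c)^mm * (b*c) = ((b*c)^mm * b) * c := by ring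
          _ = 0 := by rw [hh1, zero_mul]
    rw [hbc, zero_smul]
  · -- dependent case
    push_neg at hind
    obtain ⟨α, β, hsum, hne⟩ := hind
    by_cases hβ : β = 0
    · subst hβ
      rw [zero_smul, add_zero] at hsum
      rcases smul_eq_zero.mp hsum with h | h
      · exact absurd rfl (hne h)
      · exact absurd h hU
    · have h4 : α * e.repr U i + β * e.repr V i = 0 := by
        have := congrArg (fun z => e.repr z i) hsum
        simpa [map_add, map_smul] using this
      rw [ha, mul_zero, zero_add] at h4
      have hb0 : b = 0 := by
        rcases mul_eq_zero.mp h4 with h | h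
        · exact absurd h hβ
        · exact h
      rw [hb0, zero_mul, zero_smul]

/-- diagonal: e_i² · e_i² = 0 from 4PA + nil -/
theorem sq_sq_diag (hnat : ∀ i j : Fin n, i ≠ j → m (e i) (e j) = 0)
    (hnil : ∀ a : A, ∃ k : ℕ, ppow m a k = 0)
    (h4pa : ∀ x : A, m (m x x) (m x x) = m (m (m x x) x) x) (i : Fin n) :
    m (m (e i) (e i)) (m (e i) (e i)) = 0 := by
  have hE := h4pa (e i)
  rw [mul_sq_basis m e hnat i i, map_smul, LinearMap.smul_apply,
    mul_sq_basis m e hnat i i, nil_diag m e hnat hnil i, smul_zero] at hE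
  exact hE

/-- e_i² · e_j² = 0 from 4PA + nil, char ≠ 2 -/
theorem sq_mul_sq (h2 : (2:F) ≠ 0) (hcomm : ∀ x y : A, m x y = m y x)
    (hnat : ∀ i j : Fin n, i ≠ j → m (e i) (e j) = 0)
    (hnil : ∀ a : A, ∃ k : ℕ, ppow m a k = 0)
    (h4pa : ∀ x : A, m (m x x) (m x x) = m (m (m x x) x) x) (i j : Fin n) :
    m (m (e i) (e i)) (m (e j) (e j)) = 0 := by
  rcases eq_or_ne i j with rfl | hij
  · exact sq_sq_diag m e hnat hnil h4pa i
  set U := m (e i) (e i) with hUdef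
  set V := m (e j) (e j) with hVdef
  have hUi : m U (e i) = e.repr U i • U := by
    rw [hUdef, mul_sq_basis m e hnat i i]
  have hUj : m U (e j) = e.repr U j • V := by
    rw [hUdef, mul_sq_basis m e hnat i j, ← hUdef, ← hVdef]
  have hVi : m V (e i) = e.repr V i • U := by
    rw [hVdef, mul_sq_basis m e hnat j i, ← hUdef, ← hVdef]
  have hVj : m V (e j) = e.repr V j • V := by
    rw [hVdef, mul_sq_basis m e hnat j j]
  have haU : e.repr U i • U = 0 := nil_diag m e hnat hnil i
  have hdV : e.repr V j • V = 0 := nil_diag m e hnat hnil j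
  have hdiagU : m U U = 0 := sq_sq_diag m e hnat hnil h4pa i
  have hdiagV : m V V = 0 := sq_sq_diag m e hnat hnil h4pa j
  have hVU : m V U = m U V := hcomm V U
  have hx2p : m (e i + e j) (e i + e j) = U + V := by
    simp only [map_add, LinearMap.add_apply, hnat i j hij, hnat j i hij.symm,
      ← hUdef, ← hVdef, add_zero, zero_add]
  have hx2m : m (e i - e j) (e i - e j) = U + V := by
    simp only [map_sub, LinearMap.sub_apply, hnat i j hij, hnat j i hij.symm,
      ← hUdef, ← hVdef]
    abel
  have Ep := h4pa (e i + e j)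
  rw [hx2p] at Ep
  simp only [map_add, LinearMap.add_apply, map_smul, LinearMap.smul_apply,
    hUi, hUj, hVi, hVj] at Ep
  have Em := h4pa (e i - e j)
  rw [hx2m] at Em
  simp only [map_add, map_sub, LinearMap.add_apply, LinearMap.sub_apply,
    map_smul, LinearMap.smul_apply, hUi, hUj, hVi, hVj] at Em
  have key : (4:F) • m U V = 0 := by
    linear_combination (norm := module) Ep + Em - (2:F) • hVU - (2:F) • hdiagU
      - (2:F) • hdiagV + (2*(e.repr U i + e.repr V i)) • haU
      + (2*(e.repr U j + e.repr V j)) • hdV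
  have h4 : (4:F) ≠ 0 := by
    intro h
    apply mul_ne_zero h2 h2
    rw [show (2:F)*2 = 4 by norm_num, h]
  rcases smul_eq_zero.mp key with h | h
  · exact absurd h h4
  · exact h

end Aux

/-- a nil evolution algebra over a field of characteristic ≠ 2 is fourth
power-associative iff `(eᵢ·eᵢ)·(eⱼ·eⱼ) = 0` for all `i ≤ j` and
`((eᵢ·eᵢ)·eⱼ)·e_k = 0` for all `i, j, k`. -/
theorem nil_evolution_algebra_fourth_power_associative_iff
    (F : Type*) [Field F] (h2 : (2 : F) ≠ 0)
    (A : Type*) [AddCommGroup A] [Module F A]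
    (m : A →ₗ[F] A →ₗ[F] A) (hcomm : ∀ x y : A, m x y = m y x)
    (n : ℕ) (e : Module.Basis (Fin n) F A)
    (hnat : ∀ i j : Fin n, i ≠ j → m (e i) (e j) = 0)
    (hnil : ∀ a : A, ∃ k : ℕ, ppow m a k = 0) :
    (∀ x : A, m (m x x) (m x x) = m (m (m x x) x) x) ↔
      ((∀ i j : Fin n, i ≤ j → m (m (e i) (e i)) (m (e j) (e j)) = 0) ∧
       (∀ i j k : Fin n, m (m (m (e i) (e i)) (e j)) (e k) = 0)) := by
  constructor
  · intro h4pa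
    have hsq : ∀ i j : Fin n, m (m (e i) (e i)) (m (e j) (e j)) = 0 :=
      sq_mul_sq m e h2 hcomm hnat hnil h4pa
    refine ⟨fun i j _ => hsq i j, ?_⟩
    have hT : ∀ x : A, m (m (m x x) x) x = 0 :=
      fun x => (h4pa x).symm.trans (sq4_zero m e hnat hsq x)
    intro i j k
    rw [mul_sq_basis m e hnat i j, map_smul, LinearMap.smul_apply,
      mul_sq_basis m e hnat j k, smul_smul]
    rcases eq_or_ne j k with rfl | hjk
    · -- j = k
      rw [mul_smul, nil_diag m e hnat hnil j, smul_zero]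
    rcases eq_or_ne i j with rfl | hij
    · -- i = j
      exact pair_a m e hnat hnil i k
    rcases eq_or_ne i k with rfl | hik
    · -- k = i
      rw [mul_comm]
      exact pair_b m e hnat hnil i j hij
    -- i, j, k pairwise distinct
    set U := m (e i) (e i) with hUdef
    set V := m (e j) (e j) with hVdef
    set W := m (e k) (e k) with hWdef
    by_cases hW : W = 0
    · rw [hW, smul_zero]
    by_cases hV : V = 0
    · have : e.repr V k = 0 := by rw [hV]; simp
      rw [this, mul_zero, zero_smul]
    by_cases hind : ∀ α β : F, α • V + β • W = 0 → α = 0 ∧ β = 0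
    · -- V, W independent: use the odd-odd component of 4PA at e i ± e j ± e k
      have hUa : m U (e i) = e.repr U i • U := by rw [hUdef, mul_sq_basis m e hnat i i]
      have hUb : m U (e j) = e.repr U j • V := by
        rw [hUdef, mul_sq_basis m e hnat i j, ← hUdef, ← hVdef]
      have hUc : m U (e k) = e.repr U k • W := by
        rw [hUdef, mul_sq_basis m e hnat i k, ← hUdef, ← hWdef]
      have hVa : m V (e i) = e.repr V i • U := by
        rw [hVdef, mul_sq_basis m e hnat j i, ← hUdef, ← hVdef]
      have hVb : m V (e j) = e.repr V j • V := by rw [hVdef, mul_sq_basis m e hnat j j]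
      have hVc : m V (e k) = e.repr V k • W := by
        rw [hVdef, mul_sq_basis m e hnat j k, ← hVdef, ← hWdef]
      have hWa : m W (e i) = e.repr W i • U := by
        rw [hWdef, mul_sq_basis m e hnat k i, ← hUdef, ← hWdef]
      have hWb : m W (e j) = e.repr W j • V := by
        rw [hWdef, mul_sq_basis m e hnat k j, ← hVdef, ← hWdef]
      have hWc : m W (e k) = e.repr W k • W := by rw [hWdef, mul_sq_basis m e hnat k k]
      have hx2 : ∀ β γ : F, m (e i + β•(e j) + γ•(e k)) (e i + β•(e j) + γ•(e k)) =
          U + (β*β)•V + (γ*γ)•W := by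
        intro β γ
        simp only [map_add, map_smul, LinearMap.add_apply, LinearMap.smul_apply,
          hnat i j hij, hnat j i hij.symm, hnat i k hik, hnat k i hik.symm,
          hnat j k hjk, hnat k j hjk.symm, smul_zero, add_zero, zero_add,
          ← hUdef, ← hVdef, ← hWdef]
        module
      set a := e.repr U i with hadef
      set c := e.repr U j with hcdef
      set g := e.repr U k with hgdef
      set b := e.repr V i with hbdef
      set d := e.repr V j with hddef
      set h := e.repr V k with hhdef
      set p := e.repr W i with hpdef
      set q := e.repr W j with hqdef
      set l := e.repr W k with hldef
      have Tex : ∀ β γ : F,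
          (((a+β*β*b+γ*γ*p)*a + (β*c+β*β*β*d+β*γ*γ*q)*b + (γ*g+β*β*γ*h+γ*γ*γ*l)*p)) • U
          + (((a+β*β*b+γ*γ*p)*(β*c) + (β*c+β*β*β*d+β*γ*γ*q)*(β*d)
              + (γ*g+β*β*γ*h+γ*γ*γ*l)*(β*q))) • V
          + (((a+β*β*b+γ*γ*p)*(γ*g) + (β*c+β*β*β*d+β*γ*γ*q)*(γ*h)
              + (γ*g+β*β*γ*h+γ*γ*γ*l)*(γ*l))) • W = 0 := by
        intro β γ
        have hTx := hT (e i + β•(e j) + γ•(e k))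
        rw [hx2 β γ] at hTx
        simp only [map_add, map_smul, LinearMap.add_apply, LinearMap.smul_apply,
          hUa, hUb, hUc, hVa, hVb, hVc, hWa, hWb, hWc] at hTx
        linear_combination (norm := module) hTx
      have K1 : (q*h) • V = 0 := pair_b m e hnat hnil j k hjk
      have K2 : (l*q) • V = 0 := pair_a m e hnat hnil k j
      have K3 : (d*h) • W = 0 := pair_a m e hnat hnil j k
      have K4 : (h*q) • W = 0 := pair_b m e hnat hnil k j hjk.symm
      have goal4 : (4:F) • ((g*q) • V + (c*h) • W) = 0 := by
        linear_combination (norm := module) Tex 1 1 - Tex 1 (-1) - Tex (-1) 1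
          + Tex (-1) (-1) - (4:F) • K1 - (4:F) • K2 - (4:F) • K3 - (4:F) • K4
      have h4 : (4:F) ≠ 0 := by
        intro hz
        apply mul_ne_zero h2 h2
        rw [show (2:F)*2 = 4 by norm_num, hz]
      have hfin : (g*q) • V + (c*h) • W = 0 := by
        rcases smul_eq_zero.mp goal4 with hz | hz
        · exact absurd hz h4
        · exact hz
      rw [(hind _ _ hfin).2, zero_smul]
    · -- V, W dependent
      push_neg at hind
      obtain ⟨α, β, hsum, hne⟩ := hind
      by_cases hα : α = 0
      · subst hα
        rw [zero_smul, zero_add] at hsum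
        rcases smul_eq_zero.mp hsum with hz | hz
        · exact absurd hz (hne rfl)
        · exact absurd hz hW
      · have hl : e.repr W k = 0 := by
          rcases smul_eq_zero.mp (nil_diag m e hnat hnil k) with hz | hz
          · exact hz
          · exact absurd hz hW
        have h5 : α * e.repr V k + β * e.repr W k = 0 := by
          have := congrArg (fun z => e.repr z k) hsum
          simpa [map_add, map_smul] using this
        rw [hl, mul_zero, add_zero] at h5
        have hh0 : e.repr V k = 0 := by
          rcases mul_eq_zero.mp h5 with hz | hz
          · exact absurd hz hα
          · exact hz
        rw [hh0, mul_zero, zero_smul]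
  · rintro ⟨hc1, hc2⟩ x
    have hz : ∀ i j : Fin n, m (m (e i) (e i)) (m (e j) (e j)) = 0 := by
      intro i j
      rcases le_total i j with hle | hle
      · exact hc1 i j hle
      · rw [hcomm]; exact hc1 j i hle
    rw [sq4_zero m e hnat hz x, cube_zero m e hnat hc2 x]
end

section
/- Let A be an n-dimensional evolution algebra over a field F of characteristic ≠ 2 with natural basis e_1, …, e_n. Write e_i² = e_i·e_i, e_i³ = e_i²·e_i, e_i⁴ = e_i³·e_i. Then A is a Jordan algebra (i.e. (x²·y)·x = x²·(y·x) for all x, y ∈ A) if and only if: (1) e_i²·e_i² = e_i⁴ for all i; (2) e_i³·e_j = 0 for all i ≠ j; (3) (e_i²·e_j)·e_i = 0 for all i ≠ j; (4) e_i²·e_j² = (e_i²·e_j)·e_j = (e_j²·e_i)·e_i for all i ≠ j; (5) (e_i²·e_j)·e_k = 0 for all pairwise distinct i, j, k. -/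
/-- characterization of the Jordan identity for an evolution algebra in
terms of its natural basis. Here `eᵢ² = eᵢ·eᵢ`, `eᵢ³ = eᵢ²·eᵢ`, `eᵢ⁴ = eᵢ³·eᵢ`. -/
theorem evolution_algebra_jordan_iff
    (F : Type*) [Field F] (h2 : (2 : F) ≠ 0)
    (A : Type*) [AddCommGroup A] [Module F A]
    (m : A →ₗ[F] A →ₗ[F] A) (hcomm : ∀ x y : A, m x y = m y x)
    (n : ℕ) (e : Module.Basis (Fin n) F A)
    (hnat : ∀ i j : Fin n, i ≠ j → m (e i) (e j) = 0) :
    (∀ x y : A, m (m (m x x) y) x = m (m x x) (m y x)) ↔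
      ((∀ i : Fin n,
          m (m (e i) (e i)) (m (e i) (e i)) = m (m (m (e i) (e i)) (e i)) (e i)) ∧
       (∀ i j : Fin n, i ≠ j → m (m (m (e i) (e i)) (e i)) (e j) = 0) ∧
       (∀ i j : Fin n, i ≠ j → m (m (m (e i) (e i)) (e j)) (e i) = 0) ∧
       (∀ i j : Fin n, i ≠ j →
          m (m (e i) (e i)) (m (e j) (e j)) = m (m (m (e i) (e i)) (e j)) (e j) ∧
          m (m (e i) (e i)) (m (e j) (e j)) = m (m (m (e j) (e j)) (e i)) (e i)) ∧
       (∀ i j k : Fin n, i ≠ j → j ≠ k → i ≠ k →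
          m (m (m (e i) (e i)) (e j)) (e k) = 0)) := by
  constructor
  · -- Forward direction: the Jordan identity implies the five conditions.
    intro hJ
    have c1 : ∀ i : Fin n,
        m (m (e i) (e i)) (m (e i) (e i)) = m (m (m (e i) (e i)) (e i)) (e i) :=
      fun i => (hJ (e i) (e i)).symm
    have c3 : ∀ i j : Fin n, i ≠ j → m (m (m (e i) (e i)) (e j)) (e i) = 0 := by
      intro i j hij
      have h := hJ (e i) (e j)
      rwa [hnat j i hij.symm, map_zero] at h
    have key : ∀ i j : Fin n, i ≠ j →
        m (m (m (e i) (e i)) (e i)) (e j) = 0 ∧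
        m (m (e i) (e i)) (m (e j) (e j)) = m (m (m (e j) (e j)) (e i)) (e i) := by
      intro i j hij
      have E1 := hJ (e j + e i) (e i)
      have E2 := hJ (e j - e i) (e i)
      simp only [map_add, map_sub, LinearMap.add_apply, LinearMap.sub_apply,
        hnat i j hij, hnat j i hij.symm, map_zero, LinearMap.zero_apply,
        add_zero, zero_add, sub_zero, zero_sub, map_neg, LinearMap.neg_apply, neg_neg,
        c3 i j hij, c3 j i hij.symm] at E1 E2
      have hv : m (m (m (e i) (e i)) (e i)) (e j) = 0 := by
        have h2v : (2 : F) • (m (m (m (e i) (e i)) (e i)) (e j)) = 0 := by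
          rw [two_smul]
          have h := congrArg₂ (· + ·) E1 E2
          abel_nf at h ⊢
          exact h
        exact (smul_eq_zero.mp h2v).resolve_left h2
      refine ⟨hv, ?_⟩
      rw [hv, zero_add, ← c1 i] at E1
      rw [hcomm (m (e i) (e i)) (m (e j) (e j))]
      exact (add_right_cancel E1).symm
    have c2 : ∀ i j : Fin n, i ≠ j → m (m (m (e i) (e i)) (e i)) (e j) = 0 :=
      fun i j hij => (key i j hij).1
    have c4 : ∀ i j : Fin n, i ≠ j →
        m (m (e i) (e i)) (m (e j) (e j)) = m (m (m (e i) (e i)) (e j)) (e j) ∧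
        m (m (e i) (e i)) (m (e j) (e j)) = m (m (m (e j) (e j)) (e i)) (e i) := by
      intro i j hij
      refine ⟨?_, (key i j hij).2⟩
      rw [hcomm (m (e i) (e i)) (m (e j) (e j))]
      exact (key j i hij.symm).2
    have c5 : ∀ i j k : Fin n, i ≠ j → j ≠ k → i ≠ k →
        m (m (m (e i) (e i)) (e j)) (e k) = 0 := by
      intro i j k hij hjk hik
      have E1 := hJ (e i + e k) (e j)
      have E2 := hJ (e i - e k) (e j)
      simp only [map_add, map_sub, LinearMap.add_apply, LinearMap.sub_apply,
        hnat i j hij, hnat j i hij.symm, hnat i k hik, hnat k i hik.symm,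
        hnat j k hjk, hnat k j hjk.symm, map_zero, LinearMap.zero_apply,
        add_zero, zero_add, sub_zero, zero_sub, map_neg, LinearMap.neg_apply, neg_neg,
        c3 i j hij, c3 k j hjk.symm] at E1 E2
      have h2v : (2 : F) • (m (m (m (e i) (e i)) (e j)) (e k)) = 0 := by
        rw [two_smul]
        have h := congrArg₂ (· - ·) E1 E2
        abel_nf at h ⊢
        exact h
      exact (smul_eq_zero.mp h2v).resolve_left h2
    exact ⟨c1, c2, c3, c4, c5⟩
  · -- Backward direction: the five conditions imply the Jordan identity.
    rintro ⟨c1, c2, c3, c4, c5⟩ x y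
    set q : Fin n → A := fun i => m (e i) (e i) with hq
    have keyR : ∀ (c : Fin n → F) (u : Fin n → A) (z : A),
        m (∑ i, c i • u i) z = ∑ i, c i • m (u i) z := by
      intro c u z
      simp only [map_sum, LinearMap.sum_apply, map_smul, LinearMap.smul_apply]
    have keyL : ∀ (c : Fin n → F) (u : Fin n → A) (z : A),
        m z (∑ i, c i • u i) = ∑ i, c i • m z (u i) := by
      intro c u z
      simp only [map_sum, map_smul]
    have keyBig : ∀ (cw : Fin n → Fin n → F) (w : Fin n → Fin n → A) (z : A),
        m (∑ i, ∑ j, cw i j • w i j) z = ∑ i, ∑ j, cw i j • m (w i j) z := by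
      intro cw w z
      simp only [map_sum, LinearMap.sum_apply, map_smul, LinearMap.smul_apply]
    have key : ∀ (c d : Fin n → F) (u v : Fin n → A),
        m (∑ i, c i • u i) (∑ j, d j • v j) = ∑ i, ∑ j, (c i * d j) • m (u i) (v j) := by
      intro c d u v
      rw [keyR]
      refine Finset.sum_congr rfl fun i _ => ?_
      rw [keyL, Finset.smul_sum]
      exact Finset.sum_congr rfl fun j _ => by rw [smul_smul]
    have keydiag : ∀ c d : Fin n → F,
        m (∑ i, c i • e i) (∑ j, d j • e j) = ∑ i, (c i * d i) • q i := by
      intro c d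
      rw [key]
      refine Finset.sum_congr rfl fun i _ => ?_
      refine Finset.sum_eq_single i (fun j _ hji => ?_) (fun h => absurd (Finset.mem_univ i) h)
      rw [hnat i j (Ne.symm hji), smul_zero]
    set r : Fin n → F := fun i => e.repr x i with hr
    set s : Fin n → F := fun i => e.repr y i with hs
    have hx : x = ∑ i, r i • e i := (e.sum_repr x).symm
    have hy : y = ∑ i, s i • e i := (e.sum_repr y).symm
    have h1 : m x x = ∑ i, (r i * r i) • q i := by rw [hx]; exact keydiag r r
    have h2' : m y x = ∑ i, (s i * r i) • q i := by rw [hx, hy]; exact keydiag s r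
    have h3 : m (m x x) y = ∑ i, ∑ j, ((r i * r i) * s j) • m (q i) (e j) := by
      rw [h1, hy]; exact key _ _ _ _
    have hlhs : m (m (m x x) y) x
        = ∑ i, ∑ j, ∑ k, (((r i * r i) * s j) * r k) • m (m (q i) (e j)) (e k) := by
      rw [h3, hx, keyBig]
      refine Finset.sum_congr rfl fun i _ => ?_
      refine Finset.sum_congr rfl fun j _ => ?_
      rw [keyL, Finset.smul_sum]
      exact Finset.sum_congr rfl fun k _ => by rw [smul_smul]
    have hrhs : m (m x x) (m y x)
        = ∑ i, ∑ j, ((r i * r i) * (s j * r j)) • m (q i) (q j) := by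
      rw [h1, h2']; exact key _ _ _ _
    rw [hlhs, hrhs]
    refine Finset.sum_congr rfl fun i _ => ?_
    refine Finset.sum_congr rfl fun j _ => ?_
    have hside : ∀ k ∈ Finset.univ, k ≠ j →
        (((r i * r i) * s j) * r k) • m (m (q i) (e j)) (e k) = 0 := by
      intro k _ hkj
      by_cases hij : i = j
      · subst hij
        rw [c2 i k (Ne.symm hkj), smul_zero]
      · by_cases hki : k = i
        · rw [hki, c3 i j hij, smul_zero]
        · rw [c5 i j k hij (Ne.symm hkj) (Ne.symm hki), smul_zero]
    rw [Finset.sum_eq_single j hside (fun h => absurd (Finset.mem_univ j) h)]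
    by_cases hij : i = j
    · subst hij
      rw [← c1 i, mul_assoc]
    · rw [(c4 i j hij).1, mul_assoc]
end

section
/- Let A be an n-dimensional nil evolution algebra over a field F of characteristic ≠ 2 with natural basis e_1, …, e_n. Then A is a Jordan algebra (i.e. (x²·y)·x = x²·(y·x) for all x, y ∈ A) if and only if: (1) (e_i·e_i)·(e_j·e_j) = 0 for all 1 ≤ i ≤ j ≤ n; and (2) ((e_i·e_i)·e_j)·e_k = 0 for all 1 ≤ i, j, k ≤ n. -/
/-- a nil evolution algebra over a field of characteristic ≠ 2 satisfies the
Jordan identity iff `(eᵢ·eᵢ)·(eⱼ·eⱼ) = 0` for all `i ≤ j` and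
`((eᵢ·eᵢ)·eⱼ)·e_k = 0` for all `i, j, k`. -/
theorem nil_evolution_algebra_jordan_iff
    (F : Type*) [Field F] (h2 : (2 : F) ≠ 0)
    (A : Type*) [AddCommGroup A] [Module F A]
    (m : A →ₗ[F] A →ₗ[F] A) (hcomm : ∀ x y : A, m x y = m y x)
    (n : ℕ) (e : Module.Basis (Fin n) F A)
    (hnat : ∀ i j : Fin n, i ≠ j → m (e i) (e j) = 0)
    (hnil : ∀ a : A, ∃ k : ℕ, ppow m a k = 0) :
    (∀ x y : A, m (m (m x x) y) x = m (m x x) (m y x)) ↔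
      ((∀ i j : Fin n, i ≤ j → m (m (e i) (e i)) (m (e j) (e j)) = 0) ∧
       (∀ i j k : Fin n, m (m (m (e i) (e i)) (e j)) (e k) = 0)) := by
  -- expansion of a product against a basis vector
  have hRe : ∀ (v : A) (j : Fin n), m v (e j) = e.repr v j • m (e j) (e j) := by
    intro v j
    conv_lhs => rw [← e.sum_repr v]
    rw [map_sum, LinearMap.sum_apply]
    rw [Finset.sum_eq_single j]
    · rw [map_smul, LinearMap.smul_apply]
    · intro k _ hk
      rw [map_smul, LinearMap.smul_apply, hnat k j hk, smul_zero]
    · intro h; exact absurd (Finset.mem_univ j) h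
  -- full expansion of a product
  have hme : ∀ x y : A, m x y = ∑ i, (e.repr x i * e.repr y i) • m (e i) (e i) := by
    intro x y
    conv_lhs => rw [← e.sum_repr x]
    rw [map_sum, LinearMap.sum_apply]
    refine Finset.sum_congr rfl fun i _ => ?_
    rw [map_smul, LinearMap.smul_apply, hcomm (e i) y, hRe y i, smul_smul]
  -- elimination lemma
  have helim : ∀ v : A, (∀ k, m v (e k) = 0) → ∀ w : A, m v w = 0 := by
    intro v hv w
    conv_lhs => rw [← e.sum_repr w]
    rw [map_sum]
    simp [hv]
  -- nil lemma: (eᵢ²)·eᵢ = 0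
  have hN : ∀ i : Fin n, m (m (e i) (e i)) (e i) = 0 := by
    intro i
    by_cases hz : m (e i) (e i) = 0
    · rw [hz]; simp
    · set s := m (e i) (e i) with hs
      set c := e.repr s i with hc
      have hR : m s (e i) = c • s := hRe s i
      have hp : ∀ k : ℕ, ppow m (e i) (k + 1) = c ^ k • s := by
        intro k
        induction k with
        | zero => show m (ppow m (e i) 0) (e i) = _; simp [ppow, hs]
        | succ k ih =>
          show m (ppow m (e i) (k + 1)) (e i) = _
          rw [ih, map_smul, LinearMap.smul_apply, hR, smul_smul, ← pow_succ]
      obtain ⟨k, hk⟩ := hnil (e i)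
      match k, hk with
      | 0, hk =>
        exfalso
        have h0 : e i = 0 := hk
        exact hz (by rw [hs, h0]; simp)
      | k + 1, hk =>
        rw [hp k] at hk
        rcases smul_eq_zero.mp hk with h | h
        · have hc0 : c = 0 := by
            by_contra hcc
            exact pow_ne_zero k hcc h
          rw [hR, hc0, zero_smul]
        · exact absurd h hz
  constructor
  · -- forward: Jordan → conditions
    intro hJ
    -- the key partially linearized identity
    have hT : ∀ (i j : Fin n) (y : A),
        m (m (m (e i) (e i)) y) (e j) = m (m (e i) (e i)) (m y (e j)) := by
      intro i j y
      by_cases hij : i = j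
      · subst hij; exact hJ (e i) y
      · have hA := hJ (e i + e j) y
        have hB := hJ (e i - e j) y
        have hd := hJ (e j) y
        simp only [map_add, map_sub, LinearMap.add_apply, LinearMap.sub_apply,
          hnat i j hij, hnat j i (Ne.symm hij), map_zero, LinearMap.zero_apply,
          add_zero, zero_add, sub_zero, zero_sub, map_neg, LinearMap.neg_apply,
          neg_neg] at hA hB
        have key : (2:F) • m (m (m (e i) (e i)) y) (e j)
            = (2:F) • m (m (e i) (e i)) (m y (e j)) := by
          linear_combination (norm := module) hA - hB - (2:F) • hd
        exact smul_right_injective A h2 key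
    have hSS : ∀ i j : Fin n, m (m (e i) (e i)) (m (e j) (e j)) = 0 := by
      intro i j
      rw [← hT i j (e j), hRe (m (e i) (e i)) j, map_smul, LinearMap.smul_apply,
        hN j, smul_zero]
    refine ⟨fun i j _ => hSS i j, fun i j k => ?_⟩
    rw [hT i k (e j)]
    by_cases hjk : j = k
    · subst hjk; exact hSS i j
    · rw [hnat j k hjk, map_zero]
  · -- backward: conditions → Jordan
    rintro ⟨h1, h2c⟩ x y
    have hSS : ∀ i j : Fin n, m (m (e i) (e i)) (m (e j) (e j)) = 0 := by
      intro i j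
      rcases le_total i j with h | h
      · exact h1 i j h
      · rw [hcomm]; exact h1 j i h
    have G : ∀ (i j : Fin n) (z : A), m (m (m (e i) (e i)) (e j)) z = 0 :=
      fun i j => helim _ (h2c i j)
    have G2 : ∀ (i : Fin n) (w z : A), m (m (m (e i) (e i)) w) z = 0 := by
      intro i w z
      conv_lhs => rw [← e.sum_repr w]
      rw [map_sum, map_sum, LinearMap.sum_apply]
      simp [G]
    have L : m (m (m x x) y) x = 0 := by
      rw [hme x x]
      simp [map_sum, LinearMap.sum_apply, G2]
    have R : m (m x x) (m y x) = 0 := by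
      rw [hme x x, hme y x]
      simp [map_sum, LinearMap.sum_apply, hSS]
    rw [L, R]
end

section
/- Let A be a finite-dimensional nil evolution algebra over a field F of characteristic ≠ 2. Then A is fourth power-associative (i.e. x²·x² = (x²·x)·x for all x ∈ A) if and only if A is a Jordan algebra (i.e. (x²·y)·x = x²·(y·x) for all x, y ∈ A). -/
/-- a finite-dimensional nil evolution algebra over a field of
characteristic ≠ 2 is fourth power-associative iff it is a Jordan algebra. -/
theorem nil_evolution_algebra_fourth_pa_iff_jordan
    (F : Type*) [Field F] (h2 : (2 : F) ≠ 0)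
    (A : Type*) [AddCommGroup A] [Module F A]
    (m : A →ₗ[F] A →ₗ[F] A) (hcomm : ∀ x y : A, m x y = m y x)
    (hev : ∃ (n : ℕ) (e : Module.Basis (Fin n) F A),
      ∀ i j : Fin n, i ≠ j → m (e i) (e j) = 0)
    (hnil : ∀ a : A, ∃ k : ℕ, ppow m a k = 0) :
    (∀ x : A, m (m x x) (m x x) = m (m (m x x) x) x) ↔
      (∀ x y : A, m (m (m x x) y) x = m (m x x) (m y x)) := by
  obtain ⟨n, e, hev⟩ := hev
  set f : Fin n → A := fun i => m (e i) (e i) with hf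
  set w : Fin n → Fin n → F := fun a b => e.repr (f a) b with hw
  have Lee : ∀ a : Fin n, m (e a) (e a) = f a := fun _ => rfl
  have hwdef : ∀ a b : Fin n, e.repr (f a) b = w a b := fun _ _ => rfl
  -- multiplication formula
  have Lmul : ∀ x y : A, m x y = ∑ a, (e.repr x a * e.repr y a) • f a := by
    intro x y
    conv_lhs => rw [← e.sum_repr x, ← e.sum_repr y]
    simp only [map_sum, LinearMap.sum_apply, map_smul, LinearMap.smul_apply]
    refine Finset.sum_congr rfl fun a _ => ?_
    rw [Finset.sum_eq_single a]
    · rw [Lee, smul_smul, mul_comm]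
    · intro b _ hba
      rw [hev b a hba, smul_zero]
    · intro h
      exact absurd (Finset.mem_univ a) h
  have Lfe : ∀ a b : Fin n, m (f a) (e b) = w a b • f b := by
    intro a b
    rw [Lmul]
    rw [Finset.sum_eq_single b]
    · simp [Module.Basis.repr_self, hwdef]
    · intro c _ hcb
      simp [Module.Basis.repr_self, Finsupp.single_eq_of_ne hcb]
    · intro h
      exact absurd (Finset.mem_univ b) h
  -- principal powers of basis vectors
  have hppow : ∀ (i : Fin n) (k : ℕ), ppow m (e i) (k + 1) = (w i i) ^ k • f i := by
    intro i k
    induction k with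
    | zero =>
      have h1 : ppow m (e i) 1 = m (ppow m (e i) 0) (e i) := rfl
      have h0 : ppow m (e i) 0 = e i := rfl
      rw [h1, h0, pow_zero, one_smul]
    | succ k ih =>
      have h1 : ppow m (e i) (k + 1 + 1) = m (ppow m (e i) (k + 1)) (e i) := rfl
      rw [h1, ih, map_smul, LinearMap.smul_apply, Lfe i i, smul_smul, ← pow_succ]
  have Wdiag : ∀ i : Fin n, w i i = 0 := by
    intro i
    obtain ⟨k, hk⟩ := hnil (e i)
    cases k with
    | zero =>
      have h0 : ppow m (e i) 0 = e i := rfl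
      rw [h0] at hk
      exact absurd hk (e.ne_zero i)
    | succ k =>
      rw [hppow] at hk
      rcases smul_eq_zero.mp hk with h | h
      · exact (pow_eq_zero_iff'.mp h).1
      · show e.repr (f i) i = 0
        rw [h, map_zero, Finsupp.coe_zero, Pi.zero_apply]
  constructor
  · -- forward direction: 4PA implies Jordan
    intro h4
    -- squares of basis squares are zero
    have Q : ∀ a : Fin n, m (f a) (f a) = 0 := by
      intro a
      have h := h4 (e a)
      rw [Lee a] at h
      rw [Lfe a a, Wdiag a, zero_smul, map_zero, LinearMap.zero_apply] at h
      exact h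
    -- products of basis squares are zero, and w a b * w b a = 0
    have step2 : ∀ a b : Fin n, a ≠ b → m (f a) (f b) = 0 ∧ w a b * w b a = 0 := by
      intro a b hab
      have sq1 : m (e a + e b) (e a + e b) = f a + f b := by
        simp only [map_add, LinearMap.add_apply, hev a b hab, hev b a hab.symm, Lee,
          add_zero, zero_add]
      have sq2 : m (e a - e b) (e a - e b) = f a + f b := by
        simp only [map_sub, LinearMap.sub_apply, hev a b hab, hev b a hab.symm, Lee,
          sub_zero, zero_sub, sub_neg_eq_add]
      have lhs1 : m (f a + f b) (f a + f b) = m (f a) (f b) + m (f a) (f b) := by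
        simp only [map_add, LinearMap.add_apply, Q, hcomm (f b) (f a), zero_add, add_zero]
      have mid1 : m (f a + f b) (e a + e b) = w a b • f b + w b a • f a := by
        simp only [map_add, LinearMap.add_apply, Lfe, Wdiag, zero_smul, zero_add, add_zero]
        all_goals module
      have rhs1 : m (w a b • f b + w b a • f a) (e a + e b) =
          (w a b * w b a) • f a + (w b a * w a b) • f b := by
        simp only [map_add, map_smul, LinearMap.add_apply, LinearMap.smul_apply, Lfe,
          Wdiag, zero_smul, smul_zero, zero_add, add_zero, smul_smul]
        all_goals module
      have mid2 : m (f a + f b) (e a - e b) = w b a • f a - w a b • f b := by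
        simp only [map_add, map_sub, LinearMap.add_apply, LinearMap.sub_apply, Lfe,
          Wdiag, zero_smul, zero_sub, sub_zero]
        all_goals module
      have rhs2 : m (w b a • f a - w a b • f b) (e a - e b) =
          -((w a b * w b a) • f a) - (w b a * w a b) • f b := by
        simp only [map_sub, map_smul, LinearMap.sub_apply, LinearMap.smul_apply, Lfe,
          Wdiag, zero_smul, smul_zero, zero_sub, sub_zero, smul_smul]
        all_goals module
      have c1 := h4 (e a + e b)
      rw [sq1, mid1, rhs1, lhs1] at c1
      have c2 := h4 (e a - e b)
      rw [sq2, mid2, rhs2, lhs1] at c2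
      have hX : ((2 : F) * (2 : F)) • m (f a) (f b) = 0 := by
        calc ((2 : F) * (2 : F)) • m (f a) (f b)
            = (m (f a) (f b) + m (f a) (f b)) + (m (f a) (f b) + m (f a) (f b)) := by
              module
          _ = ((w a b * w b a) • f a + (w b a * w a b) • f b) +
              (-((w a b * w b a) • f a) - (w b a * w a b) • f b) :=
              congrArg₂ (fun u v : A => u + v) c1 c2
          _ = 0 := by module
      have hF : m (f a) (f b) = 0 := by
        rcases smul_eq_zero.mp hX with h | h
        · exact absurd h (mul_ne_zero h2 h2)
        · exact h
      refine ⟨hF, ?_⟩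
      rw [hF, add_zero] at c1
      have hco := congrArg (fun v => e.repr v b) c1
      simp only [map_add, map_smul, map_zero, Finsupp.add_apply, Finsupp.smul_apply,
        Finsupp.coe_zero, Pi.zero_apply, smul_eq_mul, hwdef, Wdiag, mul_zero, add_zero] at hco
      rcases mul_eq_zero.mp hco.symm with h | h
      · exact h
      · rw [h, zero_mul]
    have Fzero : ∀ a b : Fin n, m (f a) (f b) = 0 := by
      intro a b
      by_cases hab : a = b
      · rw [hab]; exact Q b
      · exact (step2 a b hab).1
    have czero : ∀ a b : Fin n, w a b * w b a = 0 := by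
      intro a b
      by_cases hab : a = b
      · rw [hab, Wdiag, zero_mul]
      · exact (step2 a b hab).2
    -- main structural relation K1
    have K1 : ∀ i r j : Fin n, i ≠ r → i ≠ j → r ≠ j →
        (w j r * w r i) • f i + (w j i * w i r) • f r = 0 := by
      intro i r j hir hij hrj
      have sqC : m (e i + e r + e j) (e i + e r + e j) = f i + f r + f j := by
        simp only [map_add, LinearMap.add_apply, hev i r hir, hev r i hir.symm,
          hev i j hij, hev j i hij.symm, hev r j hrj, hev j r hrj.symm, Lee,
          add_zero, zero_add]
      have sqC' : m (e i + e r - e j) (e i + e r - e j) = f i + f r + f j := by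
        simp only [map_add, map_sub, LinearMap.add_apply, LinearMap.sub_apply,
          hev i r hir, hev r i hir.symm, hev i j hij, hev j i hij.symm,
          hev r j hrj, hev j r hrj.symm, Lee, add_zero, zero_add, sub_zero,
          zero_sub, sub_neg_eq_add]
      have lhsC : m (f i + f r + f j) (f i + f r + f j) = (0 : A) := by
        simp only [map_add, LinearMap.add_apply, Fzero, add_zero]
      have midC : m (f i + f r + f j) (e i + e r + e j) =
          ((w r i + w j i) • f i + (w i r + w j r) • f r) + (w i j + w r j) • f j := by
        simp only [map_add, LinearMap.add_apply, Lfe, Wdiag, zero_smul, add_zero, zero_add]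
        all_goals module
      have rhsC : m (((w r i + w j i) • f i + (w i r + w j r) • f r) + (w i j + w r j) • f j)
            (e i + e r + e j) =
          (((w i r + w j r) * w r i + (w i j + w r j) * w j i) • f i +
            ((w r i + w j i) * w i r + (w i j + w r j) * w j r) • f r) +
            ((w r i + w j i) * w i j + (w i r + w j r) * w r j) • f j := by
        simp only [map_add, map_smul, LinearMap.add_apply, LinearMap.smul_apply, Lfe,
          Wdiag, zero_smul, smul_zero, add_zero, zero_add, smul_smul]
        all_goals module
      have midC' : m (f i + f r + f j) (e i + e r - e j) =
          ((w r i + w j i) • f i + (w i r + w j r) • f r) - (w i j + w r j) • f j := by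
        simp only [map_add, map_sub, LinearMap.add_apply, LinearMap.sub_apply, Lfe,
          Wdiag, zero_smul, add_zero, zero_add, sub_zero, zero_sub]
        all_goals module
      have rhsC' : m ((((w r i + w j i) • f i + (w i r + w j r) • f r) - (w i j + w r j) • f j))
            (e i + e r - e j) =
          (((w i r + w j r) * w r i - (w i j + w r j) * w j i) • f i +
            ((w r i + w j i) * w i r - (w i j + w r j) * w j r) • f r) -
            ((w r i + w j i) * w i j + (w i r + w j r) * w r j) • f j := by
        simp only [map_add, map_sub, map_smul, LinearMap.add_apply, LinearMap.sub_apply,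
          LinearMap.smul_apply, Lfe, Wdiag, zero_smul, smul_zero, add_zero, zero_add,
          sub_zero, zero_sub, smul_smul]
        all_goals module
      have t1 := h4 (e i + e r + e j)
      rw [sqC, midC, rhsC, lhsC] at t1
      have t2 := h4 (e i + e r - e j)
      rw [sqC', midC', rhsC', lhsC] at t2
      have hadd := congrArg₂ (fun u v : A => u + v) t1 t2
      simp only [add_zero] at hadd
      have h2' : (2 : F) • ((w j r * w r i) • f i + (w j i * w i r) • f r) = 0 := by
        calc (2 : F) • ((w j r * w r i) • f i + (w j i * w i r) • f r)
            = ((((w i r + w j r) * w r i + (w i j + w r j) * w j i) • f i +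
                ((w r i + w j i) * w i r + (w i j + w r j) * w j r) • f r) +
                ((w r i + w j i) * w i j + (w i r + w j r) * w r j) • f j) +
              ((((w i r + w j r) * w r i - (w i j + w r j) * w j i) • f i +
                ((w r i + w j i) * w i r - (w i j + w r j) * w j r) • f r) -
                ((w r i + w j i) * w i j + (w i r + w j r) * w r j) • f j) := by
              match_scalars
              · linear_combination (-2 : F) * czero i r
              · linear_combination (-2 : F) * czero r i
              · ring
          _ = 0 := hadd.symm
      rcases smul_eq_zero.mp h2' with h | h
      · exact absurd h h2
      · exact h
    -- all "A²·A·A" products vanish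
    have S : ∀ a b c : Fin n, (w a b * w b c) • f c = 0 := by
      intro a b c
      by_cases hab : a = b
      · rw [hab, Wdiag, zero_mul, zero_smul]
      by_cases hbc : b = c
      · rw [hbc, Wdiag, mul_zero, zero_smul]
      by_cases hac : a = c
      · rw [hac, czero c b, zero_smul]
      by_cases hbc0 : w b c = 0
      · rw [hbc0, mul_zero, zero_smul]
      have hcb : w c b = 0 := by
        rcases mul_eq_zero.mp (czero b c) with h | h
        · exact absurd h hbc0
        · exact h
      have hk := K1 c b a (fun h => hbc (h.symm)) (fun h => hac (h.symm))
        (fun h => hab (h.symm))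
      rw [hcb, mul_zero, zero_smul, add_zero] at hk
      exact hk
    -- conclude the Jordan identity: both sides are zero
    intro x y
    have keyL : ∀ a : Fin n, m (m (f a) y) x = 0 := by
      intro a
      rw [Lmul (f a) y, map_sum, LinearMap.sum_apply]
      refine Finset.sum_eq_zero fun b _ => ?_
      rw [map_smul, LinearMap.smul_apply, Lmul (f b) x, Finset.smul_sum]
      refine Finset.sum_eq_zero fun c _ => ?_
      rw [smul_smul]
      have hs : (e.repr (f a) b * e.repr y b) * (e.repr (f b) c * e.repr x c) =
          (e.repr y b * e.repr x c) * (w a b * w b c) := by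
        rw [hwdef, hwdef]; ring
      rw [hs, ← smul_smul, S a b c, smul_zero]
    have keyR : ∀ a : Fin n, m (f a) (m y x) = 0 := by
      intro a
      rw [Lmul y x, map_sum]
      simp only [map_smul, Fzero, smul_zero, Finset.sum_const_zero]
    have hL : m (m (m x x) y) x = 0 := by
      rw [Lmul x x]
      simp only [map_sum, LinearMap.sum_apply, map_smul, LinearMap.smul_apply, keyL,
        smul_zero, Finset.sum_const_zero]
    have hR : m (m x x) (m y x) = 0 := by
      rw [Lmul x x]
      simp only [map_sum, LinearMap.sum_apply, map_smul, LinearMap.smul_apply, keyR,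
        smul_zero, Finset.sum_const_zero]
    rw [hL, hR]
  · -- converse: Jordan implies 4PA
    intro hJ x
    exact (hJ x x).symm
end

section
/- Let A be an n-dimensional evolution algebra over a field F of characteristic ≠ 2 with natural basis e_1, …, e_n, and suppose A is fourth power-associative (x²·x² = (x²·x)·x for all x ∈ A). Then for all i ≠ j one has e_i³·e_j = 0 and (e_i²·e_j)·e_i = 0, where e_i² = e_i·e_i and e_i³ = e_i²·e_i. -/
section
variable {F : Type*} [Field F] {A : Type*} [AddCommGroup A] [Module F A]
  (m : A →ₗ[F] A →ₗ[F] A) {n : ℕ} (e : Module.Basis (Fin n) F A)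

lemma mul_e (hnat : ∀ i j : Fin n, i ≠ j → m (e i) (e j) = 0) (x : A) (k : Fin n) :
    m x (e k) = e.repr x k • m (e k) (e k) := by
  conv_lhs => rw [← e.sum_repr x]
  rw [map_sum, LinearMap.sum_apply]
  rw [Finset.sum_eq_single k]
  · simp
  · intro l _ hl
    simp [hnat l k hl]
  · simp

lemma mul_sum (hnat : ∀ i j : Fin n, i ≠ j → m (e i) (e j) = 0) (x y : A) :
    m x y = ∑ k, (e.repr x k * e.repr y k) • m (e k) (e k) := by
  conv_lhs => rw [← e.sum_repr y]
  rw [map_sum]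
  refine Finset.sum_congr rfl fun k _ => ?_
  rw [map_smul, mul_e m e hnat x k, smul_smul, mul_comm]

lemma mul_e2 (hnat : ∀ i j : Fin n, i ≠ j → m (e i) (e j) = 0) (x : A) (c : F) (k l : Fin n) :
    m x (e k + c • e l) = e.repr x k • m (e k) (e k) + (c * e.repr x l) • m (e l) (e l) := by
  rw [map_add, map_smul, mul_e m e hnat x k, mul_e m e hnat x l, smul_smul]

lemma Ei (hnat : ∀ i j : Fin n, i ≠ j → m (e i) (e j) = 0)
    (hpa4 : ∀ x : A, m (m x x) (m x x) = m (m (m x x) x) x) (i : Fin n) :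
    m (m (e i) (e i)) (m (e i) (e i))
      = (e.repr (m (e i) (e i)) i * e.repr (m (e i) (e i)) i) • m (e i) (e i) := by
  have h := hpa4 (e i)
  rw [mul_e m e hnat (m (e i) (e i)) i, map_smul, LinearMap.smul_apply,
    mul_e m e hnat (m (e i) (e i)) i, smul_smul] at h
  exact h

lemma star (h2 : (2:F) ≠ 0) (hnat : ∀ i j : Fin n, i ≠ j → m (e i) (e j) = 0)
    (hpa4 : ∀ x : A, m (m x x) (m x x) = m (m (m x x) x) x) {i j : Fin n} (hij : i ≠ j) :
    ((e.repr (m (e i) (e i)) i + e.repr (m (e j) (e j)) i) * e.repr (m (e i) (e i)) j)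
        • m (e j) (e j)
      + ((e.repr (m (e i) (e i)) j + e.repr (m (e j) (e j)) j) * e.repr (m (e j) (e j)) i)
        • m (e i) (e i) = 0 := by
  set u := m (e i) (e i) with hu
  set v := m (e j) (e j) with hv
  set p := e.repr u i with hp
  set q := e.repr u j with hq
  set r := e.repr v i with hr
  set t := e.repr v j with ht
  have key : ∀ c : F, c * c = 1 → m (u + v) (u + v) =
      (((p+r)*p) • u + ((q+t)*t) • v) + c • (((p+r)*q) • v + ((q+t)*r) • u) := by
    intro c hc
    have hx : m (e i + c • e j) (e i + c • e j) = u + v := by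
      simp only [map_add, map_smul, LinearMap.add_apply, LinearMap.smul_apply,
        hnat i j hij, hnat j i hij.symm, smul_zero, add_zero, zero_add, smul_smul, hc, one_smul,
        hu, hv]
    have h4 := hpa4 (e i + c • e j)
    rw [hx] at h4
    have hri : e.repr (u + v) i = p + r := by
      rw [map_add, Finsupp.add_apply, ← hp, ← hr]
    have hrj : e.repr (u + v) j = q + t := by
      rw [map_add, Finsupp.add_apply, ← hq, ← ht]
    have inner : m (u + v) (e i + c • e j) = (p+r) • u + (c*(q+t)) • v := by
      rw [mul_e2 m e hnat (u+v) c i j, hri, hrj, ← hu, ← hv]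
    have h5 : e.repr ((p+r) • u + (c*(q+t)) • v) i = (p+r)*p + c*((q+t)*r) := by
      rw [map_add, Finsupp.add_apply, map_smul, map_smul, Finsupp.smul_apply,
        Finsupp.smul_apply, ← hp, ← hr, smul_eq_mul, smul_eq_mul]
      ring
    have h6 : e.repr ((p+r) • u + (c*(q+t)) • v) j = (p+r)*q + c*((q+t)*t) := by
      rw [map_add, Finsupp.add_apply, map_smul, map_smul, Finsupp.smul_apply,
        Finsupp.smul_apply, ← hq, ← ht, smul_eq_mul, smul_eq_mul]
      ring
    have outer : m ((p+r) • u + (c*(q+t)) • v) (e i + c • e j)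
        = (((p+r)*p) • u + ((q+t)*t) • v) + c • (((p+r)*q) • v + ((q+t)*r) • u) := by
      rw [mul_e2 m e hnat _ c i j, h5, h6, ← hu, ← hv]
      match_scalars
      · ring
      · linear_combination ((q+t)*t) * hc
    rw [h4, inner, outer]
  have k1 := key 1 (by ring)
  have k2 := key (-1) (by ring)
  rw [k1, one_smul, neg_one_smul] at k2
  have h3 := add_left_cancel k2
  rw [eq_neg_iff_add_eq_zero] at h3
  have h4 : (2:F) • (((p+r)*q) • v + ((q+t)*r) • u) = 0 := by
    rw [two_smul]; exact h3
  rcases smul_eq_zero.mp h4 with h | h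
  · exact absurd h h2
  · exact h

lemma mul_e3 (hnat : ∀ i j : Fin n, i ≠ j → m (e i) (e j) = 0) (x : A) (c d : F) (i j k : Fin n) :
    m x (e i + c • e j + d • e k) = e.repr x i • m (e i) (e i)
      + (c * e.repr x j) • m (e j) (e j) + (d * e.repr x k) • m (e k) (e k) := by
  rw [map_add, map_add, map_smul, map_smul, mul_e m e hnat x i, mul_e m e hnat x j,
    mul_e m e hnat x k, smul_smul, smul_smul]

lemma Tlem (h2 : (2:F) ≠ 0) (hnat : ∀ i j : Fin n, i ≠ j → m (e i) (e j) = 0)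
    (hpa4 : ∀ x : A, m (m x x) (m x x) = m (m (m x x) x) x) {i j k : Fin n}
    (hij : i ≠ j) (hik : i ≠ k) (hjk : j ≠ k) :
    (e.repr (m (e i) (e i)) j * e.repr (m (e j) (e j)) k) • m (e k) (e k)
      + (e.repr (m (e i) (e i)) k * e.repr (m (e k) (e k)) j) • m (e j) (e j) = 0 := by
  set u := m (e i) (e i) with hu
  set v := m (e j) (e j) with hv
  set w := m (e k) (e k) with hw
  set Ci := e.repr u i + e.repr v i + e.repr w i with hCi
  set Cj := e.repr u j + e.repr v j + e.repr w j with hCj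
  set Ck := e.repr u k + e.repr v k + e.repr w k with hCk
  have key : ∀ c d : F, c * c = 1 → d * d = 1 → m (u + v + w) (u + v + w) =
      ((Ci * e.repr u i) • u + (Cj * e.repr v j) • v + (Ck * e.repr w k) • w)
      + c • ((Ci * e.repr u j) • v + (Cj * e.repr v i) • u)
      + d • ((Ci * e.repr u k) • w + (Ck * e.repr w i) • u)
      + (c * d) • ((Cj * e.repr v k) • w + (Ck * e.repr w j) • v) := by
    intro c d hc hd
    have hx : m (e i + c • e j + d • e k) (e i + c • e j + d • e k) = u + v + w := by
      simp only [map_add, map_smul, LinearMap.add_apply, LinearMap.smul_apply,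
        hnat i j hij, hnat j i hij.symm, hnat i k hik, hnat k i hik.symm,
        hnat j k hjk, hnat k j hjk.symm, smul_zero, add_zero, zero_add,
        smul_smul, hc, hd, one_smul, hu, hv, hw]
    have h4 := hpa4 (e i + c • e j + d • e k)
    rw [hx] at h4
    have hri : e.repr (u + v + w) i = Ci := by
      rw [map_add, map_add, Finsupp.add_apply, Finsupp.add_apply, hCi]
    have hrj : e.repr (u + v + w) j = Cj := by
      rw [map_add, map_add, Finsupp.add_apply, Finsupp.add_apply, hCj]
    have hrk : e.repr (u + v + w) k = Ck := by
      rw [map_add, map_add, Finsupp.add_apply, Finsupp.add_apply, hCk]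
    have inner : m (u + v + w) (e i + c • e j + d • e k)
        = Ci • u + (c * Cj) • v + (d * Ck) • w := by
      rw [mul_e3 m e hnat (u+v+w) c d i j k, hri, hrj, hrk, ← hu, ← hv, ← hw]
    set X := Ci • u + (c * Cj) • v + (d * Ck) • w with hX
    have h5 : ∀ l : Fin n, e.repr X l
        = Ci * e.repr u l + (c * Cj) * e.repr v l + (d * Ck) * e.repr w l := by
      intro l
      rw [hX, map_add, map_add, Finsupp.add_apply, Finsupp.add_apply,
        map_smul, map_smul, map_smul, Finsupp.smul_apply, Finsupp.smul_apply,
        Finsupp.smul_apply, smul_eq_mul, smul_eq_mul, smul_eq_mul]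
    have outer : m X (e i + c • e j + d • e k)
        = ((Ci * e.repr u i) • u + (Cj * e.repr v j) • v + (Ck * e.repr w k) • w)
      + c • ((Ci * e.repr u j) • v + (Cj * e.repr v i) • u)
      + d • ((Ci * e.repr u k) • w + (Ck * e.repr w i) • u)
      + (c * d) • ((Cj * e.repr v k) • w + (Ck * e.repr w j) • v) := by
      rw [mul_e3 m e hnat X c d i j k, h5 i, h5 j, h5 k, ← hu, ← hv, ← hw]
      match_scalars
      · ring
      · linear_combination (Cj * (e.repr v) j) * hc
      · linear_combination (Ck * (e.repr w) k) * hd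
    rw [h4, inner, outer]
  have k11 := key 1 1 (by ring) (by ring)
  have k1m := key 1 (-1) (by ring) (by ring)
  have km1 := key (-1) 1 (by ring) (by ring)
  have kmm := key (-1) (-1) (by ring) (by ring)
  have hG3 : (4:F) • ((Cj * e.repr v k) • w + (Ck * e.repr w j) • v) = 0 := by
    linear_combination (norm := module) k1m + km1 - k11 - kmm
  have h4ne : (4:F) ≠ 0 := by
    have h4eq : (4:F) = 2 * 2 := by norm_num
    rw [h4eq]
    exact mul_ne_zero h2 h2
  have hG3' : (Cj * e.repr v k) • w + (Ck * e.repr w j) • v = 0 :=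
    (smul_eq_zero.mp hG3).resolve_left h4ne
  have hstar := star m e h2 hnat hpa4 hjk
  rw [← hv, ← hw] at hstar
  have expand : (e.repr u j * e.repr v k) • w + (e.repr u k * e.repr w j) • v
      = ((Cj * e.repr v k) • w + (Ck * e.repr w j) • v)
        - (((e.repr v j + e.repr w j) * e.repr v k) • w
            + ((e.repr v k + e.repr w k) * e.repr w j) • v) := by
    rw [hCj, hCk]
    module
  rw [expand, hG3', hstar, sub_zero]

lemma claim1 (h2 : (2:F) ≠ 0) (hnat : ∀ i j : Fin n, i ≠ j → m (e i) (e j) = 0)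
    (hpa4 : ∀ x : A, m (m x x) (m x x) = m (m (m x x) x) x) {i j : Fin n} (hij : i ≠ j) :
    e.repr (m (e i) (e i)) j * e.repr (m (e j) (e j)) i = 0 := by
  by_contra h0
  have hq : e.repr (m (e i) (e i)) j ≠ 0 := fun h => h0 (by rw [h, zero_mul])
  have hr : e.repr (m (e j) (e j)) i ≠ 0 := fun h => h0 (by rw [h, mul_zero])
  have hmem : ∀ k ∈ ((Finset.univ.erase i).erase j), k ≠ j ∧ k ≠ i := by
    intro k hk
    simp only [Finset.mem_erase, Finset.mem_univ, and_true] at hk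
    exact hk
  have hsplit : ∀ f : Fin n → A, (∑ k, f k) = f i + f j + ∑ k ∈ ((Finset.univ.erase i).erase j), f k := by
    intro f
    rw [← Finset.sum_erase_add Finset.univ f (Finset.mem_univ i),
        ← Finset.sum_erase_add (Finset.univ.erase i) f
          (Finset.mem_erase.mpr ⟨hij.symm, Finset.mem_univ j⟩)]
    abel
  have hcoord : ∀ (c1 c2 : F) (x y : A) (l : Fin n), c1 • x + c2 • y = 0 →
      c1 * e.repr x l + c2 * e.repr y l = 0 := by
    intro c1 c2 x y l h
    have h' := congrArg (fun z => e.repr z l) h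
    simpa using h'
  have hcoord2 : ∀ (c1 c2 : F) (x y : A) (l : Fin n), c1 • x = c2 • y →
      c1 * e.repr x l = c2 * e.repr y l := by
    intro c1 c2 x y l h
    have h' := congrArg (fun z => e.repr z l) h
    simpa using h'
  -- the sum-splitting of E_i
  have hEi' : (e.repr (m (e i) (e i)) j * e.repr (m (e i) (e i)) j) • (m (e j) (e j))
      + ∑ k ∈ ((Finset.univ.erase i).erase j), (e.repr (m (e i) (e i)) k * e.repr (m (e i) (e i)) k) • (m (e k) (e k)) = 0 := by
    have h1 := mul_sum m e hnat (m (e i) (e i)) (m (e i) (e i))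
    rw [Ei m e hnat hpa4 i] at h1
    have hs1 : (∑ k, (e.repr (m (e i) (e i)) k * e.repr (m (e i) (e i)) k) • (m (e k) (e k)))
        = (e.repr (m (e i) (e i)) i * e.repr (m (e i) (e i)) i) • (m (e i) (e i)) + (e.repr (m (e i) (e i)) j * e.repr (m (e i) (e i)) j) • (m (e j) (e j))
          + ∑ k ∈ ((Finset.univ.erase i).erase j), (e.repr (m (e i) (e i)) k * e.repr (m (e i) (e i)) k) • (m (e k) (e k)) :=
      hsplit _
    rw [hs1] at h1
    linear_combination (norm := module) -h1
  have hEj' : (e.repr (m (e j) (e j)) i * e.repr (m (e j) (e j)) i) • (m (e i) (e i))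
      + ∑ k ∈ ((Finset.univ.erase i).erase j), (e.repr (m (e j) (e j)) k * e.repr (m (e j) (e j)) k) • (m (e k) (e k)) = 0 := by
    have h1 := mul_sum m e hnat (m (e j) (e j)) (m (e j) (e j))
    rw [Ei m e hnat hpa4 j] at h1
    have hs1 : (∑ k, (e.repr (m (e j) (e j)) k * e.repr (m (e j) (e j)) k) • (m (e k) (e k)))
        = (e.repr (m (e j) (e j)) i * e.repr (m (e j) (e j)) i) • (m (e i) (e i)) + (e.repr (m (e j) (e j)) j * e.repr (m (e j) (e j)) j) • (m (e j) (e j))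
          + ∑ k ∈ ((Finset.univ.erase i).erase j), (e.repr (m (e j) (e j)) k * e.repr (m (e j) (e j)) k) • (m (e k) (e k)) :=
      hsplit _
    rw [hs1] at h1
    linear_combination (norm := module) -h1
  -- step A
  have hkA : ∀ k ∈ ((Finset.univ.erase i).erase j), (e.repr (m (e j) (e j)) i * (e.repr (m (e i) (e i)) k * e.repr (m (e i) (e i)) k)) • (m (e k) (e k))
      = -((e.repr (m (e i) (e i)) k * e.repr (m (e j) (e j)) k * e.repr (m (e k) (e k)) i) • (m (e i) (e i))) := by
    intro k hk
    obtain ⟨hkj, hki⟩ := hmem k hk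
    have hT := Tlem m e h2 hnat hpa4 hij.symm hkj.symm hki.symm
    have h' := congrArg (fun z => (e.repr (m (e i) (e i)) k) • z) hT
    simp only [smul_add, smul_smul, smul_zero] at h'
    linear_combination (norm := module) h'
  have hA : (e.repr (m (e j) (e j)) i * (e.repr (m (e i) (e i)) j * e.repr (m (e i) (e i)) j)) • (m (e j) (e j)) = (∑ k ∈ ((Finset.univ.erase i).erase j), e.repr (m (e i) (e i)) k * e.repr (m (e j) (e j)) k * e.repr (m (e k) (e k)) i) • (m (e i) (e i)) := by
    have h1 := congrArg (fun z => e.repr (m (e j) (e j)) i • z) hEi'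
    simp only [smul_add, smul_zero, Finset.smul_sum, smul_smul] at h1
    rw [Finset.sum_congr rfl hkA] at h1
    rw [Finset.sum_neg_distrib, ← Finset.sum_smul] at h1
    linear_combination (norm := module) h1
  -- step B
  have hkB : ∀ k ∈ ((Finset.univ.erase i).erase j), (e.repr (m (e i) (e i)) j * (e.repr (m (e j) (e j)) k * e.repr (m (e j) (e j)) k)) • (m (e k) (e k))
      = -((e.repr (m (e i) (e i)) k * e.repr (m (e j) (e j)) k * e.repr (m (e k) (e k)) j) • (m (e j) (e j))) := by
    intro k hk
    obtain ⟨hkj, hki⟩ := hmem k hk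
    have hT := Tlem m e h2 hnat hpa4 hij hki.symm hkj.symm
    have h' := congrArg (fun z => (e.repr (m (e j) (e j)) k) • z) hT
    simp only [smul_add, smul_smul, smul_zero] at h'
    linear_combination (norm := module) h'
  have hB : (e.repr (m (e i) (e i)) j * (e.repr (m (e j) (e j)) i * e.repr (m (e j) (e j)) i)) • (m (e i) (e i)) = (∑ k ∈ ((Finset.univ.erase i).erase j), e.repr (m (e i) (e i)) k * e.repr (m (e j) (e j)) k * e.repr (m (e k) (e k)) j) • (m (e j) (e j)) := by
    have h1 := congrArg (fun z => e.repr (m (e i) (e i)) j • z) hEj'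
    simp only [smul_add, smul_zero, Finset.smul_sum, smul_smul] at h1
    rw [Finset.sum_congr rfl hkB] at h1
    rw [Finset.sum_neg_distrib, ← Finset.sum_smul] at h1
    linear_combination (norm := module) h1
  -- step D
  have hD : (e.repr (m (e i) (e i)) j * (∑ k ∈ ((Finset.univ.erase i).erase j), e.repr (m (e i) (e i)) k * e.repr (m (e j) (e j)) k * e.repr (m (e k) (e k)) i)) • (m (e j) (e j)) + (e.repr (m (e j) (e j)) i * (∑ k ∈ ((Finset.univ.erase i).erase j), e.repr (m (e i) (e i)) k * e.repr (m (e j) (e j)) k * e.repr (m (e k) (e k)) j)) • (m (e i) (e i)) = 0 := by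
    have hterm : ∀ k ∈ ((Finset.univ.erase i).erase j),
        (e.repr (m (e i) (e i)) j * (e.repr (m (e i) (e i)) k * e.repr (m (e j) (e j)) k * e.repr (m (e k) (e k)) i)) • (m (e j) (e j))
        + (e.repr (m (e j) (e j)) i * (e.repr (m (e i) (e i)) k * e.repr (m (e j) (e j)) k * e.repr (m (e k) (e k)) j)) • (m (e i) (e i)) = 0 := by
      intro k hk
      obtain ⟨hkj, hki⟩ := hmem k hk
      have hT := Tlem m e h2 hnat hpa4 hki hkj hij
      have h' := congrArg (fun z => (e.repr (m (e i) (e i)) k * e.repr (m (e j) (e j)) k) • z) hT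
      simp only [smul_add, smul_smul, smul_zero] at h'
      linear_combination (norm := module) h'
    calc (e.repr (m (e i) (e i)) j * (∑ k ∈ ((Finset.univ.erase i).erase j), e.repr (m (e i) (e i)) k * e.repr (m (e j) (e j)) k * e.repr (m (e k) (e k)) i)) • (m (e j) (e j)) + (e.repr (m (e j) (e j)) i * (∑ k ∈ ((Finset.univ.erase i).erase j), e.repr (m (e i) (e i)) k * e.repr (m (e j) (e j)) k * e.repr (m (e k) (e k)) j)) • (m (e i) (e i))
        = ∑ k ∈ ((Finset.univ.erase i).erase j),
            ((e.repr (m (e i) (e i)) j * (e.repr (m (e i) (e i)) k * e.repr (m (e j) (e j)) k * e.repr (m (e k) (e k)) i)) • (m (e j) (e j))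
            + (e.repr (m (e j) (e j)) i * (e.repr (m (e i) (e i)) k * e.repr (m (e j) (e j)) k * e.repr (m (e k) (e k)) j)) • (m (e i) (e i))) := by
          rw [Finset.sum_add_distrib, ← Finset.sum_smul, ← Finset.sum_smul,
            ← Finset.mul_sum, ← Finset.mul_sum]
      _ = 0 := Finset.sum_eq_zero hterm
  -- the star relation
  have hstar := star m e h2 hnat hpa4 hij
  -- coordinates
  have hAi := hcoord2 _ _ _ _ i hA
  have hAj := hcoord2 _ _ _ _ j hA
  have hBj := hcoord2 _ _ _ _ j hB
  have hDi := hcoord _ _ _ _ i hD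
  have hDj := hcoord _ _ _ _ j hD
  have hSi := hcoord _ _ _ _ i hstar
  -- scalar endgame
  have hlam : (∑ k ∈ ((Finset.univ.erase i).erase j), e.repr (m (e i) (e i)) k * e.repr (m (e j) (e j)) k * e.repr (m (e k) (e k)) i) = e.repr (m (e i) (e i)) j * e.repr (m (e j) (e j)) i * e.repr (m (e j) (e j)) j := by
    apply mul_left_cancel₀ hq
    linear_combination -hAj
  have hpt : e.repr (m (e i) (e i)) j * e.repr (m (e j) (e j)) i = e.repr (m (e i) (e i)) i * e.repr (m (e j) (e j)) j := by
    apply mul_left_cancel₀ (mul_ne_zero hq hr)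
    linear_combination hAi + (e.repr (m (e i) (e i)) i) * hlam
  have hptne : e.repr (m (e i) (e i)) i * e.repr (m (e j) (e j)) j ≠ 0 := by rw [← hpt]; exact mul_ne_zero hq hr
  have hp : e.repr (m (e i) (e i)) i ≠ 0 := fun h => hptne (by rw [h, zero_mul])
  have ht : e.repr (m (e j) (e j)) j ≠ 0 := fun h => hptne (by rw [h, mul_zero])
  have hmu : (∑ k ∈ ((Finset.univ.erase i).erase j), e.repr (m (e i) (e i)) k * e.repr (m (e j) (e j)) k * e.repr (m (e k) (e k)) j) = e.repr (m (e i) (e i)) i * e.repr (m (e i) (e i)) j * e.repr (m (e j) (e j)) i := by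
    apply mul_right_cancel₀ ht
    linear_combination -hBj + e.repr (m (e i) (e i)) j * e.repr (m (e j) (e j)) i * hpt
  have h5 : e.repr (m (e i) (e i)) j * e.repr (m (e j) (e j)) j + e.repr (m (e i) (e i)) i * e.repr (m (e i) (e i)) i = 0 := by
    have h5' : (e.repr (m (e i) (e i)) j * (e.repr (m (e j) (e j)) i * e.repr (m (e j) (e j)) i)) * (e.repr (m (e i) (e i)) j * e.repr (m (e j) (e j)) j + e.repr (m (e i) (e i)) i * e.repr (m (e i) (e i)) i) = 0 := by
      linear_combination hDi - e.repr (m (e i) (e i)) j * e.repr (m (e j) (e j)) i * hlam - e.repr (m (e j) (e j)) i * e.repr (m (e i) (e i)) i * hmu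
    exact (mul_eq_zero.mp h5').resolve_left (mul_ne_zero hq (mul_ne_zero hr hr))
  have h6 : e.repr (m (e j) (e j)) j * e.repr (m (e j) (e j)) j + e.repr (m (e i) (e i)) i * e.repr (m (e j) (e j)) i = 0 := by
    have h6' : (e.repr (m (e i) (e i)) j * (e.repr (m (e i) (e i)) j * e.repr (m (e j) (e j)) i)) * (e.repr (m (e j) (e j)) j * e.repr (m (e j) (e j)) j + e.repr (m (e i) (e i)) i * e.repr (m (e j) (e j)) i) = 0 := by
      linear_combination hDj - e.repr (m (e i) (e i)) j * e.repr (m (e j) (e j)) j * hlam - e.repr (m (e j) (e j)) i * e.repr (m (e i) (e i)) j * hmu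
    exact (mul_eq_zero.mp h6').resolve_left (mul_ne_zero hq (mul_ne_zero hq hr))
  have h7 : e.repr (m (e i) (e i)) j + e.repr (m (e j) (e j)) j = 0 := by
    have h7' : ((2:F) * (e.repr (m (e j) (e j)) i * e.repr (m (e i) (e i)) i)) * (e.repr (m (e i) (e i)) j + e.repr (m (e j) (e j)) j) = 0 := by
      linear_combination hSi - e.repr (m (e j) (e j)) i * hpt
    exact (mul_eq_zero.mp h7').resolve_left (mul_ne_zero h2 (mul_ne_zero hr hp))
  have hq2 : e.repr (m (e i) (e i)) j * e.repr (m (e i) (e i)) j = e.repr (m (e i) (e i)) i * e.repr (m (e i) (e i)) i := by linear_combination e.repr (m (e i) (e i)) j * h7 - h5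
  have ht2 : e.repr (m (e j) (e j)) j * e.repr (m (e j) (e j)) j = e.repr (m (e i) (e i)) i * e.repr (m (e i) (e i)) i := by linear_combination e.repr (m (e j) (e j)) j * h7 - h5
  have hpr0 : e.repr (m (e i) (e i)) i + e.repr (m (e j) (e j)) i = 0 := by
    have h8 : e.repr (m (e i) (e i)) i * (e.repr (m (e i) (e i)) i + e.repr (m (e j) (e j)) i) = 0 := by linear_combination h6 - ht2
    exact (mul_eq_zero.mp h8).resolve_left hp
  have e1 : e.repr (m (e j) (e j)) i * (e.repr (m (e i) (e i)) j * e.repr (m (e i) (e i)) j) = -(e.repr (m (e i) (e i)) i * (e.repr (m (e i) (e i)) i * e.repr (m (e i) (e i)) i)) := by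
    linear_combination e.repr (m (e j) (e j)) i * hq2 + e.repr (m (e i) (e i)) i * e.repr (m (e i) (e i)) i * hpr0
  have e2 : (∑ k ∈ ((Finset.univ.erase i).erase j), e.repr (m (e i) (e i)) k * e.repr (m (e j) (e j)) k * e.repr (m (e k) (e k)) i) = e.repr (m (e i) (e i)) i * (e.repr (m (e i) (e i)) i * e.repr (m (e i) (e i)) i) := by
    linear_combination hlam + e.repr (m (e j) (e j)) i * e.repr (m (e j) (e j)) j * h7 - e.repr (m (e j) (e j)) i * ht2 - e.repr (m (e i) (e i)) i * e.repr (m (e i) (e i)) i * hpr0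
  rw [e1, e2] at hA
  have h10 : (e.repr (m (e i) (e i)) i * (e.repr (m (e i) (e i)) i * e.repr (m (e i) (e i)) i)) • ((m (e i) (e i)) + (m (e j) (e j))) = 0 := by
    rw [smul_add, ← hA]
    module
  have hppp : (e.repr (m (e i) (e i)) i * (e.repr (m (e i) (e i)) i * e.repr (m (e i) (e i)) i)) ≠ 0 := mul_ne_zero hp (mul_ne_zero hp hp)
  have huv : (m (e i) (e i)) + (m (e j) (e j)) = 0 := (smul_eq_zero.mp h10).resolve_left hppp
  have hVU : (m (e j) (e j)) = -(m (e i) (e i)) := by linear_combination (norm := module) huv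
  have hEiL := Ei m e hnat hpa4 i
  have hEjL := Ei m e hnat hpa4 j
  have hMVV : m (m (e j) (e j)) (m (e j) (e j)) = m (m (e i) (e i)) (m (e i) (e i)) := by
    simp only [hVU, map_neg, LinearMap.neg_apply, neg_neg]
  have hfin0 : ((e.repr (m (e i) (e i)) i * e.repr (m (e i) (e i)) i) + (e.repr (m (e j) (e j)) j * e.repr (m (e j) (e j)) j)) • (m (e i) (e i)) = 0 := by
    have h9 : (e.repr (m (e j) (e j)) j * e.repr (m (e j) (e j)) j) • (m (e j) (e j)) = (e.repr (m (e i) (e i)) i * e.repr (m (e i) (e i)) i) • (m (e i) (e i)) := by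
      calc (e.repr (m (e j) (e j)) j * e.repr (m (e j) (e j)) j) • (m (e j) (e j)) = m (m (e j) (e j)) (m (e j) (e j)) := hEjL.symm
        _ = m (m (e i) (e i)) (m (e i) (e i)) := hMVV
        _ = (e.repr (m (e i) (e i)) i * e.repr (m (e i) (e i)) i) • (m (e i) (e i)) := hEiL
    rw [add_smul, ← h9, ← smul_add, add_comm, huv, smul_zero]
  have hfin : ((2:F) * (e.repr (m (e i) (e i)) i * e.repr (m (e i) (e i)) i)) • (m (e i) (e i)) = 0 := by
    have e3 : (2:F) * (e.repr (m (e i) (e i)) i * e.repr (m (e i) (e i)) i) = (e.repr (m (e i) (e i)) i * e.repr (m (e i) (e i)) i) + (e.repr (m (e j) (e j)) j * e.repr (m (e j) (e j)) j) := by linear_combination -ht2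
    rw [e3]
    exact hfin0
  have hU0 : (m (e i) (e i)) = 0 := (smul_eq_zero.mp hfin).resolve_left
    (mul_ne_zero h2 (mul_ne_zero hp hp))
  apply hq
  rw [hU0, map_zero]
  rfl

end

/-- in a fourth power-associative evolution algebra over a field of
characteristic ≠ 2, one has `eᵢ³·eⱼ = 0` and `(eᵢ²·eⱼ)·eᵢ = 0` for all `i ≠ j`. -/
theorem fourth_pa_evolution_algebra_basis_relations
    (F : Type*) [Field F] (h2 : (2 : F) ≠ 0)
    (A : Type*) [AddCommGroup A] [Module F A]
    (m : A →ₗ[F] A →ₗ[F] A) (hcomm : ∀ x y : A, m x y = m y x)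
    (n : ℕ) (e : Module.Basis (Fin n) F A)
    (hnat : ∀ i j : Fin n, i ≠ j → m (e i) (e j) = 0)
    (hpa4 : ∀ x : A, m (m x x) (m x x) = m (m (m x x) x) x) :
    ∀ i j : Fin n, i ≠ j →
      m (m (m (e i) (e i)) (e i)) (e j) = 0 ∧
      m (m (m (e i) (e i)) (e j)) (e i) = 0 := by
  intro i j hij
  have hqr := claim1 m e h2 hnat hpa4 hij
  constructor
  · rw [mul_e m e hnat (m (e i) (e i)) i, map_smul, LinearMap.smul_apply,
      mul_e m e hnat (m (e i) (e i)) j]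
    by_cases hq : e.repr (m (e i) (e i)) j = 0
    · rw [hq, zero_smul, smul_zero]
    · have hr0 : e.repr (m (e j) (e j)) i = 0 :=
        (mul_eq_zero.mp hqr).resolve_left hq
      have hstar := star m e h2 hnat hpa4 hij
      rw [hr0] at hstar
      simp only [mul_zero, zero_smul, add_zero, zero_mul] at hstar
      rw [smul_smul]
      convert hstar using 2
  · rw [mul_e m e hnat (m (e i) (e i)) j, map_smul, LinearMap.smul_apply,
      mul_e m e hnat (m (e j) (e j)) i, smul_smul, hqr, zero_smul]
end

section
/- Let A be an n-dimensional evolution algebra over a field F of characteristic ≠ 2 with natural basis e_1, …, e_n, fourth power-associative (x²·x² = (x²·x)·x for all x) and not nil. Then there is an index i₀ with e_{i₀}³ ≠ 0; writing e_{i₀}² = Σ_k a_{i₀k} e_k, one has a_{i₀i₀} ≠ 0, the element e = a_{i₀i₀}^{-2}·e_{i₀}² is a nonzero idempotent (e·e = e), e·e_j = 0 for all j ≠ i₀, and the family obtained from (e_1, …, e_n) by replacing e_{i₀} with e is again a natural basis of A. -/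
section Aux

variable {F : Type*} [Field F] {A : Type*} [AddCommGroup A] [Module F A]

lemma mul_basis (m : A →ₗ[F] A →ₗ[F] A) {n : ℕ} (e : Module.Basis (Fin n) F A)
    (hnat : ∀ i j : Fin n, i ≠ j → m (e i) (e j) = 0) (w : A) (j : Fin n) :
    m w (e j) = e.repr w j • m (e j) (e j) := by
  conv_lhs => rw [← e.sum_repr w]
  rw [map_sum, LinearMap.sum_apply, Finset.sum_eq_single j]
  · rw [map_smul, LinearMap.smul_apply]
  · intro k _ hk
    rw [map_smul, LinearMap.smul_apply, hnat k j hk, smul_zero]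
  · intro h; exact absurd (Finset.mem_univ j) h

lemma square_expand (m : A →ₗ[F] A →ₗ[F] A) {n : ℕ} (e : Module.Basis (Fin n) F A)
    (hnat : ∀ i j : Fin n, i ≠ j → m (e i) (e j) = 0) (w : A) :
    m w w = ∑ k : Fin n, e.repr w k • (e.repr w k • m (e k) (e k)) := by
  calc m w w = (m w) (∑ k : Fin n, e.repr w k • e k) := by rw [e.sum_repr]
    _ = ∑ k : Fin n, e.repr w k • (m w (e k)) := by
        rw [map_sum]; simp only [map_smul]
    _ = ∑ k : Fin n, e.repr w k • (e.repr w k • m (e k) (e k)) := by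
        refine Finset.sum_congr rfl fun k _ => ?_
        rw [mul_basis m e hnat w k]

lemma nil_of_diag_zero (m : A →ₗ[F] A →ₗ[F] A) (hcomm : ∀ x y : A, m x y = m y x)
    {n : ℕ} (e : Module.Basis (Fin n) F A)
    (hnat : ∀ i j : Fin n, i ≠ j → m (e i) (e j) = 0)
    (hpa4 : ∀ x : A, m (m x x) (m x x) = m (m (m x x) x) x)
    (h2 : (2 : F) ≠ 0)
    (H0 : ∀ i : Fin n, e.repr (m (e i) (e i)) i = 0) (a : A) :
    ppow m a 3 = 0 := by
  have huu : ∀ i : Fin n, m (m (e i) (e i)) (m (e i) (e i)) = 0 := by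
    intro i
    have h := hpa4 (e i)
    rw [mul_basis m e hnat (m (e i) (e i)) i, H0 i, zero_smul, map_zero,
      LinearMap.zero_apply] at h
    exact h
  have huv : ∀ i j : Fin n, i ≠ j →
      m (m (e i) (e i)) (m (e j) (e j)) = 0 := by
    intro i j hij
    set u := m (e i) (e i) with hu
    set v := m (e j) (e j) with hv
    have hb : ∀ (w : A), m w (e i) = e.repr w i • u := fun w => mul_basis m e hnat w i
    have hb' : ∀ (w : A), m w (e j) = e.repr w j • v := fun w => mul_basis m e hnat w j
    have hxx : m (e i + e j) (e i + e j) = u + v := by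
      simp only [map_add, LinearMap.add_apply, hnat i j hij, hnat j i (Ne.symm hij),
        add_zero, zero_add]
      rfl
    have hxx' : m (e i - e j) (e i - e j) = u + v := by
      simp only [map_sub, LinearMap.sub_apply, hnat i j hij, hnat j i (Ne.symm hij),
        sub_zero, zero_sub, sub_neg_eq_add]
      rfl
    have hri : e.repr (u + v) i = e.repr v i := by
      rw [map_add, Finsupp.add_apply, H0 i, zero_add]
    have hrj : e.repr (u + v) j = e.repr u j := by
      rw [map_add, Finsupp.add_apply, H0 j, add_zero]
    set β := e.repr u j with hβ
    set γ := e.repr v i with hγ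
    have q1 : m (u + v) (u + v) = (β * γ) • u + (β * γ) • v := by
      have h := hpa4 (e i + e j)
      rw [hxx] at h
      rw [h]
      have hz : m (u + v) (e i + e j) = γ • u + β • v := by
        rw [map_add, hb, hb', hri, hrj]
      rw [hz]
      simp only [map_add, LinearMap.add_apply, map_smul, LinearMap.smul_apply,
        hb, hb', map_smul, Finsupp.smul_apply, smul_eq_mul, H0 i, H0 j,
        mul_zero, zero_smul, smul_zero, add_zero, zero_add]
      rw [show e.repr u i = 0 from H0 i, show e.repr v j = 0 from H0 j, ← hγ, ← hβ]
      module
    have q2 : m (u + v) (u + v) = -((β * γ) • u + (β * γ) • v) := by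
      have h := hpa4 (e i - e j)
      rw [hxx'] at h
      rw [h]
      have hz : m (u + v) (e i - e j) = γ • u - β • v := by
        rw [map_sub, hb, hb', hri, hrj]
      rw [hz]
      simp only [map_sub, LinearMap.sub_apply, map_smul, LinearMap.smul_apply,
        hb, hb', map_smul, Finsupp.smul_apply, smul_eq_mul, H0 i, H0 j,
        mul_zero, zero_smul, smul_zero, sub_zero, zero_sub]
      rw [show e.repr u i = 0 from H0 i, show e.repr v j = 0 from H0 j, ← hγ, ← hβ]
      module
    have h := q1.symm.trans q2
    rw [eq_neg_iff_add_eq_zero, ← two_smul F] at h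
    have hz2 : (β * γ) • u + (β * γ) • v = 0 := (smul_eq_zero.mp h).resolve_left h2
    have hq : m (u + v) (u + v) = 0 := by rw [q1, hz2]
    have hexp : m (u + v) (u + v) = m u v + m u v := by
      simp only [map_add, LinearMap.add_apply, huu i, huu j, zero_add, add_zero]
      rw [show m u u = 0 from huu i, show m v v = 0 from huu j, zero_add, add_zero, hcomm v u]
    rw [hexp, ← two_smul F] at hq
    exact (smul_eq_zero.mp hq).resolve_left h2
  have key : m (m a a) (m a a) = 0 := by
    rw [square_expand m e hnat a]
    rw [map_sum]
    refine Finset.sum_eq_zero fun l _ => ?_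
    rw [map_smul, map_smul]
    have hz : (m (∑ k : Fin n, e.repr a k • (e.repr a k • m (e k) (e k))))
        (m (e l) (e l)) = 0 := by
      rw [map_sum, LinearMap.sum_apply]
      refine Finset.sum_eq_zero fun k _ => ?_
      rw [map_smul, map_smul, LinearMap.smul_apply, LinearMap.smul_apply]
      by_cases hkl : k = l
      · subst hkl; rw [huu k, smul_zero, smul_zero]
      · rw [huv k l hkl, smul_zero, smul_zero]
    rw [hz, smul_zero, smul_zero]
  show m (m (m a a) a) a = 0
  rw [← hpa4 a, key]

lemma F3scalar {F : Type*} [Field F] (h2 : (2 : F) ≠ 0) (h3 : (3 : F) = 0)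
    (hall : ∀ c : F, c = 0 ∨ c = 1 ∨ c = -1)
    (α β γ δ P Q R W : F) (hα : α ≠ 0) (hβ : β ≠ 0) (hγ : γ ≠ 0)
    (hP : P = 1 + 2*α - 2*γ + α*α + 2*(α*γ))
    (hQ : Q = δ*δ + 2*(β*δ))
    (hR : R = P*(α + α*α + α*γ) + Q*(γ - α*γ))
    (hW : W = P*(β*δ) + Q*(-(β*δ) - δ*δ))
    (hS1 : γ*(β+δ)*α + β*(α+γ)*γ = 0)
    (hS2 : γ*(β+δ)*β + β*(α+γ)*δ = 0)
    (hGi : (P*P*(α*α) - 2*(P*Q)*(α*γ))*α + (Q*Q*(δ*δ) - 2*(P*Q)*(β*δ))*γ =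
      (R*(α + α*α + α*γ) + W*(γ - α*γ))*α + (R*(β*δ) + W*(-(β*δ) - δ*δ))*γ) :
    False := by
  subst hW hR hQ hP
  have K1 : 2*α*β + α*δ + β*γ = 0 := by
    have hk : γ * (2*α*β + α*δ + β*γ) = 0 := by linear_combination hS1
    exact (mul_eq_zero.mp hk).resolve_left hγ
  have K2 : β*γ + 2*γ*δ + α*δ = 0 := by
    have hk : β * (β*γ + 2*γ*δ + α*δ) = 0 := by linear_combination hS2
    exact (mul_eq_zero.mp hk).resolve_left hβ
  have K3 : γ*δ - α*β = 0 := by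
    have hk : (2:F) * (γ*δ - α*β) = 0 := by linear_combination K2 - K1
    exact (mul_eq_zero.mp hk).resolve_left h2
  have K4 : (β*γ + α*β)*(α*δ + α*β) = 0 := by
    linear_combination (α*β)*K1 + (α*β)*K3
  have hgd : γ = -α ∧ δ = -β := by
    rcases mul_eq_zero.mp K4 with h | h
    · have hg : γ = -α := by
        have h5 : β*(γ + α) = 0 := by linear_combination h
        exact eq_neg_of_add_eq_zero_left ((mul_eq_zero.mp h5).resolve_left hβ)
      refine ⟨hg, ?_⟩
      have h5 : α*(δ + β) = 0 := by linear_combination (-1)*K3 + δ*hg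
      exact eq_neg_of_add_eq_zero_left ((mul_eq_zero.mp h5).resolve_left hα)
    · have hd : δ = -β := by
        have h5 : α*(δ + β) = 0 := by linear_combination h
        exact eq_neg_of_add_eq_zero_left ((mul_eq_zero.mp h5).resolve_left hα)
      refine ⟨?_, hd⟩
      have h5 : β*(γ + α) = 0 := by linear_combination (-1)*K3 + γ*hd
      exact eq_neg_of_add_eq_zero_left ((mul_eq_zero.mp h5).resolve_left hβ)
  obtain ⟨hg, hd⟩ := hgd
  subst hg hd
  rcases hall α with h | h | h
  · exact hα h
  all_goals subst h
  all_goals rcases hall β with h | h | h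
  · exact hβ h
  · subst h; exact one_ne_zero (by linear_combination hGi - (2:F)*h3)
  · subst h; exact one_ne_zero (by linear_combination hGi - (2:F)*h3)
  · exact hβ h
  · subst h; exact one_ne_zero (by linear_combination -hGi - (2:F)*h3)
  · subst h; exact one_ne_zero (by linear_combination -hGi - (2:F)*h3)

lemma key_offdiag (m : A →ₗ[F] A →ₗ[F] A) (hcomm : ∀ x y : A, m x y = m y x)
    {n : ℕ} (e : Module.Basis (Fin n) F A)
    (hnat : ∀ i j : Fin n, i ≠ j → m (e i) (e j) = 0)
    (hpa4 : ∀ x : A, m (m x x) (m x x) = m (m (m x x) x) x)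
    (h2 : (2 : F) ≠ 0) (i₀ j : Fin n) (hj : j ≠ i₀)
    (u v : A) (α β γ δ : F)
    (hu : m (e i₀) (e i₀) = u) (hv : m (e j) (e j) = v)
    (hαd : e.repr u i₀ = α) (hβd : e.repr u j = β)
    (hγd : e.repr v i₀ = γ) (hδd : e.repr v j = δ)
    (hα : α ≠ 0) : β • v = 0 := by
  have hij : i₀ ≠ j := Ne.symm hj
  have hui : m u (e i₀) = α • u := by rw [mul_basis m e hnat u i₀, hαd, hu]
  have huj : m u (e j) = β • v := by rw [mul_basis m e hnat u j, hβd, hv]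
  have hvi : m v (e i₀) = γ • u := by rw [mul_basis m e hnat v i₀, hγd, hu]
  have hvj : m v (e j) = δ • v := by rw [mul_basis m e hnat v j, hδd, hv]
  have hiu : m (e i₀) u = α • u := by rw [hcomm, hui]
  have hju : m (e j) u = β • v := by rw [hcomm, huj]
  have hiv : m (e i₀) v = γ • u := by rw [hcomm, hvi]
  have hjv : m (e j) v = δ • v := by rw [hcomm, hvj]
  have huu : m u u = (α*α) • u := by
    have h := hpa4 (e i₀)
    rw [hu, hui, map_smul, LinearMap.smul_apply, hui, smul_smul] at h
    exact h
  have hvv : m v v = (δ*δ) • v := by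
    have h := hpa4 (e j)
    rw [hv, hvj, map_smul, LinearMap.smul_apply, hvj, smul_smul] at h
    exact h
  -- the fundamental one-parameter family of identities
  have eqt : ∀ t : F,
      (α*α) • u + (2*(t*t)) • (m u v) + ((t*t)*(t*t)*(δ*δ)) • v =
      ((α + (t*t)*γ)*α + t*(β + (t*t)*δ)*γ) • u
        + (t*(α + (t*t)*γ)*β + (t*t)*(β + (t*t)*δ)*δ) • v := by
    intro t
    have hxx : m (e i₀ + t • e j) (e i₀ + t • e j) = u + (t*t) • v := by
      simp only [map_add, map_smul, LinearMap.add_apply, LinearMap.smul_apply,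
        hnat i₀ j hij, hnat j i₀ hj, hu, hv, smul_zero, add_zero, zero_add, smul_smul]
    have hz1 : m (m (e i₀ + t • e j) (e i₀ + t • e j)) (e i₀ + t • e j)
        = (α + t*t*γ) • u + (t*(β + t*t*δ)) • v := by
      rw [hxx]
      simp only [map_add, map_smul, LinearMap.add_apply, LinearMap.smul_apply,
        hui, huj, hvi, hvj]
      module
    have hz2 : m (m (m (e i₀ + t • e j) (e i₀ + t • e j)) (e i₀ + t • e j))
        (e i₀ + t • e j)
        = ((α + (t*t)*γ)*α + t*(β + (t*t)*δ)*γ) • u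
        + (t*(α + (t*t)*γ)*β + (t*t)*(β + (t*t)*δ)*δ) • v := by
      rw [hz1]
      simp only [map_add, map_smul, LinearMap.add_apply, LinearMap.smul_apply,
        hui, huj, hvi, hvj]
      module
    have hz3 : m (m (e i₀ + t • e j) (e i₀ + t • e j))
        (m (e i₀ + t • e j) (e i₀ + t • e j))
        = (α*α) • u + (2*(t*t)) • (m u v) + ((t*t)*(t*t)*(δ*δ)) • v := by
      rw [hxx]
      simp only [map_add, map_smul, LinearMap.add_apply, LinearMap.smul_apply,
        huu, hvv, hcomm v u]
      module
    exact hz3.symm.trans ((hpa4 (e i₀ + t • e j)).trans hz2)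
  have q1 := eqt 1
  have qm := eqt (-1)
  -- E1 and E2
  have hE1 : (γ*(β+δ)) • u + (β*(α+γ)) • v = 0 := by
    have h : (2:F) • ((γ*(β+δ)) • u + (β*(α+γ)) • v) = 0 := by
      linear_combination (norm := module) qm - q1
    exact (smul_eq_zero.mp h).resolve_left h2
  have hE2 : (2:F) • (m u v) - (α*γ) • u - (β*δ) • v = 0 := by
    have h : (2:F) • ((2:F) • (m u v) - (α*γ) • u - (β*δ) • v) = 0 := by
      linear_combination (norm := module) q1 + qm
    exact (smul_eq_zero.mp h).resolve_left h2
  -- projections of hE1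
  have proj : ∀ (c₁ c₂ d₁ d₂ : F), c₁ • u + c₂ • v = d₁ • u + d₂ • v →
      (c₁*α + c₂*γ = d₁*α + d₂*γ) ∧ (c₁*β + c₂*δ = d₁*β + d₂*δ) := by
    intro c₁ c₂ d₁ d₂ h
    constructor
    · have hc := congrArg (fun z => e.repr z i₀) h
      simpa [map_add, map_smul, hαd, hγd, mul_comm] using hc
    · have hc := congrArg (fun z => e.repr z j) h
      simpa [map_add, map_smul, hβd, hδd, mul_comm] using hc
  by_cases hβ0 : β = 0
  · rw [hβ0, zero_smul]
  by_cases hC : ∃ c : F, c ≠ 0 ∧ c ≠ 1 ∧ c ≠ -1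
  · -- generic field case
    obtain ⟨c, hc0, hc1, hcm⟩ := hC
    have qc := eqt c
    have hA : c • ((β*γ) • u + (α*β) • v) + (c*c*c) • ((γ*δ) • u + (β*γ) • v) = 0 := by
      linear_combination (norm := module) -qc + (c*c) • hE2
    have hB : ((β*γ) • u + (α*β) • v) + ((γ*δ) • u + (β*γ) • v) = 0 := by
      linear_combination (norm := module) -q1 + hE2
    have hV3 : (c*(c*c - 1)) • ((γ*δ) • u + (β*γ) • v) = 0 := by
      linear_combination (norm := module) hA - c • hB
    have hcc : c*(c*c-1) ≠ 0 := by
      refine mul_ne_zero hc0 (fun h => ?_)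
      have : (c-1)*(c+1) = 0 := by linear_combination h
      rcases mul_eq_zero.mp this with h' | h'
      · exact hc1 (by linear_combination h')
      · exact hcm (by linear_combination h')
    have hV3' : (γ*δ) • u + (β*γ) • v = 0 := (smul_eq_zero.mp hV3).resolve_left hcc
    have hV1 : (β*γ) • u + (α*β) • v = 0 := by
      linear_combination (norm := module) hB - hV3'
    have hp := (proj (β*γ) (α*β) 0 0 (by rw [hV1]; module)).1
    have hβγ : β*γ = 0 := by
      have h' : (2*α)*(β*γ) = 0 := by linear_combination hp
      exact (mul_eq_zero.mp h').resolve_left (mul_ne_zero h2 hα)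
    have hfin : α • (β • v) = 0 := by
      linear_combination (norm := module) hV1 - hβγ • u
    exact (smul_eq_zero.mp hfin).resolve_left hα
  · -- F₃ case
    push_neg at hC
    have hall : ∀ c : F, c = 0 ∨ c = 1 ∨ c = -1 := by
      intro c
      by_cases h0 : c = 0
      · exact Or.inl h0
      by_cases h1 : c = 1
      · exact Or.inr (Or.inl h1)
      exact Or.inr (Or.inr (hC c h0 h1))
    have h3 : (3:F) = 0 := by
      rcases hall 2 with h | h | h
      · exact absurd h h2
      · exact absurd (by linear_combination h : (1:F) = 0) one_ne_zero
      · linear_combination h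
    by_cases hγ0 : γ = 0
    · -- then E1 gives the claim
      have h' : α • (β • v) = 0 := by
        linear_combination (norm := module) hE1 - ((β+δ) * hγ0) • u - (β * hγ0) • v
      exact (smul_eq_zero.mp h').resolve_left hα
    · -- γ ≠ 0 : contradiction via the extra instance
      exfalso
      have hMUV : m u v = (-(α*γ)) • u + (-(β*δ)) • v := by
        linear_combination (norm := module) -hE2 + h3 • (m u v)
      have hMVU : m v u = (-(α*γ)) • u + (-(β*δ)) • v := by rw [hcomm v u, hMUV]
      obtain ⟨P, hP⟩ : ∃ z : F, z = 1 + 2*α - 2*γ + α*α + 2*(α*γ) := ⟨_, rfl⟩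
      obtain ⟨Q, hQ⟩ : ∃ z : F, z = δ*δ + 2*(β*δ) := ⟨_, rfl⟩
      obtain ⟨R, hR⟩ : ∃ z : F, z = P*(α + α*α + α*γ) + Q*(γ - α*γ) := ⟨_, rfl⟩
      obtain ⟨W, hW⟩ : ∃ z : F, z = P*(β*δ) + Q*(-(β*δ) - δ*δ) := ⟨_, rfl⟩
      have hs2 : m (e i₀ + u - v) (e i₀ + u - v) = P • u + Q • v := by
        simp only [map_add, map_sub, LinearMap.add_apply, LinearMap.sub_apply,
          hu, hui, hiu, hvi, hiv, huu, hvv, hMUV, hMVU]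
        rw [hP, hQ]
        module
      have hst : m (m (e i₀ + u - v) (e i₀ + u - v)) (e i₀ + u - v) = R • u + W • v := by
        rw [hs2]
        simp only [map_add, map_sub, map_smul, LinearMap.add_apply, LinearMap.sub_apply,
          LinearMap.smul_apply, hui, hvi, huu, hvv, hMUV, hMVU]
        rw [hR, hW]
        module
      have hss : m (m (e i₀ + u - v) (e i₀ + u - v)) (m (e i₀ + u - v) (e i₀ + u - v))
          = (P*P*(α*α) - 2*(P*Q)*(α*γ)) • u + (Q*Q*(δ*δ) - 2*(P*Q)*(β*δ)) • v := by
        rw [hs2]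
        simp only [map_add, map_smul, LinearMap.add_apply, LinearMap.smul_apply,
          huu, hvv, hMUV, hMVU]
        module
      have h4th : m (m (m (e i₀ + u - v) (e i₀ + u - v)) (e i₀ + u - v)) (e i₀ + u - v)
          = (R*(α + α*α + α*γ) + W*(γ - α*γ)) • u
            + (R*(β*δ) + W*(-(β*δ) - δ*δ)) • v := by
        rw [hst]
        simp only [map_add, map_sub, map_smul, LinearMap.add_apply, LinearMap.sub_apply,
          LinearMap.smul_apply, hui, hvi, huu, hvv, hMUV, hMVU]
        module
      have hEq := hss.symm.trans ((hpa4 (e i₀ + u - v)).trans h4th)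
      have hGi := (proj _ _ _ _ hEq).1
      have hS1 : γ*(β+δ)*α + β*(α+γ)*γ = 0 := by
        have hp := (proj (γ*(β+δ)) (β*(α+γ)) 0 0 (by rw [hE1]; module)).1
        linear_combination hp
      have hS2 : γ*(β+δ)*β + β*(α+γ)*δ = 0 := by
        have hp := (proj (γ*(β+δ)) (β*(α+γ)) 0 0 (by rw [hE1]; module)).2
        linear_combination hp
      exact F3scalar h2 h3 hall α β γ δ P Q R W hα hβ0 hγ0 hP hQ hR hW hS1 hS2 hGi

end Aux

/-- a fourth power-associative evolution algebra which is not nil has a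
basis vector `e_{i₀}` with `e_{i₀}³ ≠ 0`; then `a_{i₀ i₀} ≠ 0`,
`e = a_{i₀ i₀}⁻² • e_{i₀}²` is a nonzero idempotent satisfying `e·eⱼ = 0` for `j ≠ i₀`,
and replacing `e_{i₀}` by `e` yields again a natural basis. -/
theorem fourth_pa_evolution_algebra_idempotent_extension
    (F : Type*) [Field F] (h2 : (2 : F) ≠ 0)
    (A : Type*) [AddCommGroup A] [Module F A]
    (m : A →ₗ[F] A →ₗ[F] A) (hcomm : ∀ x y : A, m x y = m y x)
    (n : ℕ) (e : Module.Basis (Fin n) F A)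
    (hnat : ∀ i j : Fin n, i ≠ j → m (e i) (e j) = 0)
    (hpa4 : ∀ x : A, m (m x x) (m x x) = m (m (m x x) x) x)
    (hnotnil : ¬ ∀ a : A, ∃ k : ℕ, ppow m a k = 0) :
    ∃ i₀ : Fin n, ppow m (e i₀) 2 ≠ 0 ∧
      e.repr (m (e i₀) (e i₀)) i₀ ≠ 0 ∧
      ((e.repr (m (e i₀) (e i₀)) i₀ ^ 2)⁻¹ • m (e i₀) (e i₀) ≠ 0) ∧
      (m ((e.repr (m (e i₀) (e i₀)) i₀ ^ 2)⁻¹ • m (e i₀) (e i₀))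
         ((e.repr (m (e i₀) (e i₀)) i₀ ^ 2)⁻¹ • m (e i₀) (e i₀)) =
        (e.repr (m (e i₀) (e i₀)) i₀ ^ 2)⁻¹ • m (e i₀) (e i₀)) ∧
      (∀ j : Fin n, j ≠ i₀ →
        m ((e.repr (m (e i₀) (e i₀)) i₀ ^ 2)⁻¹ • m (e i₀) (e i₀)) (e j) = 0) ∧
      ∃ b : Module.Basis (Fin n) F A,
        ⇑b = Function.update (⇑e) i₀
          ((e.repr (m (e i₀) (e i₀)) i₀ ^ 2)⁻¹ • m (e i₀) (e i₀)) ∧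
        ∀ i j : Fin n, i ≠ j → m (b i) (b j) = 0 := by
  have hex : ∃ i : Fin n, e.repr (m (e i) (e i)) i ≠ 0 := by
    by_contra hcon
    push_neg at hcon
    exact hnotnil fun a => ⟨3, nil_of_diag_zero m hcomm e hnat hpa4 h2 hcon a⟩
  obtain ⟨i₀, hα⟩ := hex
  have key : ∀ j : Fin n, j ≠ i₀ →
      e.repr (m (e i₀) (e i₀)) j • m (e j) (e j) = 0 := fun j hj =>
    key_offdiag m hcomm e hnat hpa4 h2 i₀ j hj _ _ _ _ _ _ rfl rfl rfl rfl rfl rfl hα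
  refine ⟨i₀, ?_⟩
  set u := m (e i₀) (e i₀) with hu
  set α := e.repr u i₀ with hαd
  have hα2 : α ^ 2 ≠ 0 := pow_ne_zero 2 hα
  have hα2i : (α ^ 2)⁻¹ ≠ 0 := inv_ne_zero hα2
  have hui : m u (e i₀) = α • u := mul_basis m e hnat u i₀
  have huu : m u u = (α*α) • u := by
    have h := hpa4 (e i₀)
    rw [← hu, hui, map_smul, LinearMap.smul_apply, hui, smul_smul] at h
    exact h
  have hreprsmul : ∀ (c : F) (w : A) (k : Fin n), e.repr (c • w) k = c * e.repr w k := by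
    intro c w k; rw [map_smul, Finsupp.smul_apply, smul_eq_mul]
  -- part 1
  have part1 : ppow m (e i₀) 2 ≠ 0 := by
    have hpp : ppow m (e i₀) 2 = α • u := by
      show m (m (e i₀) (e i₀)) (e i₀) = α • u
      rw [← hu, hui]
    rw [hpp]
    intro heq
    have hc := congrArg (fun z => e.repr z i₀) heq
    simp only [hreprsmul, map_zero, Finsupp.coe_zero, Pi.zero_apply] at hc
    exact mul_ne_zero hα hα hc
  -- the idempotent
  have part2 : (α ^ 2)⁻¹ • u ≠ 0 := by
    intro heq
    have hc := congrArg (fun z => e.repr z i₀) heq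
    simp only [hreprsmul, map_zero, Finsupp.coe_zero, Pi.zero_apply] at hc
    exact mul_ne_zero hα2i hα hc
  have part3 : m ((α ^ 2)⁻¹ • u) ((α ^ 2)⁻¹ • u) = (α ^ 2)⁻¹ • u := by
    simp only [map_smul, LinearMap.smul_apply, huu]
    match_scalars
    field_simp
  have part4 : ∀ j : Fin n, j ≠ i₀ → m ((α ^ 2)⁻¹ • u) (e j) = 0 := by
    intro j hjne
    rw [map_smul, LinearMap.smul_apply, mul_basis m e hnat u j, key j hjne, smul_zero]
  refine ⟨part1, hα, part2, part3, part4, ?_⟩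
  -- basis replacement
  set s : F := (α ^ 2)⁻¹ * α with hs
  have hsne : s ≠ 0 := mul_ne_zero hα2i hα
  set d : A := (α ^ 2)⁻¹ • u - e i₀ with hd
  have hld : e.coord i₀ d = s - 1 := by
    rw [hd, Module.Basis.coord_apply, map_sub, Finsupp.sub_apply, hreprsmul,
      e.repr_self, Finsupp.single_apply, if_pos rfl, ← hαd, ← hs]
  set flin : A →ₗ[F] A := LinearMap.id + (e.coord i₀).smulRight d with hflin
  set glin : A →ₗ[F] A := LinearMap.id + (e.coord i₀).smulRight (-s⁻¹ • d) with hglin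
  have hfg : flin.comp glin = LinearMap.id := by
    ext w
    simp only [hflin, hglin, LinearMap.comp_apply, LinearMap.add_apply,
      LinearMap.id_apply, LinearMap.smulRight_apply, map_add, map_smul, hld,
      smul_eq_mul]
    match_scalars <;> (field_simp [hsne]; try ring)
  have hgf : glin.comp flin = LinearMap.id := by
    ext w
    simp only [hflin, hglin, LinearMap.comp_apply, LinearMap.add_apply,
      LinearMap.id_apply, LinearMap.smulRight_apply, map_add, map_smul, hld,
      smul_eq_mul]
    match_scalars <;> (field_simp [hsne]; try ring)
  set equiv : A ≃ₗ[F] A := LinearEquiv.ofLinear flin glin hfg hgf with hequiv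
  refine ⟨e.map equiv, ?_, ?_⟩
  · funext k
    rw [Module.Basis.map_apply, Function.update_apply]
    show flin (e k) = _
    rw [hflin, LinearMap.add_apply, LinearMap.id_apply, LinearMap.smulRight_apply,
      Module.Basis.coord_apply, e.repr_self, Finsupp.single_apply]
    by_cases hk : k = i₀
    · rw [if_pos hk, if_pos hk, one_smul, hk, hd]
      abel
    · rw [if_neg hk, if_neg hk, zero_smul, add_zero]
  · intro k l hkl
    have hbval : ∀ k : Fin n, (e.map equiv) k =
        (if k = i₀ then (α ^ 2)⁻¹ • u else e k) := by
      intro k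
      rw [Module.Basis.map_apply]
      show flin (e k) = _
      rw [hflin, LinearMap.add_apply, LinearMap.id_apply, LinearMap.smulRight_apply,
        Module.Basis.coord_apply, e.repr_self, Finsupp.single_apply]
      by_cases hk : k = i₀
      · rw [if_pos hk, if_pos hk, one_smul, hk, hd]
        abel
      · rw [if_neg hk, if_neg hk, zero_smul, add_zero]
    rw [hbval k, hbval l]
    by_cases hk : k = i₀
    · rw [if_pos hk, if_neg (fun h => hkl (hk.trans h.symm))]
      exact part4 l (fun h => hkl (hk.trans h.symm))
    · by_cases hl : l = i₀
      · rw [if_neg hk, if_pos hl]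
        rw [hcomm]
        exact part4 k hk
      · rw [if_neg hk, if_neg hl]
        exact hnat k l hkl
end

section
/- Let A be a finite-dimensional nil power-associative evolution algebra over a field F of characteristic ≠ 2 which is not associative. Then A has nil-index 4, i.e. x⁴ = 0 for every x ∈ A (principal powers) and there exists a ∈ A with a³ ≠ 0; moreover A⁴ = 0 (where A¹ = A and A^{k+1} is the linear span of products u·v, u ∈ A^k, v ∈ A), and there exists y ∈ A with y ∉ A² such that y·z = 0 for every z ∈ A². -/
/-- a finite-dimensional nil power-associative evolution algebra over a
field of characteristic ≠ 2 which is not associative has nil-index 4 (`x⁴ = 0` always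
and `a³ ≠ 0` for some `a`), satisfies `A⁴ = 0`, and there is `y ∉ A²` with `y·A² = 0`. -/
theorem nil_pa_nonassoc_evolution_algebra_structure
    (F : Type*) [Field F] (h2 : (2 : F) ≠ 0)
    (A : Type*) [AddCommGroup A] [Module F A]
    (m : A →ₗ[F] A →ₗ[F] A) (hcomm : ∀ x y : A, m x y = m y x)
    (hev : ∃ (n : ℕ) (e : Module.Basis (Fin n) F A),
      ∀ i j : Fin n, i ≠ j → m (e i) (e j) = 0)
    (hnil : ∀ a : A, ∃ k : ℕ, ppow m a k = 0)
    (hpa : ∀ (a : A) (i j : ℕ),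
      m (ppow m a i) (ppow m a j) = ppow m a (i + j + 1))
    (hnotassoc : ¬ ∀ x y z : A, m (m x y) z = m x (m y z)) :
    (∀ x : A, ppow m x 3 = 0) ∧
    (∃ a : A, ppow m a 2 ≠ 0) ∧
    spow m 3 = ⊥ ∧
    (∃ y : A, y ∉ spow m 1 ∧ ∀ z ∈ spow m 1, m y z = 0) := by
  classical
  obtain ⟨n, e, he⟩ := hev
  obtain ⟨c, hc⟩ : ∃ c : Fin n → A, ∀ i, c i = m (e i) (e i) := ⟨_, fun _ => rfl⟩
  obtain ⟨a, ha⟩ : ∃ a : Fin n → Fin n → F, ∀ p q, a p q = e.repr (c q) p :=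
    ⟨_, fun _ _ => rfl⟩
  have hpp : ∀ (x : A) (k), ppow m x (k+1) = m (ppow m x k) x := fun _ _ => rfl
  -- product with basis vector on the right
  have mul_er : ∀ (r : Fin n) (x : A), m x (e r) = e.repr x r • c r := by
    intro r
    have h : m.flip (e r) = (e.coord r).smulRight (c r) := by
      refine e.ext fun s => ?_
      by_cases hs : s = r
      · subst hs
        simp [LinearMap.flip_apply, Module.Basis.coord_apply, hc]
      · simp [LinearMap.flip_apply, he s r hs, Module.Basis.coord_apply, Module.Basis.repr_self,
          Finsupp.single_apply, hs]
    intro x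
    have h' := LinearMap.congr_fun h x
    simpa [LinearMap.flip_apply, Module.Basis.coord_apply] using h'
  have mce : ∀ p r : Fin n, m (c p) (e r) = a r p • c r := by
    intro p r; rw [mul_er, ha]
  -- F1
  have pow_e : ∀ (i : Fin n) (k : ℕ), ppow m (e i) (k+1) = (a i i)^k • c i := by
    intro i k
    induction k with
    | zero =>
        rw [hpp]
        show m (e i) (e i) = (a i i)^0 • c i
        rw [pow_zero, one_smul, hc]
    | succ k ih =>
        rw [hpp, ih, map_smul, LinearMap.smul_apply, mce, smul_smul, pow_succ]
  have F1 : ∀ i, a i i • c i = 0 := by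
    intro i
    obtain ⟨k, hk⟩ := hnil (e i)
    match k, hk with
    | 0, hk =>
        have : c i = 0 := by rw [hc]; show m (e i) (ppow m (e i) 0) = 0; rw [hk]; simp
        rw [this, smul_zero]
    | (k+1), hk =>
        rw [pow_e] at hk
        rcases eq_or_ne (a i i) 0 with h0 | h0
        · rw [h0, zero_smul]
        · have hci : c i = 0 := by
            rcases smul_eq_zero.mp hk with h | h
            · exact absurd h (pow_ne_zero _ h0)
            · exact h
          rw [hci, smul_zero]
  have DP0 : ∀ i, c i = 0 → ∀ j, a j i = 0 := by
    intro i h j; rw [ha, h]; simp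
  have SC1 : ∀ i j, a i i * a j i = 0 := by
    intro i j
    rcases smul_eq_zero.mp (F1 i) with h | h
    · rw [h, zero_mul]
    · rw [DP0 i h j, mul_zero]
  have F2 : ∀ i, m (c i) (c i) = 0 := by
    intro i
    have h := hpa (e i) 1 1
    have h1 : ppow m (e i) 1 = c i := by simpa using pow_e i 0
    have h3 : ppow m (e i) 3 = (a i i)^2 • c i := pow_e i 2
    rw [h1] at h
    rw [show (1+1+1 : ℕ) = 3 from rfl, h3, pow_two, mul_smul, F1, smul_zero] at h
    exact h
  -- pair identities
  have hsqp : ∀ i j : Fin n, i ≠ j → ∀ t : F,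
      m (e i + t • e j) (e i + t • e j) = c i + (t*t) • c j := by
    intro i j hij t
    simp only [map_add, map_smul, LinearMap.add_apply, LinearMap.smul_apply,
      he i j hij, he j i (Ne.symm hij), smul_zero, add_zero, zero_add, ← hc, smul_smul]
  have hcubep : ∀ i j : Fin n, i ≠ j → ∀ t : F, ppow m (e i + t • e j) 2
      = (t*t*a i j) • c i + (t * a j i) • c j := by
    intro i j hij t
    have e1 : ppow m (e i + t • e j) 2
        = m (m (e i + t • e j) (e i + t • e j)) (e i + t • e j) := rfl
    rw [e1, hsqp i j hij t]
    simp only [map_add, map_smul, LinearMap.add_apply, LinearMap.smul_apply, mce,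
      F1 i, F1 j, smul_zero, add_zero, zero_add]
    module
  have pairlem : ∀ i j : Fin n, i ≠ j →
      ((a i j * a j i) • c i = 0 ∧ m (c i) (c j) = 0) := by
    intro i j hij
    have hpow3p : ∀ t : F, ppow m (e i + t • e j) 3
        = (t*t*t*(a i j * a j i)) • c j + (t*(a i j * a j i)) • c i := by
      intro t
      rw [hpp, hcubep i j hij t]
      simp only [map_add, map_smul, LinearMap.add_apply, LinearMap.smul_apply, mce,
        F1 i, F1 j, smul_zero, add_zero, zero_add]
      module
    have hpair : ∀ t : F, (t*t*2) • (m (c i) (c j))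
        = (t*t*t*(a i j * a j i)) • c j + (t*(a i j * a j i)) • c i := by
      intro t
      have h := hpa (e i + t • e j) 1 1
      rw [show ((1:ℕ)+1+1) = 3 from rfl] at h
      rw [show ppow m (e i + t • e j) 1 = m (e i + t • e j) (e i + t • e j) from rfl] at h
      rw [hsqp i j hij t, hpow3p t] at h
      simp only [map_add, map_smul, LinearMap.add_apply, LinearMap.smul_apply,
        F2 i, F2 j, smul_zero, add_zero, zero_add, hcomm (c j) (c i)] at h
      rw [← h]; module
    have hRR : (a i j * a j i) • c j + (a i j * a j i) • c i
        = -((a i j * a j i) • c j + (a i j * a j i) • c i) := by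
      calc (a i j * a j i) • c j + (a i j * a j i) • c i
          = ((1:F)*1*1*(a i j * a j i)) • c j + ((1:F)*(a i j * a j i)) • c i := by module
        _ = ((1:F)*1*2) • (m (c i) (c j)) := (hpair 1).symm
        _ = (((-1):F)*(-1)*2) • (m (c i) (c j)) := by module
        _ = (((-1):F)*(-1)*(-1)*(a i j * a j i)) • c j + (((-1):F)*(a i j * a j i)) • c i :=
            hpair (-1)
        _ = -((a i j * a j i) • c j + (a i j * a j i) • c i) := by module
    have P1 : (a i j * a j i) • c j + (a i j * a j i) • c i = 0 := by
      have h' : (2:F) • ((a i j * a j i) • c j + (a i j * a j i) • c i) = 0 := by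
        rw [two_smul]
        nth_rewrite 1 [hRR]
        abel
      rcases smul_eq_zero.mp h' with h | h
      · exact absurd h h2
      · exact h
    have hMij : m (c i) (c j) = 0 := by
      have h' : ((1:F)*1*2) • (m (c i) (c j)) = 0 := by
        rw [hpair 1, show ((1:F)*1*1*(a i j * a j i)) • c j + ((1:F)*(a i j * a j i)) • c i
          = (a i j * a j i) • c j + (a i j * a j i) • c i by module, P1]
      rcases smul_eq_zero.mp h' with h | h
      · exact absurd (by rw [← h]; ring) h2
      · exact h
    have P2 : ((a i j * a j i) * a i j) • c i = 0 := by
      have h := congrArg (fun z : A => m z (e i)) P1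
      simp only [map_add, LinearMap.add_apply, map_smul, LinearMap.smul_apply, mce,
        map_zero, LinearMap.zero_apply] at h
      rw [F1 i, smul_zero, add_zero, smul_smul] at h
      exact h
    constructor
    · by_cases hq : a i j * a j i = 0
      · rw [hq, zero_smul]
      · have hci : c i = 0 := by
          rcases smul_eq_zero.mp P2 with h | h
          · exact absurd h (mul_ne_zero hq (fun h' => hq (by rw [h', zero_mul])))
          · exact h
        rw [hci, smul_zero]
    · exact hMij
  have F3 : ∀ i j : Fin n, m (c i) (c j) = 0 := by
    intro i j
    by_cases hij : i = j
    · rw [hij]; exact F2 j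
    · exact (pairlem i j hij).2
  have PD : ∀ i j : Fin n, (a i j * a j i) • c i = 0 := by
    intro i j
    by_cases hij : i = j
    · rw [hij, mul_smul, F1, smul_zero]
    · exact (pairlem i j hij).1
  -- squares lie in the span of the c's
  have sqmem : ∀ x : A, m x x ∈ Submodule.span F (Set.range c) := by
    intro x
    have hxx : m x x = ∑ r, e.repr x r • (e.repr x r • c r) := by
      nth_rewrite 2 [← e.sum_repr x]
      rw [map_sum]
      simp only [map_smul, mul_er]
    rw [hxx]
    exact Submodule.sum_mem _ (fun r _ => Submodule.smul_mem _ _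
      (Submodule.smul_mem _ _ (Submodule.subset_span ⟨r, rfl⟩)))
  have annC2 : ∀ v ∈ Submodule.span F (Set.range c), ∀ i, m (c i) v = 0 := by
    intro v hv
    induction hv using Submodule.span_induction with
    | mem x hx => obtain ⟨j, rfl⟩ := hx; intro i; exact F3 i j
    | zero => intro i; simp
    | add x y _ _ h1 h2 => intro i; simp [map_add, h1 i, h2 i]
    | smul t x _ h1 => intro i; simp [map_smul, h1 i]
  have annCC : ∀ u ∈ Submodule.span F (Set.range c),
      ∀ v ∈ Submodule.span F (Set.range c), m u v = 0 := by
    intro u hu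
    induction hu using Submodule.span_induction with
    | mem x hx => obtain ⟨i, rfl⟩ := hx; intro v hv; exact annC2 v hv i
    | zero => intro v hv; simp
    | add x y _ _ h1 h2 => intro v hv; simp [map_add, LinearMap.add_apply, h1 v hv, h2 v hv]
    | smul t x _ h1 => intro v hv; simp [map_smul, LinearMap.smul_apply, h1 v hv]
  have concl1 : ∀ x : A, ppow m x 3 = 0 := by
    intro x
    have h := hpa x 1 1
    rw [show ((1:ℕ)+1+1) = 3 from rfl] at h
    rw [← h, show ppow m x 1 = m x x from rfl]
    exact annCC _ (sqmem x) _ (sqmem x)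
  -- three-variable identity
  have STAR : ∀ p q r : Fin n, p ≠ q → p ≠ r → q ≠ r →
      (a r q * a p r) • c p + (a p q * a r p) • c r = 0 := by
    intro p q r hpq hpr hqr
    have hsq1 : m (e p + e q + e r) (e p + e q + e r) = c p + c q + c r := by
      simp only [map_add, LinearMap.add_apply, he p q hpq, he q p (Ne.symm hpq),
        he p r hpr, he r p (Ne.symm hpr), he q r hqr, he r q (Ne.symm hqr), ← hc]
      abel
    have hsq2 : m (e p - e q + e r) (e p - e q + e r) = c p + c q + c r := by
      simp only [map_add, map_sub, LinearMap.add_apply, LinearMap.sub_apply,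
        he p q hpq, he q p (Ne.symm hpq), he p r hpr, he r p (Ne.symm hpr),
        he q r hqr, he r q (Ne.symm hqr), ← hc]
      abel
    have hcb1 : m (c p + c q + c r) (e p + e q + e r)
        = (a p p + a p q + a p r) • c p + (a q p + a q q + a q r) • c q
          + (a r p + a r q + a r r) • c r := by
      simp only [map_add, LinearMap.add_apply, mce]
      module
    have hcb2 : m (c p + c q + c r) (e p - e q + e r)
        = (a p p + a p q + a p r) • c p - (a q p + a q q + a q r) • c q
          + (a r p + a r q + a r r) • c r := by
      simp only [map_add, map_sub, LinearMap.add_apply, LinearMap.sub_apply, mce]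
      module
    have hx31 : m (m (m (e p + e q + e r) (e p + e q + e r)) (e p + e q + e r))
          (e p + e q + e r)
        = (((a p p + a p q + a p r) * a p p + (a q p + a q q + a q r) * a p q
            + (a r p + a r q + a r r) * a p r)) • c p
          + (((a p p + a p q + a p r) * a q p + (a q p + a q q + a q r) * a q q
            + (a r p + a r q + a r r) * a q r)) • c q
          + (((a p p + a p q + a p r) * a r p + (a q p + a q q + a q r) * a r q
            + (a r p + a r q + a r r) * a r r)) • c r := by
      rw [hsq1, hcb1]
      simp only [map_add, map_smul, LinearMap.add_apply, LinearMap.smul_apply, mce]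
      module
    have hx32 : m (m (m (e p - e q + e r) (e p - e q + e r)) (e p - e q + e r))
          (e p - e q + e r)
        = (((a p p + a p q + a p r) * a p p - (a q p + a q q + a q r) * a p q
            + (a r p + a r q + a r r) * a p r)) • c p
          + ((-((a p p + a p q + a p r) * a q p) + (a q p + a q q + a q r) * a q q
            - (a r p + a r q + a r r) * a q r)) • c q
          + (((a p p + a p q + a p r) * a r p - (a q p + a q q + a q r) * a r q
            + (a r p + a r q + a r r) * a r r)) • c r := by
      rw [hsq2, hcb2]
      simp only [map_add, map_sub, map_smul, LinearMap.add_apply, LinearMap.sub_apply,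
        LinearMap.smul_apply, mce]
      module
    have Z1 : (((a p p + a p q + a p r) * a p p + (a q p + a q q + a q r) * a p q
            + (a r p + a r q + a r r) * a p r)) • c p
          + (((a p p + a p q + a p r) * a q p + (a q p + a q q + a q r) * a q q
            + (a r p + a r q + a r r) * a q r)) • c q
          + (((a p p + a p q + a p r) * a r p + (a q p + a q q + a q r) * a r q
            + (a r p + a r q + a r r) * a r r)) • c r = 0 := by
      rw [← hx31]; exact concl1 (e p + e q + e r)
    have Z2 : (((a p p + a p q + a p r) * a p p - (a q p + a q q + a q r) * a p q
            + (a r p + a r q + a r r) * a p r)) • c p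
          + ((-((a p p + a p q + a p r) * a q p) + (a q p + a q q + a q r) * a q q
            - (a r p + a r q + a r r) * a q r)) • c q
          + (((a p p + a p q + a p r) * a r p - (a q p + a q q + a q r) * a r q
            + (a r p + a r q + a r r) * a r r)) • c r = 0 := by
      rw [← hx32]; exact concl1 (e p - e q + e r)
    have hJ1 : ((a p p + a p q + a p r) * a p p) • c p = 0 := by
      rw [mul_smul, F1, smul_zero]
    have hJ2 : (a p r * a r p) • c p = 0 := PD p r
    have hJ3 : (a r r * a p r) • c p = 0 := by rw [SC1 r p, zero_smul]
    have hJ4 : ((a q p + a q q + a q r) * a q q) • c q = 0 := by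
      rw [mul_smul, F1, smul_zero]
    have hJ5 : (a p p * a r p) • c r = 0 := by rw [SC1 p r, zero_smul]
    have hJ6 : (a r p * a p r) • c r = 0 := PD r p
    have hJ7 : ((a r p + a r q + a r r) * a r r) • c r = 0 := by
      rw [mul_smul, F1, smul_zero]
    have hz : (2:F) • ((a r q * a p r) • c p + (a p q * a r p) • c r)
        + (2:F) • (((a p p + a p q + a p r) * a p p) • c p + (a p r * a r p) • c p
          + (a r r * a p r) • c p + ((a q p + a q q + a q r) * a q q) • c q
          + (a p p * a r p) • c r + (a r p * a p r) • c r
          + ((a r p + a r q + a r r) * a r r) • c r) = 0 := by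
      have hid : (2:F) • ((a r q * a p r) • c p + (a p q * a r p) • c r)
          + (2:F) • (((a p p + a p q + a p r) * a p p) • c p + (a p r * a r p) • c p
            + (a r r * a p r) • c p + ((a q p + a q q + a q r) * a q q) • c q
            + (a p p * a r p) • c r + (a r p * a p r) • c r
            + ((a r p + a r q + a r r) * a r r) • c r)
          = ((((a p p + a p q + a p r) * a p p + (a q p + a q q + a q r) * a p q
              + (a r p + a r q + a r r) * a p r)) • c p
            + (((a p p + a p q + a p r) * a q p + (a q p + a q q + a q r) * a q q
              + (a r p + a r q + a r r) * a q r)) • c q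
            + (((a p p + a p q + a p r) * a r p + (a q p + a q q + a q r) * a r q
              + (a r p + a r q + a r r) * a r r)) • c r)
          + ((((a p p + a p q + a p r) * a p p - (a q p + a q q + a q r) * a p q
              + (a r p + a r q + a r r) * a p r)) • c p
            + ((-((a p p + a p q + a p r) * a q p) + (a q p + a q q + a q r) * a q q
              - (a r p + a r q + a r r) * a q r)) • c q
            + (((a p p + a p q + a p r) * a r p - (a q p + a q q + a q r) * a r q
              + (a r p + a r q + a r r) * a r r)) • c r) := by
        module
      rw [hid, Z1, Z2, add_zero]
    rw [hJ1, hJ2, hJ3, hJ4, hJ5, hJ6, hJ7] at hz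
    simp only [add_zero, zero_add, smul_zero] at hz
    rcases smul_eq_zero.mp hz with h | h
    · exact absurd h h2
    · exact h
  -- key annihilation
  have KEY : ∀ p q r : Fin n, (a p q * a r p) • c r = 0 := by
    intro p q r
    by_cases hcr : c r = 0
    · rw [hcr, smul_zero]
    by_cases hpq : p = q
    · subst hpq; rw [SC1 p r, zero_smul]
    by_cases hrp : r = p
    · subst hrp; rw [mul_smul, F1, smul_zero]
    by_cases hrq : r = q
    · subst hrq; rw [mul_comm]; exact PD r p
    by_contra hT
    have hapq : a p q ≠ 0 := fun h => hT (by rw [h, zero_mul, zero_smul])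
    have harp : a r p ≠ 0 := fun h => hT (by rw [h, mul_zero, zero_smul])
    have hstar := STAR p q r hpq (fun h => hrp h.symm) (fun h => hrq h.symm)
    have hapr : a p r ≠ 0 := by
      intro h
      apply hT
      have h' : (a p q * a r p) • c r = -((a r q * a p r) • c p) :=
        eq_neg_of_add_eq_zero_right hstar
      rw [h', h, mul_zero, zero_smul, neg_zero]
    rcases smul_eq_zero.mp (PD r p) with h | h
    · exact (mul_ne_zero harp hapr) h
    · exact hcr h
  -- associativity criterion
  have assoc_of : (∀ p q : Fin n, a p q • c p = 0) →
      ∀ x y z : A, m (m x y) z = m x (m y z) := by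
    intro H
    have hb : ∀ α β γ : Fin n, m (m (e α) (e β)) (e γ) = m (e α) (m (e β) (e γ)) := by
      intro α β γ
      by_cases hab : α = β
      · subst hab
        by_cases hbg : α = γ
        · subst hbg
          rw [← hc, hcomm (e α) (c α)]
        · rw [← hc, mce, H γ α, he α γ hbg, map_zero]
      · rw [he α β hab]
        by_cases hbg : β = γ
        · subst hbg
          rw [← hc, hcomm (e α) (c β), mce, H α β]
          simp
        · rw [he β γ hbg]
          simp
    have hz3 : ∀ (α β : Fin n) (z : A), m (m (e α) (e β)) z = m (e α) (m (e β) z) := by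
      intro α β z
      have hzmem : z ∈ Submodule.span F (Set.range e) := by rw [e.span_eq]; trivial
      induction hzmem using Submodule.span_induction with
      | mem w hw => obtain ⟨γ, rfl⟩ := hw; exact hb α β γ
      | zero => simp
      | add u v _ _ h1 h2 => simp only [map_add, h1, h2]
      | smul t u _ h1 => simp only [map_smul, h1]
    have hy3 : ∀ (α : Fin n) (y z : A), m (m (e α) y) z = m (e α) (m y z) := by
      intro α y z
      have hymem : y ∈ Submodule.span F (Set.range e) := by rw [e.span_eq]; trivial
      induction hymem using Submodule.span_induction with
      | mem w hw => obtain ⟨β, rfl⟩ := hw; exact hz3 α β z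
      | zero => simp
      | add u v _ _ h1 h2 =>
          simp only [map_add, LinearMap.add_apply, h1, h2]
      | smul t u _ h1 =>
          simp only [map_smul, LinearMap.smul_apply, h1]
    intro x y z
    have hxmem : x ∈ Submodule.span F (Set.range e) := by rw [e.span_eq]; trivial
    induction hxmem using Submodule.span_induction with
    | mem w hw => obtain ⟨α, rfl⟩ := hw; exact hy3 α y z
    | zero => simp
    | add u v _ _ h1 h2 =>
        simp only [map_add, LinearMap.add_apply, h1, h2]
    | smul t u _ h1 =>
        simp only [map_smul, LinearMap.smul_apply, h1]
  have hwitness : ∃ i k : Fin n, a i k • c i ≠ 0 := by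
    by_contra hcontra
    push_neg at hcontra
    exact hnotassoc (assoc_of hcontra)
  -- conclusion 2
  have concl2 : ∃ x : A, ppow m x 2 ≠ 0 := by
    obtain ⟨i, j, hij0⟩ := hwitness
    have hij : i ≠ j := by rintro rfl; exact hij0 (F1 i)
    by_contra hno
    push_neg at hno
    have A1 := hno (e i + (1:F) • e j)
    have A2 := hno (e i + (-1:F) • e j)
    rw [hcubep i j hij 1] at A1
    rw [hcubep i j hij (-1)] at A2
    apply hij0
    have hsum : ((2:F) * a i j) • c i
        = (((1:F)*1*a i j) • c i + ((1:F) * a j i) • c j)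
          + ((((-1):F)*(-1)*a i j) • c i + (((-1):F) * a j i) • c j) := by module
    have h2' : ((2:F) * a i j) • c i = 0 := by rw [hsum, A1, A2, add_zero]
    rw [mul_smul] at h2'
    rcases smul_eq_zero.mp h2' with h | h
    · exact absurd h h2
    · exact h
  -- spow 1 is contained in the span of the c's
  have hspow1 : spow m 1 ≤ Submodule.span F (Set.range c) := by
    rw [show spow m 1 = Submodule.span F {x | ∃ u ∈ spow m 0, ∃ v : A, x = m u v} from rfl]
    apply Submodule.span_le.mpr
    rintro x ⟨u, -, v, rfl⟩
    have hx : m u v = ∑ r, e.repr v r • (e.repr u r • c r) := by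
      calc m u v = m u (∑ r, e.repr v r • e r) := by rw [e.sum_repr]
        _ = ∑ r, e.repr v r • (e.repr u r • c r) := by
            rw [map_sum]; simp only [map_smul, mul_er]
    rw [hx]
    exact Submodule.sum_mem _ fun r _ => Submodule.smul_mem _ _
      (Submodule.smul_mem _ _ (Submodule.subset_span ⟨r, rfl⟩))
  have mulc_any : ∀ (q : Fin n) (v : A), m (c q) v = ∑ s, e.repr v s • (a s q • c s) := by
    intro q v
    calc m (c q) v = m (c q) (∑ s, e.repr v s • e s) := by rw [e.sum_repr]
      _ = _ := by rw [map_sum]; simp only [map_smul, mce]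
  have KEY2 : ∀ (q : Fin n) (v w : A), m (m (c q) v) w = 0 := by
    intro q v w
    rw [mulc_any q v, map_sum, LinearMap.sum_apply]
    apply Finset.sum_eq_zero
    intro s _
    rw [map_smul, LinearMap.smul_apply, map_smul, LinearMap.smul_apply,
      mulc_any s w, Finset.smul_sum, Finset.smul_sum]
    apply Finset.sum_eq_zero
    intro t _
    have hcollect : e.repr v s • (a s q • (e.repr w t • (a t s • c t)))
        = (e.repr v s * e.repr w t) • ((a s q * a t s) • c t) := by module
    rw [hcollect, KEY s q t, smul_zero]
  -- conclusion 3
  have spow3bot : spow m 3 = ⊥ := by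
    have hs2 : ∀ u ∈ spow m 2, ∀ v : A, m u v = 0 := by
      intro u hu
      rw [show spow m 2 = Submodule.span F {x | ∃ u ∈ spow m 1, ∃ v : A, x = m u v}
        from rfl] at hu
      induction hu using Submodule.span_induction with
      | mem x hx =>
          obtain ⟨u', hu', v', rfl⟩ := hx
          intro v
          have hu'' := hspow1 hu'
          clear hu'
          induction hu'' using Submodule.span_induction with
          | mem y hy => obtain ⟨qq, rfl⟩ := hy; exact KEY2 qq v' v
          | zero => simp
          | add y z _ _ h1 h2 => simp only [map_add, LinearMap.add_apply, h1, h2, add_zero]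
          | smul t y _ h1 => simp only [map_smul, LinearMap.smul_apply, h1, smul_zero]
      | zero => intro v; simp
      | add x y _ _ h1 h2 => intro v; simp only [map_add, LinearMap.add_apply, h1 v, h2 v, add_zero]
      | smul t x _ h1 => intro v; simp only [map_smul, LinearMap.smul_apply, h1 v, smul_zero]
    rw [show spow m 3 = Submodule.span F {x | ∃ u ∈ spow m 2, ∃ v : A, x = m u v} from rfl,
      eq_bot_iff]
    apply Submodule.span_le.mpr
    rintro x ⟨u, hu, v, rfl⟩
    simpa [Submodule.mem_bot] using hs2 u hu v
  -- conclusion 4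
  have concl4 : ∃ y : A, y ∉ spow m 1 ∧ ∀ z ∈ spow m 1, m y z = 0 := by
    by_contra hcon
    push_neg at hcon
    have hmem : ∀ y : A, (∀ z ∈ spow m 1, m y z = 0) → y ∈ spow m 1 := by
      intro y hy
      by_contra hny
      obtain ⟨z, hz, hnz⟩ := hcon y hny
      exact hnz (hy z hz)
    obtain ⟨i0, k0, hw⟩ := hwitness
    have hai : a i0 k0 ≠ 0 := fun h => hw (by rw [h, zero_smul])
    have hci : c i0 ≠ 0 := fun h => hw (by rw [h, smul_zero])
    have rows : ∀ p : Fin n, ∃ q, a p q ≠ 0 := by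
      intro p
      by_contra hrow
      push_neg at hrow
      have hann : ∀ z ∈ spow m 1, m (e p) z = 0 := by
        intro z hz
        have hz' := hspow1 hz
        clear hz
        induction hz' using Submodule.span_induction with
        | mem y hy => obtain ⟨qq, rfl⟩ := hy; rw [hcomm, mce, hrow qq, zero_smul]
        | zero => simp
        | add u v _ _ h1 h2 => simp only [map_add, h1, h2, add_zero]
        | smul t u _ h1 => simp only [map_smul, h1, smul_zero]
      have hep' := hspow1 (hmem (e p) hann)
      have hcoord : ∀ x ∈ Submodule.span F (Set.range c), e.repr x p = 0 := by
        intro x hx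
        induction hx using Submodule.span_induction with
        | mem y hy => obtain ⟨qq, rfl⟩ := hy; rw [← ha]; exact hrow qq
        | zero => simp
        | add u v _ _ h1 h2 => simp [map_add, h1, h2]
        | smul t u _ h1 => simp [map_smul, h1]
      have h1 := hcoord (e p) hep'
      rw [Module.Basis.repr_self] at h1
      simp at h1
    have hrowi : ∀ p, a i0 p = 0 := by
      intro p
      obtain ⟨q, hq⟩ := rows p
      rcases smul_eq_zero.mp (KEY p q i0) with h | h
      · rcases mul_eq_zero.mp h with h' | h'
        · exact absurd h' hq
        · exact h'
      · exact absurd h hci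
    exact hai (hrowi k0)
  exact ⟨concl1, concl2, spow3bot, concl4⟩
end

section
/- Let N be a 3-dimensional nil evolution algebra over a field F of characteristic ≠ 2 which is associative and indecomposable. Then N admits a natural basis (v_1, v_2, v_3) and there exists α ∈ F, α ≠ 0, such that v_1·v_1 = v_3, v_2·v_2 = α·v_3, v_3·v_3 = 0 (the algebra N_{3,3}(α)). -/
section Aux
variable {F A : Type*} [Field F] [AddCommGroup A] [Module F A]

lemma mxe (m : A →ₗ[F] A →ₗ[F] A) (e : Module.Basis (Fin 3) F A)
    (hnat : ∀ i j : Fin 3, i ≠ j → m (e i) (e j) = 0) (x : A) (j : Fin 3) :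
    m x (e j) = e.repr x j • m (e j) (e j) := by
  conv_lhs => rw [← e.sum_repr x]
  rw [map_sum, LinearMap.sum_apply, Finset.sum_eq_single j]
  · simp
  · intro t _ htj
    simp [hnat t j htj]
  · simp

lemma mnull (m : A →ₗ[F] A →ₗ[F] A) (e : Module.Basis (Fin 3) F A)
    (hnat : ∀ i j : Fin 3, i ≠ j → m (e i) (e j) = 0) (x : A)
    (hx : ∀ j, e.repr x j • m (e j) (e j) = 0) (y : A) : m x y = 0 := by
  have h : m x = 0 := e.ext fun j => by rw [mxe m e hnat x j, hx j]; simp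
  rw [h]; simp

lemma caseA (m : A →ₗ[F] A →ₗ[F] A) (e : Module.Basis (Fin 3) F A)
    (hzero : ∀ x y : A, m x y = 0) :
    ∃ I J : Submodule F A,
      (∀ x ∈ I, ∀ y : A, m x y ∈ I) ∧ (∀ x ∈ J, ∀ y : A, m x y ∈ J) ∧
      I ≠ ⊥ ∧ J ≠ ⊥ ∧ IsCompl I J := by
  refine ⟨Submodule.span F {e 0}, Submodule.span F {e 1, e 2},
    fun x _ y => by rw [hzero]; exact zero_mem _,
    fun x _ y => by rw [hzero]; exact zero_mem _, ?_, ?_, ?_, ?_⟩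
  · intro h
    exact e.ne_zero 0 (Submodule.mem_bot F |>.mp
      (h ▸ Submodule.subset_span (Set.mem_singleton _)))
  · intro h
    exact e.ne_zero 1 (Submodule.mem_bot F |>.mp
      (h ▸ Submodule.subset_span (by simp)))
  · rw [Submodule.disjoint_def]
    intro x hx1 hx2
    obtain ⟨p, hp⟩ := Submodule.mem_span_singleton.mp hx1
    obtain ⟨q, r, hqr⟩ := Submodule.mem_span_pair.mp hx2
    have heq : p • e 0 = q • e 1 + r • e 2 := hp.trans hqr.symm
    have h0 := congrArg (fun v => e.repr v 0) heq
    simp [Module.Basis.repr_self_apply] at h0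
    rw [← hp, h0, zero_smul]
  · rw [codisjoint_iff, eq_top_iff, ← e.span_eq]
    rw [Submodule.span_le]
    rintro _ ⟨t, rfl⟩
    fin_cases t
    · exact Submodule.mem_sup_left (Submodule.subset_span (Set.mem_singleton _))
    · exact Submodule.mem_sup_right (Submodule.subset_span (by simp))
    · exact Submodule.mem_sup_right (Submodule.subset_span (by simp))

lemma caseB (m : A →ₗ[F] A →ₗ[F] A) (e : Module.Basis (Fin 3) F A)
    (hnat : ∀ i j : Fin 3, i ≠ j → m (e i) (e j) = 0)
    (hcomm : ∀ x y : A, m x y = m y x)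
    (i j k : Fin 3) (hij : i ≠ j) (hik : i ≠ k) (hjk : j ≠ k)
    (hcov : ∀ t : Fin 3, t = i ∨ t = j ∨ t = k)
    (a b : F) (ha : a ≠ 0)
    (hz : m (e i) (e i) = a • e j + b • e k)
    (hjj : m (e j) (e j) = 0) (hkk : m (e k) (e k) = 0) :
    ∃ I J : Submodule F A,
      (∀ x ∈ I, ∀ y : A, m x y ∈ I) ∧ (∀ x ∈ J, ∀ y : A, m x y ∈ J) ∧
      I ≠ ⊥ ∧ J ≠ ⊥ ∧ IsCompl I J := by
  have hzi : e.repr (m (e i) (e i)) i = 0 := by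
    rw [hz]; simp [Module.Basis.repr_self_apply, Ne.symm hij, Ne.symm hik]
  have hzj : e.repr (m (e i) (e i)) j = a := by
    rw [hz]; simp [Module.Basis.repr_self_apply, Ne.symm hjk]
  have hmz : ∀ y : A, m (m (e i) (e i)) y = 0 := by
    intro y
    refine mnull m e hnat _ (fun t => ?_) y
    rcases hcov t with rfl | rfl | rfl
    · rw [hzi, zero_smul]
    · rw [hjj, smul_zero]
    · rw [hkk, smul_zero]
  refine ⟨Submodule.span F {e i, m (e i) (e i)}, Submodule.span F {e k},
    ?_, ?_, ?_, ?_, ?_, ?_⟩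
  · intro x hx y
    induction hx using Submodule.span_induction with
    | mem x hx =>
      rcases hx with rfl | rfl
      · rw [hcomm (e i) y, mxe m e hnat y i]
        exact Submodule.smul_mem _ _ (Submodule.subset_span (by simp))
      · rw [hmz y]; exact zero_mem _
    | zero => rw [map_zero, LinearMap.zero_apply]; exact zero_mem _
    | add u v _ _ hu hv => rw [map_add, LinearMap.add_apply]; exact add_mem hu hv
    | smul c u _ hu => rw [map_smul, LinearMap.smul_apply]; exact Submodule.smul_mem _ _ hu
  · intro x hx y
    obtain ⟨u, rfl⟩ := Submodule.mem_span_singleton.mp hx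
    have : m (e k) y = 0 := by rw [hcomm, mxe m e hnat y k, hkk, smul_zero]
    rw [map_smul, LinearMap.smul_apply, this, smul_zero]
    exact zero_mem _
  · intro h
    exact e.ne_zero i (Submodule.mem_bot F |>.mp
      (h ▸ Submodule.subset_span (by simp)))
  · intro h
    exact e.ne_zero k (Submodule.mem_bot F |>.mp
      (h ▸ Submodule.subset_span (Set.mem_singleton _)))
  · rw [Submodule.disjoint_def]
    intro x hx1 hx2
    obtain ⟨p, q, hpq⟩ := Submodule.mem_span_pair.mp hx1
    obtain ⟨u, hu⟩ := Submodule.mem_span_singleton.mp hx2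
    have heq : p • e i + q • (a • e j + b • e k) = u • e k := by
      rw [← hz]; exact hpq.trans hu.symm
    have h0 := congrArg (fun v => e.repr v i) heq
    simp [Module.Basis.repr_self_apply, Ne.symm hij, Ne.symm hik] at h0
    have h1 := congrArg (fun v => e.repr v j) heq
    simp [Module.Basis.repr_self_apply, hij, Ne.symm hjk] at h1
    have hq : q = 0 := by
      rcases h1 with h | h
      · exact h
      · exact absurd h ha
    rw [← hpq, h0, hq, zero_smul, zero_smul, add_zero]
  · rw [codisjoint_iff, eq_top_iff, ← e.span_eq, Submodule.span_le]
    rintro _ ⟨t, rfl⟩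
    rcases hcov t with rfl | rfl | rfl
    · exact Submodule.mem_sup_left (Submodule.subset_span (by simp))
    · have hej : e t = a⁻¹ • m (e i) (e i) - (a⁻¹ * b) • e k := by
        rw [hz, smul_add, smul_smul, smul_smul, inv_mul_cancel₀ ha, one_smul,
          add_sub_cancel_right]
      rw [hej]
      exact sub_mem
        (Submodule.smul_mem _ _ (Submodule.mem_sup_left (Submodule.subset_span (by simp))))
        (Submodule.smul_mem _ _ (Submodule.mem_sup_right (Submodule.subset_span rfl)))
    · exact Submodule.mem_sup_right (Submodule.subset_span rfl)

lemma caseC (m : A →ₗ[F] A →ₗ[F] A) (e : Module.Basis (Fin 3) F A)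
    (hnat : ∀ i j : Fin 3, i ≠ j → m (e i) (e j) = 0)
    (σ : Equiv.Perm (Fin 3)) (c d : F) (hc : c ≠ 0) (hd : d ≠ 0)
    (h0 : m (e (σ 0)) (e (σ 0)) = c • e (σ 2))
    (h1 : m (e (σ 1)) (e (σ 1)) = d • e (σ 2))
    (h2 : m (e (σ 2)) (e (σ 2)) = 0) :
    ∃ v : Module.Basis (Fin 3) F A,
      (∀ i j : Fin 3, i ≠ j → m (v i) (v j) = 0) ∧
      ∃ α : F, α ≠ 0 ∧
        m (v 0) (v 0) = v 2 ∧
        m (v 1) (v 1) = α • v 2 ∧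
        m (v 2) (v 2) = 0 := by
  set w : Fin 3 → Fˣ := ![1, 1, Units.mk0 c hc] with hw
  set v := (e.reindex σ.symm).unitsSMul w with hvdef
  have hv : ∀ t, v t = (w t : F) • e (σ t) := by
    intro t
    rw [hvdef, Module.Basis.unitsSMul_apply, Module.Basis.reindex_apply, Equiv.symm_symm,
      Units.smul_def]
  have hv0 : v 0 = e (σ 0) := by rw [hv 0]; simp [hw]
  have hv1 : v 1 = e (σ 1) := by rw [hv 1]; simp [hw]
  have hv2 : v 2 = c • e (σ 2) := by rw [hv 2]; simp [hw]
  refine ⟨v, ?_, d * c⁻¹, mul_ne_zero hd (inv_ne_zero hc), ?_, ?_, ?_⟩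
  · intro a b hab
    rw [hv a, hv b]
    simp [map_smul, hnat (σ a) (σ b) (fun h => hab (σ.injective h))]
  · rw [hv0, hv2, h0]
  · rw [hv1, hv2, h1, smul_smul, mul_assoc, inv_mul_cancel₀ hc, mul_one]
  · rw [hv2]
    simp [map_smul, h2]


lemma key (m : A →ₗ[F] A →ₗ[F] A) (e : Module.Basis (Fin 3) F A)
    (hnat : ∀ i j : Fin 3, i ≠ j → m (e i) (e j) = 0)
    (hnil : ∀ a : A, ∃ k : ℕ, ppow m a k = 0)
    (hassoc : ∀ x y z : A, m (m x y) z = m x (m y z))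
    (i j : Fin 3) (hj : m (e j) (e j) ≠ 0) : e.repr (m (e i) (e i)) j = 0 := by
  have h1 : e.repr (m (e i) (e i)) j • m (e j) (e j) = 0 := by
    rcases eq_or_ne i j with rfl | hij
    · set c := e.repr (m (e i) (e i)) i with hc
      have hp : ∀ k, ppow m (e i) (k + 1) = c ^ k • m (e i) (e i) := by
        intro k
        induction k with
        | zero => simp [ppow]
        | succ k ih =>
          show m (ppow m (e i) (k + 1)) (e i) = _
          rw [ih, map_smul, LinearMap.smul_apply, mxe m e hnat _ i, ← hc,
            smul_smul, ← pow_succ]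
      obtain ⟨n, hn⟩ := hnil (e i)
      cases n with
      | zero => exact absurd hn (e.ne_zero i)
      | succ k =>
        rw [hp k] at hn
        rcases smul_eq_zero.mp hn with h | h
        · have hc0 : c = 0 := (pow_eq_zero_iff'.mp h).1
          rw [hc0, zero_smul]
        · exact absurd h hj
    · have h0 : m (m (e i) (e i)) (e j) = 0 := by
        rw [hassoc, hnat i j hij, map_zero]
      rwa [mxe m e hnat _ j] at h0
  rcases smul_eq_zero.mp h1 with h | h
  · exact h
  · exact absurd h hj

lemma caseC' (m : A →ₗ[F] A →ₗ[F] A) (e : Module.Basis (Fin 3) F A)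
    (hnat : ∀ i j : Fin 3, i ≠ j → m (e i) (e j) = 0)
    (i j k : Fin 3)
    (perm : ∃ σ : Equiv.Perm (Fin 3), σ 0 = i ∧ σ 1 = j ∧ σ 2 = k)
    (c d : F) (hc : c ≠ 0) (hd : d ≠ 0)
    (h0 : m (e i) (e i) = c • e k)
    (h1 : m (e j) (e j) = d • e k)
    (h2 : m (e k) (e k) = 0) :
    ∃ v : Module.Basis (Fin 3) F A,
      (∀ i j : Fin 3, i ≠ j → m (v i) (v j) = 0) ∧
      ∃ α : F, α ≠ 0 ∧
        m (v 0) (v 0) = v 2 ∧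
        m (v 1) (v 1) = α • v 2 ∧
        m (v 2) (v 2) = 0 := by
  obtain ⟨σ, rfl, rfl, rfl⟩ := perm
  exact caseC m e hnat σ c d hc hd h0 h1 h2

end Aux

/-- a 3-dimensional nil, associative, indecomposable evolution algebra over
a field of characteristic ≠ 2 is isomorphic to `N_{3,3}(α)`:
`v₁² = v₃`, `v₂² = α v₃`, `v₃² = 0` with `α ≠ 0`. -/
theorem nil_assoc_indecomposable_dim3_classification
    (F : Type*) [Field F] (h2 : (2 : F) ≠ 0)
    (A : Type*) [AddCommGroup A] [Module F A]
    (m : A →ₗ[F] A →ₗ[F] A) (hcomm : ∀ x y : A, m x y = m y x)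
    (e : Module.Basis (Fin 3) F A)
    (hnat : ∀ i j : Fin 3, i ≠ j → m (e i) (e j) = 0)
    (hnil : ∀ a : A, ∃ k : ℕ, ppow m a k = 0)
    (hassoc : ∀ x y z : A, m (m x y) z = m x (m y z))
    (hindec : ¬ ∃ I J : Submodule F A,
      (∀ x ∈ I, ∀ y : A, m x y ∈ I) ∧ (∀ x ∈ J, ∀ y : A, m x y ∈ J) ∧
      I ≠ ⊥ ∧ J ≠ ⊥ ∧ IsCompl I J) :
    ∃ v : Module.Basis (Fin 3) F A,
      (∀ i j : Fin 3, i ≠ j → m (v i) (v j) = 0) ∧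
      ∃ α : F, α ≠ 0 ∧
        m (v 0) (v 0) = v 2 ∧
        m (v 1) (v 1) = α • v 2 ∧
        m (v 2) (v 2) = 0 := by
  have hcov : ∀ t : Fin 3, t = 0 ∨ t = 1 ∨ t = 2 := by decide
  have K := key m e hnat hnil hassoc
  by_cases H0 : m (e 0) (e 0) = 0 <;> by_cases H1 : m (e 1) (e 1) = 0 <;>
    by_cases H2 : m (e 2) (e 2) = 0
  · -- all squares zero : decomposable, contradiction
    refine absurd (caseA m e fun x y => mnull m e hnat x (fun t => ?_) y) hindec
    rcases hcov t with rfl | rfl | rfl <;> simp [H0, H1, H2]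
  · -- only e 2 has nonzero square
    have hrep : m (e 2) (e 2) =
        e.repr (m (e 2) (e 2)) 0 • e 0 + e.repr (m (e 2) (e 2)) 1 • e 1 := by
      conv_lhs => rw [← e.sum_repr (m (e 2) (e 2))]
      rw [Fin.sum_univ_three, K 2 2 H2, zero_smul, add_zero]
    by_cases ha : e.repr (m (e 2) (e 2)) 0 = 0
    · have hb : e.repr (m (e 2) (e 2)) 1 ≠ 0 := fun h =>
        H2 (by rw [hrep, ha, h, zero_smul, zero_smul, add_zero])
      have hz2 : m (e 2) (e 2) = e.repr (m (e 2) (e 2)) 1 • e 1 + (0 : F) • e 0 := by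
        conv_lhs => rw [hrep]
        rw [ha, zero_smul, zero_add, add_zero]
      exact absurd (caseB m e hnat hcomm 2 1 0 (by decide) (by decide) (by decide)
        (by decide) _ _ hb hz2 H1 H0) hindec
    · exact absurd (caseB m e hnat hcomm 2 0 1 (by decide) (by decide) (by decide)
        (by decide) _ _ ha hrep H0 H1) hindec
  · -- only e 1 has nonzero square
    have hrep : m (e 1) (e 1) =
        e.repr (m (e 1) (e 1)) 0 • e 0 + e.repr (m (e 1) (e 1)) 2 • e 2 := by
      conv_lhs => rw [← e.sum_repr (m (e 1) (e 1))]
      rw [Fin.sum_univ_three, K 1 1 H1, zero_smul, add_zero]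
    by_cases ha : e.repr (m (e 1) (e 1)) 0 = 0
    · have hb : e.repr (m (e 1) (e 1)) 2 ≠ 0 := fun h =>
        H1 (by rw [hrep, ha, h, zero_smul, zero_smul, add_zero])
      have hz2 : m (e 1) (e 1) = e.repr (m (e 1) (e 1)) 2 • e 2 + (0 : F) • e 0 := by
        conv_lhs => rw [hrep]
        rw [ha, zero_smul, zero_add, add_zero]
      exact absurd (caseB m e hnat hcomm 1 2 0 (by decide) (by decide) (by decide)
        (by decide) _ _ hb hz2 H2 H0) hindec
    · exact absurd (caseB m e hnat hcomm 1 0 2 (by decide) (by decide) (by decide)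
        (by decide) _ _ ha hrep H0 H2) hindec
  · -- e 1 and e 2 have nonzero squares
    have hs1 : m (e 1) (e 1) = e.repr (m (e 1) (e 1)) 0 • e 0 := by
      conv_lhs => rw [← e.sum_repr (m (e 1) (e 1))]
      rw [Fin.sum_univ_three, K 1 1 H1, K 1 2 H2, zero_smul, zero_smul,
        add_zero, add_zero]
    have hs2 : m (e 2) (e 2) = e.repr (m (e 2) (e 2)) 0 • e 0 := by
      conv_lhs => rw [← e.sum_repr (m (e 2) (e 2))]
      rw [Fin.sum_univ_three, K 2 1 H1, K 2 2 H2, zero_smul, zero_smul,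
        add_zero, add_zero]
    have hc1 : e.repr (m (e 1) (e 1)) 0 ≠ 0 := fun h => H1 (by rw [hs1, h, zero_smul])
    have hc2 : e.repr (m (e 2) (e 2)) 0 ≠ 0 := fun h => H2 (by rw [hs2, h, zero_smul])
    exact caseC' m e hnat 1 2 0
      ⟨⟨![1, 2, 0], ![2, 0, 1], by decide, by decide⟩, by decide, by decide, by decide⟩
      _ _ hc1 hc2 hs1 hs2 H0
  · -- only e 0 has nonzero square
    have hrep : m (e 0) (e 0) =
        e.repr (m (e 0) (e 0)) 1 • e 1 + e.repr (m (e 0) (e 0)) 2 • e 2 := by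
      conv_lhs => rw [← e.sum_repr (m (e 0) (e 0))]
      rw [Fin.sum_univ_three, K 0 0 H0, zero_smul, zero_add]
    by_cases ha : e.repr (m (e 0) (e 0)) 1 = 0
    · have hb : e.repr (m (e 0) (e 0)) 2 ≠ 0 := fun h =>
        H0 (by rw [hrep, ha, h, zero_smul, zero_smul, add_zero])
      have hz2 : m (e 0) (e 0) = e.repr (m (e 0) (e 0)) 2 • e 2 + (0 : F) • e 1 := by
        conv_lhs => rw [hrep]
        rw [ha, zero_smul, zero_add, add_zero]
      exact absurd (caseB m e hnat hcomm 0 2 1 (by decide) (by decide) (by decide)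
        (by decide) _ _ hb hz2 H2 H1) hindec
    · exact absurd (caseB m e hnat hcomm 0 1 2 (by decide) (by decide) (by decide)
        (by decide) _ _ ha hrep H1 H2) hindec
  · -- e 0 and e 2 have nonzero squares
    have hs0 : m (e 0) (e 0) = e.repr (m (e 0) (e 0)) 1 • e 1 := by
      conv_lhs => rw [← e.sum_repr (m (e 0) (e 0))]
      rw [Fin.sum_univ_three, K 0 0 H0, K 0 2 H2, zero_smul, zero_smul,
        zero_add, add_zero]
    have hs2 : m (e 2) (e 2) = e.repr (m (e 2) (e 2)) 1 • e 1 := by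
      conv_lhs => rw [← e.sum_repr (m (e 2) (e 2))]
      rw [Fin.sum_univ_three, K 2 0 H0, K 2 2 H2, zero_smul, zero_smul,
        zero_add, add_zero]
    have hc0 : e.repr (m (e 0) (e 0)) 1 ≠ 0 := fun h => H0 (by rw [hs0, h, zero_smul])
    have hc2 : e.repr (m (e 2) (e 2)) 1 ≠ 0 := fun h => H2 (by rw [hs2, h, zero_smul])
    exact caseC' m e hnat 0 2 1
      ⟨⟨![0, 2, 1], ![0, 2, 1], by decide, by decide⟩, by decide, by decide, by decide⟩
      _ _ hc0 hc2 hs0 hs2 H1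
  · -- e 0 and e 1 have nonzero squares
    have hs0 : m (e 0) (e 0) = e.repr (m (e 0) (e 0)) 2 • e 2 := by
      conv_lhs => rw [← e.sum_repr (m (e 0) (e 0))]
      rw [Fin.sum_univ_three, K 0 0 H0, K 0 1 H1, zero_smul, zero_smul,
        zero_add, zero_add]
    have hs1 : m (e 1) (e 1) = e.repr (m (e 1) (e 1)) 2 • e 2 := by
      conv_lhs => rw [← e.sum_repr (m (e 1) (e 1))]
      rw [Fin.sum_univ_three, K 1 0 H0, K 1 1 H1, zero_smul, zero_smul,
        zero_add, zero_add]
    have hc0 : e.repr (m (e 0) (e 0)) 2 ≠ 0 := fun h => H0 (by rw [hs0, h, zero_smul])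
    have hc1 : e.repr (m (e 1) (e 1)) 2 ≠ 0 := fun h => H1 (by rw [hs1, h, zero_smul])
    exact caseC' m e hnat 0 1 2 ⟨Equiv.refl _, rfl, rfl, rfl⟩
      _ _ hc0 hc1 hs0 hs1 H2
  · -- all squares nonzero : impossible
    have hre : e.repr (m (e 0) (e 0)) = 0 := by
      ext t
      rcases hcov t with rfl | rfl | rfl <;>
        simp [K 0 0 H0, K 0 1 H1, K 0 2 H2]
    exact absurd (e.repr.map_eq_zero_iff.mp hre) H0
end
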